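/- arXiv:2602.00975 — 6 statements merged into one kernel-verified Lean document; each statement's English description precedes it below -/
import Mathlib

section
/- Fix integers d ≥ 3 and ℓ ≥ 1 and let z ∈ ℂ with Im z > 0. Let P be the inverse of H_{𝒴_ℓ} − z·I − m_sc(z)·𝕀∂, where 𝒴_ℓ is the ball of radius ℓ in the infinite (d−1)-ary tree with root o. Then, noting that m_sc(z)² ≠ 1 since |m_sc(z)| < 1 when Im z > 0, one has (P·𝕀∂·P·𝕀∂·P)_{oo} = m_sc(z)^{2ℓ+2} · m_d(z) · ( (1 − m_sc(z)^{2ℓ+2})/(d−1) + ((d−2)/(d−1)) · (1 − m_sc(z)^{2ℓ+2})/(1 − m_sc(z)²) ). -/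
open scoped Classical

noncomputable section

/-- Vertices of the ball of radius `ℓ` in the infinite `m`-ary rooted tree:
words over `Fin m` of length at most `ℓ`. -/
def TreeBallY (m ℓ : ℕ) : Type := {l : List (Fin m) // l.length ≤ ℓ}

instance (m ℓ : ℕ) : DecidableEq (TreeBallY m ℓ) :=
  inferInstanceAs (DecidableEq {l : List (Fin m) // l.length ≤ ℓ})

instance (m ℓ : ℕ) : Fintype (TreeBallY m ℓ) :=
  Fintype.ofSurjective
    (fun p : (Σ k : Fin (ℓ + 1), List.Vector (Fin m) k) =>
      (⟨p.2.toList, by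
        have h1 : p.2.toList.length = (p.1 : ℕ) := p.2.toList_length
        have h2 := p.1.isLt
        omega⟩ : TreeBallY m ℓ))
    (fun l => ⟨⟨⟨l.1.length, Nat.lt_succ_of_le l.2⟩, ⟨l.1, rfl⟩⟩, rfl⟩)

/-- The tree structure on the ball of radius `ℓ` of the `m`-ary rooted tree:
`x` is adjacent to `y` iff one of them is obtained from the other by appending one letter
(i.e. one is the parent of the other). -/
def treeGraphY (m ℓ : ℕ) : SimpleGraph (TreeBallY m ℓ) :=
  SimpleGraph.fromRel (fun x y => ∃ a : Fin m, y.1 = x.1 ++ [a])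

/-- The root of the tree: the empty word. -/
def rootY (m ℓ : ℕ) : TreeBallY m ℓ := ⟨[], Nat.zero_le _⟩

/-- The normalized adjacency matrix `A/√(d-1)` of the ball `𝒴_ℓ` of radius `ℓ` in the
infinite `(d-1)`-ary tree. -/
def HmatY (d ℓ : ℕ) : Matrix (TreeBallY (d - 1) ℓ) (TreeBallY (d - 1) ℓ) ℂ :=
  fun x y => if (treeGraphY (d - 1) ℓ).Adj x y then (Real.sqrt ((d : ℝ) - 1) : ℂ)⁻¹ else 0

/-- The leaf indicator `𝕀∂` of `𝒴_ℓ`: the diagonal 0-1 matrix whose entry at `x` is `1`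
exactly when `dist(x, o) = ℓ`. -/
def IbdY (d ℓ : ℕ) : Matrix (TreeBallY (d - 1) ℓ) (TreeBallY (d - 1) ℓ) ℂ :=
  Matrix.diagonal (fun x => if (treeGraphY (d - 1) ℓ).dist (rootY (d - 1) ℓ) x = ℓ then 1 else 0)

/-- Vertices of the ball `𝒳_ℓ` of radius `ℓ` in the infinite `d`-regular tree: the root
(`none`), or a first step in `Fin d` followed by a word over `Fin (d-1)` of length at most
`ℓ - 1`. -/
def TreeBallX (d ℓ : ℕ) : Type := Option (Fin d × TreeBallY (d - 1) (ℓ - 1))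

instance (d ℓ : ℕ) : DecidableEq (TreeBallX d ℓ) :=
  inferInstanceAs (DecidableEq (Option (Fin d × TreeBallY (d - 1) (ℓ - 1))))

instance (d ℓ : ℕ) : Fintype (TreeBallX d ℓ) :=
  inferInstanceAs (Fintype (Option (Fin d × TreeBallY (d - 1) (ℓ - 1))))

/-- The tree structure on the ball `𝒳_ℓ` of radius `ℓ` of the `d`-regular tree: the root is
adjacent to the `d` one-step vertices, and within each branch two vertices are adjacent iff one
is the parent of the other. -/
def treeGraphX (d ℓ : ℕ) : SimpleGraph (TreeBallX d ℓ) :=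
  SimpleGraph.fromRel (fun x y =>
    (∃ a : Fin d, x = none ∧ y = some (a, ⟨[], Nat.zero_le _⟩)) ∨
    (∃ (a : Fin d) (s t : TreeBallY (d - 1) (ℓ - 1)),
      x = some (a, s) ∧ y = some (a, t) ∧ ∃ b : Fin (d - 1), t.1 = s.1 ++ [b]))

/-- The root of the `d`-regular tree ball `𝒳_ℓ`. -/
def rootX (d ℓ : ℕ) : TreeBallX d ℓ := none

/-- The normalized adjacency matrix `A/√(d-1)` of the ball `𝒳_ℓ` of radius `ℓ` in the
infinite `d`-regular tree. -/
def HmatX (d ℓ : ℕ) : Matrix (TreeBallX d ℓ) (TreeBallX d ℓ) ℂ :=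
  fun x y => if (treeGraphX d ℓ).Adj x y then (Real.sqrt ((d : ℝ) - 1) : ℂ)⁻¹ else 0

/-- The leaf indicator `𝕀∂` of `𝒳_ℓ`. -/
def IbdX (d ℓ : ℕ) : Matrix (TreeBallX d ℓ) (TreeBallX d ℓ) ℂ :=
  Matrix.diagonal (fun x => if (treeGraphX d ℓ).dist (rootX d ℓ) x = ℓ then 1 else 0)

/-- Longest common prefix of two words. -/
def lcp {m : ℕ} : List (Fin m) → List (Fin m) → List (Fin m)
  | [], _ => []
  | _ :: _, [] => []
  | a :: s, b :: t => if a = b then a :: lcp s t else []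

theorem lcp_length_le_left {m : ℕ} : ∀ s t : List (Fin m), (lcp s t).length ≤ s.length
  | [], _ => by simp [lcp]
  | _ :: _, [] => by simp [lcp]
  | a :: s, b :: t => by
    by_cases h : a = b
    · simp only [lcp, if_pos h, List.length_cons]
      exact Nat.succ_le_succ (lcp_length_le_left s t)
    · simp [lcp, h]

/-- The least common ancestor of two vertices of `𝒴_ℓ`: their longest common prefix. -/
def lcaY {m ℓ : ℕ} (x y : TreeBallY m ℓ) : TreeBallY m ℓ :=
  ⟨lcp x.1 y.1, le_trans (lcp_length_le_left _ _) x.2⟩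

/-- `anc(x,y)`: the distance from the least common ancestor of `x` and `y` to the root `o`. -/
def ancY {m ℓ : ℕ} (x y : TreeBallY m ℓ) : ℕ :=
  (treeGraphY m ℓ).dist (rootY m ℓ) (lcaY x y)

end

section AuxTree
open SimpleGraph Finset

variable {m ℓ : ℕ}

lemma adjY_iff (x y : TreeBallY m ℓ) :
    (treeGraphY m ℓ).Adj x y ↔ (∃ a, y.1 = x.1 ++ [a]) ∨ (∃ a, x.1 = y.1 ++ [a]) := by
  rw [treeGraphY, SimpleGraph.fromRel_adj]
  constructor
  · rintro ⟨-, h⟩; exact h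
  · intro h
    refine ⟨?_, h⟩
    rintro rfl
    rcases h with ⟨a, h⟩ | ⟨a, h⟩ <;>
      · have := congrArg List.length h
        simp at this

lemma adjY_concat (r : List (Fin m)) (a : Fin m) (h1 : r.length ≤ ℓ)
    (h2 : (r ++ [a]).length ≤ ℓ) :
    (treeGraphY m ℓ).Adj ⟨r, h1⟩ ⟨r ++ [a], h2⟩ :=
  (adjY_iff _ _).mpr (Or.inl ⟨a, rfl⟩)

lemma length_le_of_adjY {x y : TreeBallY m ℓ} (h : (treeGraphY m ℓ).Adj x y) :
    y.1.length ≤ x.1.length + 1 := by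
  rcases (adjY_iff x y).mp h with ⟨a, ha⟩ | ⟨a, ha⟩
  · simp [ha]
  · have := congrArg List.length ha
    simp at this
    omega

lemma walk_length_geY {u x : TreeBallY m ℓ} (w : (treeGraphY m ℓ).Walk u x) :
    x.1.length ≤ u.1.length + w.length := by
  induction w with
  | nil => simp
  | cons h p ih =>
    have := length_le_of_adjY h
    simp only [SimpleGraph.Walk.length_cons]
    omega

lemma exists_walkY (r : List (Fin m)) : ∀ (hr : r.length ≤ ℓ),
    ∃ w : (treeGraphY m ℓ).Walk (rootY m ℓ) ⟨r, hr⟩, w.length = r.length := by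
  induction r using List.reverseRecOn with
  | nil => exact fun _ => ⟨SimpleGraph.Walk.nil, rfl⟩
  | append_singleton r a ih =>
    intro hr
    have h1 : r.length ≤ ℓ := by simp at hr; omega
    obtain ⟨w, hw⟩ := ih h1
    refine ⟨w.concat (adjY_concat r a h1 hr), ?_⟩
    exact (SimpleGraph.Walk.length_concat _ _).trans ((congrArg (· + 1) hw).trans (by simp))

lemma distY (x : TreeBallY m ℓ) :
    (treeGraphY m ℓ).dist (rootY m ℓ) x = x.1.length := by
  obtain ⟨r, hr⟩ := x
  obtain ⟨w, hw⟩ := exists_walkY r hr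
  refine le_antisymm (hw ▸ SimpleGraph.dist_le w) ?_
  obtain ⟨p, hp⟩ := SimpleGraph.Reachable.exists_walk_length_eq_dist (⟨w⟩ : (treeGraphY m ℓ).Reachable _ _)
  exact le_trans (by simpa [rootY] using walk_length_geY p) (le_of_eq hp)

end AuxTree

section AuxSum
open SimpleGraph Finset

variable {m ℓ : ℕ}

lemma sum_adjY (c : ℂ) (f : ℕ → ℂ) (x : TreeBallY m ℓ) :
    ∑ y : TreeBallY m ℓ, (if (treeGraphY m ℓ).Adj x y then c else 0) * f y.1.length
    = (if x.1.length < ℓ then (m : ℂ) * (c * f (x.1.length + 1)) else 0)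
      + (if x.1 = [] then 0 else c * f (x.1.length - 1)) := by
  classical
  have hsplit : ∀ y : TreeBallY m ℓ,
      (if (treeGraphY m ℓ).Adj x y then c else 0) * f y.1.length
      = if (treeGraphY m ℓ).Adj x y then c * f y.1.length else 0 := by
    intro y; split <;> simp
  rw [Finset.sum_congr rfl (fun y _ => hsplit y), ← Finset.sum_filter]
  have hfe : Finset.univ.filter (fun y : TreeBallY m ℓ => (treeGraphY m ℓ).Adj x y)
      = (Finset.univ.filter (fun y : TreeBallY m ℓ => ∃ a, y.1 = x.1 ++ [a]))
        ∪ (Finset.univ.filter (fun y : TreeBallY m ℓ => ∃ a, x.1 = y.1 ++ [a])) := by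
    rw [← Finset.filter_or]
    exact Finset.filter_congr (fun y _ => by rw [adjY_iff])
  rw [hfe, Finset.sum_union]
  · congr 1
    · -- children sum
      by_cases hlt : x.1.length < ℓ
      · rw [if_pos hlt]
        have himg : Finset.univ.filter (fun y : TreeBallY m ℓ => ∃ a, y.1 = x.1 ++ [a])
            = Finset.univ.image (fun b : Fin m =>
                (⟨x.1 ++ [b], by simp; omega⟩ : TreeBallY m ℓ)) := by
          ext y
          simp only [Finset.mem_filter, Finset.mem_univ, true_and, Finset.mem_image]
          constructor
          · rintro ⟨a, ha⟩; exact Finset.mem_image.mpr ⟨a, Finset.mem_univ _, by apply Subtype.ext; simp [ha]⟩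
          · intro h; obtain ⟨a, -, rfl⟩ := Finset.mem_image.mp h; exact ⟨a, rfl⟩
        rw [himg]
        erw [Finset.sum_image]
        · simp only [List.length_append, List.length_singleton]
          rw [Finset.sum_const, Finset.card_univ, Fintype.card_fin]
          simp [mul_comm]
        · intro b _ b' _ h
          have := congrArg (fun y : TreeBallY m ℓ => y.1) h
          simpa using this
      · rw [if_neg hlt]
        have : Finset.univ.filter (fun y : TreeBallY m ℓ => ∃ a, y.1 = x.1 ++ [a]) = ∅ := by
          ext y
          simp only [Finset.mem_filter, Finset.mem_univ, true_and, Finset.notMem_empty,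
            iff_false, not_exists]
          intro a ha
          have hy := y.2
          rw [ha] at hy
          have hx := x.2
          simp at hy
          omega
        simp [this]
    · -- parent sum
      rcases List.eq_nil_or_concat x.1 with hnil | ⟨r, a, hcat⟩
      · rw [if_pos hnil]
        have : Finset.univ.filter (fun y : TreeBallY m ℓ => ∃ a, x.1 = y.1 ++ [a]) = ∅ := by
          ext y
          simp only [Finset.mem_filter, Finset.mem_univ, true_and, Finset.notMem_empty,
            iff_false, not_exists]
          intro a ha
          rw [hnil] at ha
          exact List.cons_ne_nil _ _ (List.append_eq_nil_iff.mp ha.symm).2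
        simp [this]
      · rw [List.concat_eq_append] at hcat
        have hne : ¬ x.1 = [] := by simp [hcat]
        rw [if_neg hne]
        have hr : r.length ≤ ℓ := by
          have := x.2; rw [hcat] at this; simp at this; omega
        have hsing : Finset.univ.filter (fun y : TreeBallY m ℓ => ∃ a, x.1 = y.1 ++ [a])
            = {(⟨r, hr⟩ : TreeBallY m ℓ)} := by
          ext y
          simp only [Finset.mem_filter, Finset.mem_univ, true_and, Finset.mem_singleton]
          constructor
          · rintro ⟨b, hb⟩
            apply Finset.mem_singleton.mpr
            apply Subtype.ext
            have : y.1 = (y.1 ++ [b]).dropLast := by simp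
            rw [this, ← hb, hcat]
            simp
          · intro h; obtain rfl := Finset.mem_singleton.mp h
            exact ⟨a, hcat⟩
        rw [hsing]
        erw [Finset.sum_singleton]
        congr 2
        rw [hcat]
        simp
  · -- disjoint
    rw [Finset.disjoint_filter]
    rintro y _ ⟨b, hb⟩ ⟨b', hb'⟩
    rw [hb] at hb'
    have := congrArg List.length hb'
    simp at this
end AuxSum

section AuxRow
open SimpleGraph Finset

lemma Mmat_mulVec_radial (d ℓ : ℕ) (z msc : ℂ) (f : ℕ → ℂ) (x : TreeBallY (d-1) ℓ) :
    ((HmatY d ℓ - z • (1 : Matrix (TreeBallY (d-1) ℓ) (TreeBallY (d-1) ℓ) ℂ)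
        - msc • IbdY d ℓ).mulVec (fun y => f y.1.length)) x
    = ((if x.1.length < ℓ then ((d-1:ℕ) : ℂ) * (((Real.sqrt ((d:ℝ) - 1) : ℝ) : ℂ))⁻¹
          * f (x.1.length + 1) else 0)
      + (if x.1 = [] then 0 else (((Real.sqrt ((d:ℝ) - 1) : ℝ) : ℂ))⁻¹ * f (x.1.length - 1)))
      - z * f x.1.length - (if x.1.length = ℓ then msc else 0) * f x.1.length := by
  rw [Matrix.sub_mulVec, Matrix.sub_mulVec]
  simp only [Pi.sub_apply, Matrix.smul_mulVec, Matrix.one_mulVec, Pi.smul_apply,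
    smul_eq_mul]
  have hH : ((HmatY d ℓ).mulVec (fun y => f y.1.length)) x
      = (if x.1.length < ℓ then ((d-1:ℕ) : ℂ) * ((((Real.sqrt ((d:ℝ) - 1) : ℝ) : ℂ))⁻¹
          * f (x.1.length + 1)) else 0)
      + (if x.1 = [] then 0 else (((Real.sqrt ((d:ℝ) - 1) : ℝ) : ℂ))⁻¹ * f (x.1.length - 1)) := by
    have : ((HmatY d ℓ).mulVec (fun y => f y.1.length)) x
        = ∑ y : TreeBallY (d-1) ℓ,
            (if (treeGraphY (d-1) ℓ).Adj x y then ((((Real.sqrt ((d:ℝ) - 1) : ℝ) : ℂ)))⁻¹ else 0)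
              * f y.1.length := by
      simp [Matrix.mulVec, dotProduct, HmatY]
    rw [this, sum_adjY]
  have hI : ((IbdY d ℓ).mulVec (fun y => f y.1.length)) x
      = (if x.1.length = ℓ then 1 else 0) * f x.1.length := by
    unfold IbdY
    rw [Matrix.mulVec_diagonal, distY]
  rw [hH, hI]
  split_ifs <;> ring
end AuxRow

section AuxInv
open SimpleGraph Finset

lemma Mmat_det_ne_zero (d ℓ : ℕ) (z msc : ℂ) (hz : 0 < z.im) (him : 0 < msc.im) :
    (HmatY d ℓ - z • (1 : Matrix (TreeBallY (d-1) ℓ) (TreeBallY (d-1) ℓ) ℂ)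
      - msc • IbdY d ℓ).det ≠ 0 := by
  set M := HmatY d ℓ - z • (1 : Matrix (TreeBallY (d-1) ℓ) (TreeBallY (d-1) ℓ) ℂ)
      - msc • IbdY d ℓ with hM
  intro hdet
  obtain ⟨u, hu0, hu⟩ := Matrix.exists_mulVec_eq_zero_iff.mpr hdet
  apply hu0
  have hHreal : ∀ x y, (starRingEnd ℂ) (HmatY d ℓ x y) = HmatY d ℓ x y := by
    intro x y; unfold HmatY; split <;> simp [map_inv₀, Complex.conj_ofReal]
  have hHsym : ∀ x y, HmatY d ℓ x y = HmatY d ℓ y x := by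
    intro x y; unfold HmatY; rw [SimpleGraph.adj_comm]
  have hexp : ∀ x, (M.mulVec u) x = (∑ y, HmatY d ℓ x y * u y) - z * u x
      - msc * ((if x.1.length = ℓ then 1 else 0) * u x) := by
    intro x
    rw [hM, Matrix.sub_mulVec, Matrix.sub_mulVec]
    simp only [Pi.sub_apply, Matrix.smul_mulVec, Matrix.one_mulVec, Pi.smul_apply,
      smul_eq_mul]
    have h1 : (IbdY d ℓ).mulVec u x = (if x.1.length = ℓ then 1 else 0) * u x := by
      unfold IbdY; rw [Matrix.mulVec_diagonal, distY]
    rw [h1]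
    rfl
  set QH : ℂ := ∑ x, ∑ y, (starRingEnd ℂ) (u x) * (HmatY d ℓ x y * u y) with hQHdef
  set N2 : ℝ := ∑ x, Complex.normSq (u x) with hN2
  set NL : ℝ := ∑ x, (if x.1.length = ℓ then Complex.normSq (u x) else 0) with hNL
  have hc : ∀ x, (starRingEnd ℂ) (u x) * u x = ((Complex.normSq (u x) : ℝ) : ℂ) := by
    intro x; rw [mul_comm, Complex.mul_conj]
  have key : ∀ x, (starRingEnd ℂ) (u x) * (M.mulVec u) x
      = (∑ y, (starRingEnd ℂ) (u x) * (HmatY d ℓ x y * u y))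
        - z * ((Complex.normSq (u x) : ℝ) : ℂ)
        - msc * (if x.1.length = ℓ then ((Complex.normSq (u x) : ℝ) : ℂ) else 0) := by
    intro x
    rw [hexp x, mul_sub, mul_sub, Finset.mul_sum]
    congr 1
    · congr 1
      rw [← hc x]; ring
    · rw [← hc x]; split_ifs <;> ring
  have hS : QH - z * (N2 : ℂ) - msc * (NL : ℂ) = 0 := by
    have h0 : ∑ x, (starRingEnd ℂ) (u x) * (M.mulVec u) x = 0 := by
      rw [hu]; simp
    rw [← h0, Finset.sum_congr rfl (fun x _ => key x)]
    rw [Finset.sum_sub_distrib, Finset.sum_sub_distrib, ← Finset.mul_sum, ← Finset.mul_sum]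
    rw [hQHdef, hN2, hNL]
    push_cast [apply_ite (fun r : ℝ => (r : ℂ))]
    ring
  have hQHim : QH.im = 0 := by
    rw [← Complex.conj_eq_iff_im]
    rw [hQHdef]
    simp only [map_sum, map_mul, Complex.conj_conj, hHreal]
    rw [Finset.sum_comm]
    refine Finset.sum_congr rfl fun a _ => Finset.sum_congr rfl fun b _ => ?_
    rw [hHsym]
    ring
  have himeq := congrArg Complex.im hS
  simp only [Complex.sub_im, Complex.mul_im, Complex.ofReal_re, Complex.ofReal_im,
    mul_zero, add_zero, Complex.zero_im, hQHim, zero_sub] at himeq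
  have hN2nonneg : 0 ≤ N2 := Finset.sum_nonneg (fun x _ => Complex.normSq_nonneg _)
  have hNLnonneg : 0 ≤ NL :=
    Finset.sum_nonneg (fun x _ => by split <;> simp [Complex.normSq_nonneg])
  have hN2zero : N2 = 0 := by nlinarith
  funext x
  have : Complex.normSq (u x) = 0 := by
    have := (Finset.sum_eq_zero_iff_of_nonneg
      (fun x (_ : x ∈ Finset.univ) => Complex.normSq_nonneg (u x))).mp
      (hN2.symm.trans hN2zero)
    exact this x (Finset.mem_univ x)
  simpa using Complex.normSq_eq_zero.mp this
end AuxInv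


/-- For `d ≥ 3`, `ℓ ≥ 1`, `z ∈ ℂ` with `Im z > 0`, `m_sc(z)` the unique root of
`m² + z m + 1 = 0` with positive imaginary part (so `m_sc(z)² ≠ 1`),
`m_d(z) = 1/(-z - (d/(d-1)) m_sc(z))`, and `P` the inverse of `H_{𝒴_ℓ} - z·I - m_sc(z)·𝕀∂`,
one has `(P·𝕀∂·P·𝕀∂·P)_{oo} = m_sc^{2ℓ+2} m_d ((1-m_sc^{2ℓ+2})/(d-1)
+ ((d-2)/(d-1))(1-m_sc^{2ℓ+2})/(1-m_sc²))`. -/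
theorem P_Ibd_P_Ibd_P_oo (d ℓ : ℕ) (hd : 3 ≤ d) (hℓ : 1 ≤ ℓ)
    (z msc : ℂ) (hz : 0 < z.im)
    (hmsc : msc ^ 2 + z * msc + 1 = 0) (him : 0 < msc.im)
    (P : Matrix (TreeBallY (d - 1) ℓ) (TreeBallY (d - 1) ℓ) ℂ)
    (hP : P = (HmatY d ℓ - z • 1 - msc • IbdY d ℓ)⁻¹) :
    msc ^ 2 ≠ 1 ∧
    (P * IbdY d ℓ * P * IbdY d ℓ * P) (rootY (d - 1) ℓ) (rootY (d - 1) ℓ) =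
      msc ^ (2 * ℓ + 2) * (-z - ((d : ℂ) / ((d : ℂ) - 1)) * msc)⁻¹ *
        ((1 - msc ^ (2 * ℓ + 2)) / ((d : ℂ) - 1) +
          (((d : ℂ) - 2) / ((d : ℂ) - 1)) * (1 - msc ^ (2 * ℓ + 2)) / (1 - msc ^ 2)) := by
  classical
  have hm0 : msc ≠ 0 := by
    intro h; rw [h] at hmsc; simp at hmsc
  have hsq : msc ^ 2 ≠ 1 := by
    intro h
    have h1 := congrArg Complex.im h
    have h2 := congrArg Complex.re h
    simp [pow_two, Complex.mul_im, Complex.mul_re] at h1 h2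
    nlinarith [him]
  refine ⟨hsq, ?_⟩
  obtain ⟨L, rfl⟩ : ∃ L, ℓ = L + 1 := ⟨ℓ - 1, by omega⟩
  have hm21 : msc ^ 2 - 1 ≠ 0 := sub_ne_zero.mpr hsq
  have h1m : (1 : ℂ) - msc ^ 2 ≠ 0 := fun h => hsq (by linear_combination -h)
  have hdC : (d : ℂ) - 1 ≠ 0 := by
    intro h
    have : ((d : ℕ) : ℂ) = ((1 : ℕ) : ℂ) := by push_cast; linear_combination h
    have := Nat.cast_injective this
    omega
  have hdR : (3 : ℝ) ≤ (d : ℝ) := by exact_mod_cast hd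
  have hdm : (d : ℂ) - 1 - msc ^ 2 ≠ 0 := by
    intro h
    have h1 := congrArg Complex.im h
    have h2 := congrArg Complex.re h
    simp [pow_two, Complex.mul_im, Complex.mul_re] at h1 h2
    nlinarith [him]
  have hz' : z = -(msc ^ 2 + 1) / msc := by
    field_simp
    linear_combination hmsc
  -- square-root quantities
  set s : ℂ := ((Real.sqrt ((d : ℝ) - 1) : ℝ) : ℂ) with hs
  have hs2 : s ^ 2 = (d : ℂ) - 1 := by
    rw [hs, ← Complex.ofReal_pow, Real.sq_sqrt (by linarith)]
    push_cast; ring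
  have hsne : s ≠ 0 := by
    rw [hs]
    exact Complex.ofReal_ne_zero.mpr (Real.sqrt_ne_zero'.mpr (by linarith))
  set t : ℂ := s⁻¹ with ht
  have hcast : ((d - 1 : ℕ) : ℂ) = (d : ℂ) - 1 := by
    push_cast [Nat.cast_sub (by omega : 1 ≤ d)]; ring
  set σ : ℂ := -s with hσ
  have hσ2 : σ ^ 2 = (d : ℂ) - 1 := by rw [hσ, neg_sq, hs2]
  have hσne : σ ≠ 0 := neg_ne_zero.mpr hsne
  have hss : s * s⁻¹ = 1 := mul_inv_cancel₀ hsne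
  have hmm : msc * msc⁻¹ = 1 := mul_inv_cancel₀ hm0
  set r : ℂ := -(msc * t) with hr
  set r' : ℂ := -(t * msc⁻¹) with hr'
  -- scalar keys
  have kr : ((d : ℂ) - 1) * t * r ^ 2 + t - z * r = 0 := by
    rw [hr, ht, ← hs2]
    linear_combination s⁻¹ * hmsc + (msc ^ 2 * s⁻¹ * (s * s⁻¹ + 1)) * hss
  have kr' : ((d : ℂ) - 1) * t * r' ^ 2 + t - z * r' = 0 := by
    rw [hr', ht, ← hs2]
    linear_combination (s⁻¹ * msc⁻¹ ^ 2) * hmsc + (msc⁻¹ ^ 2 * s⁻¹ * (s * s⁻¹ + 1)) * hss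
      + (-(s⁻¹ * (msc * msc⁻¹ + 1 + z * msc⁻¹))) * hmm
  have kleafV : t - z * r - msc * r = 0 := by
    rw [hr, ht]
    linear_combination s⁻¹ * hmsc
  have k3 : ((d : ℂ) - 1) * t * r' - z - msc ^ 2 * (((d : ℂ) - 1) * t * r) + msc ^ 2 * z = 0 := by
    rw [hr, hr', ht, ← hs2]
    linear_combination (msc - msc⁻¹) * hmsc + ((msc ^ 3 - msc⁻¹) * (s * s⁻¹ + 1)) * hss
      + (msc + z) * hmm
  have hsr : σ * r = msc := by
    rw [hσ, hr, ht]
    linear_combination msc * hss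
  have hsr' : σ * r' = msc⁻¹ := by
    rw [hσ, hr', ht]
    linear_combination msc⁻¹ * hss
  -- radial solutions
  set V : ℕ → ℂ := fun j => msc * r ^ j with hV
  set A : ℂ := σ ^ (L + 1) * msc ^ (L + 4) / (msc ^ 2 - 1) with hA
  set B : ℂ := -(σ ^ (L + 1) * msc ^ (L + 2)) / (msc ^ 2 - 1) with hB
  set W : ℕ → ℂ := fun j => A * r ^ j + B * r' ^ j with hW
  have hABrel : A = -(B * msc ^ 2) := by
    rw [hA, hB]; field_simp; ring
  have hBr : B * r' ^ L = -(σ * msc ^ 2) / (msc ^ 2 - 1) := by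
    have h2 : σ ^ L * r' ^ L = (msc⁻¹) ^ L := by rw [← mul_pow, hsr']
    calc B * r' ^ L
        = -(((σ ^ L * r' ^ L)) * (σ * msc ^ (L + 2))) / (msc ^ 2 - 1) := by
          rw [hB]; ring
      _ = -((msc⁻¹) ^ L * (σ * msc ^ (L + 2))) / (msc ^ 2 - 1) := by rw [h2]
      _ = -(σ * msc ^ 2) / (msc ^ 2 - 1) := by
          rw [inv_pow]
          rw [div_eq_div_iff hm21 hm21]
          field_simp [pow_ne_zero L hm0]
          ring
  have k5 : t - z * r' - msc * r' = (msc ^ 2 - 1) * t * (msc⁻¹) ^ 2 := by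
    rw [hr', ht]
    linear_combination (s⁻¹ * msc⁻¹ ^ 2) * hmsc
      + (-(s⁻¹ * (2 * (msc * msc⁻¹) + 1 + z * msc⁻¹))) * hmm
  have kleafW : (-(σ * msc ^ 2) / (msc ^ 2 - 1)) * ((msc ^ 2 - 1) * t * (msc⁻¹) ^ 2) = 1 := by
    rw [hσ, ht]
    rw [inv_pow]
    field_simp
  -- the row identities
  have hVid1 : ((d : ℂ) - 1) * t * V 1 - z * V 0 = 1 := by
    simp only [hV, pow_one, pow_zero, mul_one]
    rw [hr, ht, ← hs2]
    linear_combination (-1 : ℂ) * hmsc + (-(msc ^ 2 * (s * s⁻¹ + 1))) * hss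
  have hVid2 : ∀ i : ℕ, ((d : ℂ) - 1) * t * V (i + 1 + 1) + t * V i - z * V (i + 1) = 0 := by
    intro i
    simp only [hV]
    linear_combination (msc * r ^ i) * kr
  have hVid3 : ∀ i : ℕ, t * V i - z * V (i + 1) - msc * V (i + 1) = 0 := by
    intro i
    simp only [hV]
    linear_combination (msc * r ^ i) * kleafV
  have hWid1 : ((d : ℂ) - 1) * t * W 1 - z * W 0 = 0 := by
    simp only [hW, pow_one, pow_zero, mul_one]
    rw [hABrel]
    linear_combination B * k3
  have hWid2 : ∀ i : ℕ, ((d : ℂ) - 1) * t * W (i + 1 + 1) + t * W i - z * W (i + 1) = 0 := by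
    intro i
    simp only [hW]
    linear_combination (A * r ^ i) * kr + (B * r' ^ i) * kr'
  have hWid3 : t * W L - z * W (L + 1) - msc * W (L + 1) = 1 := by
    simp only [hW]
    have expand : t * (A * r ^ L + B * r' ^ L) - z * (A * r ^ (L + 1) + B * r' ^ (L + 1))
        - msc * (A * r ^ (L + 1) + B * r' ^ (L + 1))
        = (A * r ^ L) * (t - z * r - msc * r) + (B * r' ^ L) * (t - z * r' - msc * r') := by
      ring
    rw [expand, kleafV, mul_zero, zero_add, hBr, k5, kleafW]
  -- matrix setup
  set Mm : Matrix (TreeBallY (d - 1) (L + 1)) (TreeBallY (d - 1) (L + 1)) ℂ :=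
    HmatY d (L + 1) - z • 1 - msc • IbdY d (L + 1) with hMm
  have hPM : P * Mm = 1 := by
    rw [hP, hMm]
    exact Matrix.nonsing_inv_mul _
      (isUnit_iff_ne_zero.mpr (Mmat_det_ne_zero d (L + 1) z msc hz him))
  set Vv : TreeBallY (d - 1) (L + 1) → ℂ := fun y => V y.1.length with hVv
  set Ww : TreeBallY (d - 1) (L + 1) → ℂ := fun y => W y.1.length with hWw
  set eoF : TreeBallY (d - 1) (L + 1) → ℂ :=
    fun y => if y = rootY (d - 1) (L + 1) then 1 else 0 with heoF
  set chiF : TreeBallY (d - 1) (L + 1) → ℂ := fun y => if y.1.length = L + 1 then 1 else 0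
    with hchiF
  have hcoef : (((Real.sqrt ((d : ℝ) - 1) : ℝ) : ℂ))⁻¹ = t := by rw [ht, hs]
  -- row computations
  have hMV : Mm.mulVec Vv = eoF := by
    funext x
    rw [hMm, hVv, Mmat_mulVec_radial d (L + 1) z msc V x, hcoef, heoF]
    beta_reduce
    rcases List.eq_nil_or_concat x.1 with hnil | ⟨rr, aa, hcat⟩
    · have hx0 : x.1.length = 0 := by rw [hnil]; rfl
      have hxr : x = rootY (d - 1) (L + 1) := Subtype.ext hnil
      rw [hx0, if_pos (Nat.succ_pos L), if_pos hnil, if_neg (by omega : ¬ (0 = L + 1)),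
        if_pos hxr]
      rw [hcast]
      simp only [zero_add, add_zero]
      linear_combination hVid1
    · rw [List.concat_eq_append] at hcat
      have hxlen : x.1.length = rr.length + 1 := by rw [hcat]; simp
      have hxne : ¬ x.1 = [] := by rw [hcat]; simp
      have hxnr : ¬ x = rootY (d - 1) (L + 1) := fun h => hxne (by rw [h]; rfl)
      rw [hxlen, if_neg hxne, if_neg hxnr, Nat.add_sub_cancel]
      by_cases hlt : rr.length + 1 < L + 1
      · rw [if_pos hlt, if_neg (by omega), hcast]
        linear_combination hVid2 rr.length
      · have hleaf : rr.length + 1 = L + 1 := by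
          have hx2 := x.2; rw [hcat] at hx2; simp at hx2; omega
        rw [if_neg hlt, if_pos hleaf]
        have hrrL : rr.length = L := by omega
        rw [hrrL]
        linear_combination hVid3 L
  have hMW : Mm.mulVec Ww = chiF := by
    funext x
    rw [hMm, hWw, Mmat_mulVec_radial d (L + 1) z msc W x, hcoef, hchiF]
    beta_reduce
    rcases List.eq_nil_or_concat x.1 with hnil | ⟨rr, aa, hcat⟩
    · have hx0 : x.1.length = 0 := by rw [hnil]; rfl
      rw [hx0, if_pos (Nat.succ_pos L), if_pos hnil, if_neg (by omega : ¬ (0 = L + 1)),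
        if_neg (by omega : ¬ (0 = L + 1))]
      rw [hcast]
      simp only [zero_add, add_zero]
      linear_combination hWid1
    · rw [List.concat_eq_append] at hcat
      have hxlen : x.1.length = rr.length + 1 := by rw [hcat]; simp
      have hxne : ¬ x.1 = [] := by rw [hcat]; simp
      rw [hxlen, if_neg hxne, Nat.add_sub_cancel]
      by_cases hlt : rr.length + 1 < L + 1
      · rw [if_pos hlt, if_neg (by omega), if_neg (by omega), hcast]
        linear_combination hWid2 rr.length
      · have hleaf : rr.length + 1 = L + 1 := by
          have hx2 := x.2; rw [hcat] at hx2; simp at hx2; omega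
        rw [if_neg hlt, if_pos hleaf, if_pos hleaf]
        have hrrL : rr.length = L := by omega
        rw [hrrL]
        linear_combination hWid3
  -- inverse actions
  have hPV : P.mulVec eoF = Vv := by
    calc P.mulVec eoF = P.mulVec (Mm.mulVec Vv) := by rw [hMV]
      _ = (P * Mm).mulVec Vv := Matrix.mulVec_mulVec Vv P Mm
      _ = Vv := by rw [hPM, Matrix.one_mulVec]
  have hPW : P.mulVec chiF = Ww := by
    calc P.mulVec chiF = P.mulVec (Mm.mulVec Ww) := by rw [hMW]
      _ = (P * Mm).mulVec Ww := Matrix.mulVec_mulVec Ww P Mm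
      _ = Ww := by rw [hPM, Matrix.one_mulVec]
  have hDV : (IbdY d (L + 1)).mulVec Vv = V (L + 1) • chiF := by
    funext x
    unfold IbdY
    rw [Matrix.mulVec_diagonal, distY]
    simp only [hVv, hchiF, Pi.smul_apply, smul_eq_mul]
    by_cases hx : x.1.length = L + 1
    · rw [hx]; simp
    · simp [hx]
  have hDW : (IbdY d (L + 1)).mulVec Ww = W (L + 1) • chiF := by
    funext x
    unfold IbdY
    rw [Matrix.mulVec_diagonal, distY]
    simp only [hWw, hchiF, Pi.smul_apply, smul_eq_mul]
    by_cases hx : x.1.length = L + 1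
    · rw [hx]; simp
    · simp [hx]
  -- the chain
  have hchain : (P * IbdY d (L + 1) * P * IbdY d (L + 1) * P).mulVec eoF
      = V (L + 1) • (W (L + 1) • Ww) := by
    rw [← Matrix.mulVec_mulVec, ← Matrix.mulVec_mulVec, ← Matrix.mulVec_mulVec,
      ← Matrix.mulVec_mulVec]
    rw [hPV, hDV, Matrix.mulVec_smul, hPW, Matrix.mulVec_smul, hDW, Matrix.mulVec_smul,
      Matrix.mulVec_smul, hPW]
  have hEntry : (P * IbdY d (L + 1) * P * IbdY d (L + 1) * P)
      (rootY (d - 1) (L + 1)) (rootY (d - 1) (L + 1)) = V (L + 1) * (W (L + 1) * W 0) := by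
    have hev := congrFun hchain (rootY (d - 1) (L + 1))
    have hl : ((P * IbdY d (L + 1) * P * IbdY d (L + 1) * P).mulVec eoF)
        (rootY (d - 1) (L + 1))
        = (P * IbdY d (L + 1) * P * IbdY d (L + 1) * P)
            (rootY (d - 1) (L + 1)) (rootY (d - 1) (L + 1)) := by
      simp [Matrix.mulVec, dotProduct, heoF, mul_ite]
    have hrt : Ww (rootY (d - 1) (L + 1)) = W 0 := by
      simp [hWw, rootY]
    rw [hl] at hev
    rw [hev]
    simp [hrt, smul_eq_mul]
  rw [hEntry]
  -- final closed forms
  have hWl : W (L + 1) = msc * (msc ^ (2 * (L + 1) + 2) - 1) / (msc ^ 2 - 1) := by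
    have e1 : σ ^ (L + 1) * r ^ (L + 1) = msc ^ (L + 1) := by rw [← mul_pow, hsr]
    have e2 : σ ^ (L + 1) * r' ^ (L + 1) = (msc⁻¹) ^ (L + 1) := by rw [← mul_pow, hsr']
    calc W (L + 1)
        = (σ ^ (L + 1) * r ^ (L + 1)) * msc ^ (L + 4) / (msc ^ 2 - 1)
          - (σ ^ (L + 1) * r' ^ (L + 1)) * msc ^ (L + 2) / (msc ^ 2 - 1) := by
          simp only [hW, hA, hB]; ring
      _ = msc ^ (L + 1) * msc ^ (L + 4) / (msc ^ 2 - 1)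
          - (msc⁻¹) ^ (L + 1) * msc ^ (L + 2) / (msc ^ 2 - 1) := by rw [e1, e2]
      _ = msc * (msc ^ (2 * (L + 1) + 2) - 1) / (msc ^ 2 - 1) := by
          rw [inv_pow]
          field_simp [hm0, hm21]
          ring
  have hW0 : W 0 = σ ^ (L + 1) * msc ^ (L + 2) := by
    simp only [hW, hA, hB, pow_zero, mul_one]
    field_simp
    ring
  have hVl : V (L + 1) = msc * r ^ (L + 1) := by simp only [hV]
  have hinvd : (-z - ((d : ℂ) / ((d : ℂ) - 1)) * msc)⁻¹
      = msc * ((d : ℂ) - 1) / ((d : ℂ) - 1 - msc ^ 2) := by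
    have hval : -z - ((d : ℂ) / ((d : ℂ) - 1)) * msc
        = ((d : ℂ) - 1 - msc ^ 2) / (msc * ((d : ℂ) - 1)) := by
      rw [hz']; field_simp; ring
    rw [hval, inv_div]
  have e1 : σ ^ (L + 1) * r ^ (L + 1) = msc ^ (L + 1) := by rw [← mul_pow, hsr]
  calc V (L + 1) * (W (L + 1) * W 0)
      = (σ ^ (L + 1) * r ^ (L + 1))
        * (msc * (msc * (msc ^ (2 * (L + 1) + 2) - 1) / (msc ^ 2 - 1)) * msc ^ (L + 2)) := by
        rw [hVl, hWl, hW0]; ring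
    _ = msc ^ (L + 1)
        * (msc * (msc * (msc ^ (2 * (L + 1) + 2) - 1) / (msc ^ 2 - 1)) * msc ^ (L + 2)) := by
        rw [e1]
    _ = msc ^ (2 * (L + 1) + 2) * (-z - ((d : ℂ) / ((d : ℂ) - 1)) * msc)⁻¹ *
        ((1 - msc ^ (2 * (L + 1) + 2)) / ((d : ℂ) - 1) +
          (((d : ℂ) - 2) / ((d : ℂ) - 1)) * (1 - msc ^ (2 * (L + 1) + 2)) / (1 - msc ^ 2)) := by
        rw [hinvd]
        field_simp [hm0, hm21, h1m, hdC, hdm]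
        ring
end

section
/- Fix an integer d ≥ 3. There exist constants c, C > 0 depending only on d such that for all integers ℓ ≥ 1, all z ∈ ℂ with Im z > 0, and all Δ ∈ ℂ with Im Δ > 0 satisfying ℓ²·|Δ − m_sc(z)| ≤ c, one has | X_ℓ(Δ,z) − m_d(z) − (d/(d−1))·m_d(z)²·m_sc(z)^{2ℓ}·(Δ − m_sc(z)) | ≤ C·ℓ³·|Δ − m_sc(z)|², where X_ℓ(Δ,z) := ((H_{𝒳_ℓ} − z·I − Δ·𝕀∂)⁻¹)_{oo}. -/
open scoped Classical

noncomputable section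
namespace Xexp
open Finset

variable {m k : ℕ}

lemma adjY_iff (x y : TreeBallY m k) :
    (treeGraphY m k).Adj x y ↔ (∃ a : Fin m, y.1 = x.1 ++ [a]) ∨ (∃ a : Fin m, x.1 = y.1 ++ [a]) := by
  constructor
  · rintro ⟨hne, h | h⟩
    · exact Or.inl h
    · exact Or.inr h
  · intro h
    refine ⟨?_, by tauto⟩
    rcases h with ⟨a, ha⟩ | ⟨a, ha⟩ <;>
    · intro he; rw [he] at ha
      have := congrArg List.length ha; simp at this

/-- children sum when `s` is not a leaf -/
lemma sum_children (s : TreeBallY m k) (hs : s.1.length < k) (G : TreeBallY m k → ℂ) :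
    (∑ t : TreeBallY m k, if (∃ b : Fin m, t.1 = s.1 ++ [b]) then G t else 0)
      = ∑ b : Fin m, G ⟨s.1 ++ [b], by simpa using hs⟩ := by
  classical
  set e : Fin m → TreeBallY m k := fun b => ⟨s.1 ++ [b], by simpa using hs⟩ with he
  have hinj : Function.Injective e := by
    intro b c h
    have : s.1 ++ [b] = s.1 ++ [c] := congrArg Subtype.val h
    simpa using this
  have hcond : ∀ t : TreeBallY m k, (∃ b : Fin m, t.1 = s.1 ++ [b]) ↔ t ∈ Finset.image e Finset.univ := by
    intro t
    simp only [Finset.mem_image, Finset.mem_univ, true_and]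
    constructor
    · rintro ⟨b, hb⟩; exact ⟨b, by apply Subtype.ext; simp [he, hb]⟩
    · rintro ⟨b, hb⟩; exact ⟨b, by rw [← hb]⟩
  calc (∑ t : TreeBallY m k, if (∃ b : Fin m, t.1 = s.1 ++ [b]) then G t else 0)
      = ∑ t : TreeBallY m k, if t ∈ Finset.image e Finset.univ then G t else 0 := by
        apply Finset.sum_congr rfl; intro t _; rw [if_congr (hcond t) rfl rfl]
    _ = ∑ t ∈ Finset.image e Finset.univ, G t := by
        rw [Finset.sum_ite_mem, Finset.univ_inter]
    _ = ∑ b : Fin m, G (e b) := Finset.sum_image (fun a _ b _ h => hinj h)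

/-- children sum when `s` is a leaf: empty -/
lemma sum_children_leaf (s : TreeBallY m k) (hs : s.1.length = k) (G : TreeBallY m k → ℂ) :
    (∑ t : TreeBallY m k, if (∃ b : Fin m, t.1 = s.1 ++ [b]) then G t else 0) = 0 := by
  apply Finset.sum_eq_zero
  intro t _
  rw [if_neg]
  rintro ⟨b, hb⟩
  have := congrArg List.length hb
  have ht := t.2
  simp [hs] at this
  omega

/-- parent sum when `s` is not the root -/
lemma sum_parent (s : TreeBallY m k) (hs : s.1 ≠ []) (G : TreeBallY m k → ℂ) :
    (∑ t : TreeBallY m k, if (∃ b : Fin m, s.1 = t.1 ++ [b]) then G t else 0)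
      = G ⟨s.1.dropLast, le_trans (by simp [List.length_dropLast]) s.2⟩ := by
  classical
  set t0 : TreeBallY m k := ⟨s.1.dropLast, le_trans (by simp [List.length_dropLast]) s.2⟩ with ht0
  rw [Finset.sum_eq_single t0]
  · rw [if_pos ⟨s.1.getLast hs, (List.dropLast_append_getLast hs).symm⟩]
  · intro t _ hne
    rw [if_neg]
    rintro ⟨b, hb⟩
    apply hne
    apply Subtype.ext
    have : (t.1 ++ [b]).dropLast = t.1 := by simp
    rw [ht0]; dsimp only; rw [hb, this]
  · intro h; exact absurd (Finset.mem_univ t0) h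

/-- parent sum at the root: empty -/
lemma sum_parent_root (s : TreeBallY m k) (hs : s.1 = []) (G : TreeBallY m k → ℂ) :
    (∑ t : TreeBallY m k, if (∃ b : Fin m, s.1 = t.1 ++ [b]) then G t else 0) = 0 := by
  apply Finset.sum_eq_zero
  intro t _
  rw [if_neg]
  rintro ⟨b, hb⟩
  rw [hs] at hb
  exact absurd hb.symm (by simp)

end Xexp
namespace Xexp
open Finset SimpleGraph

variable {d l : ℕ}

/-- depth of a vertex in the X ball -/
def depthX (d l : ℕ) : TreeBallX d l → ℕ := fun x =>
  match x with
  | none => 0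
  | some (_, y) => y.1.length + 1

lemma noneX_ne_some (p : Fin d × TreeBallY (d-1) (l-1)) :
    (none : TreeBallX d l) ≠ some p := fun h => Option.some_ne_none p h.symm

lemma someX_inj {p q : Fin d × TreeBallY (d-1) (l-1)}
    (h : (some p : TreeBallX d l) = some q) : p = q := Option.some_inj.mp h

lemma adjX_none_iff (y : TreeBallX d l) :
    (treeGraphX d l).Adj none y ↔ ∃ a : Fin d, y = some (a, rootY (d-1) (l-1)) := by
  constructor
  · rintro ⟨hne, h | h⟩
    · rcases h with ⟨a, _, hy⟩ | ⟨a, s, t, hx, _, _⟩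
      · exact ⟨a, hy⟩
      · exact absurd hx (noneX_ne_some _)
    · rcases h with ⟨a, hy, _⟩ | ⟨a, s, t, _, hx, _⟩
      · exact absurd hy.symm hne
      · exact absurd hx.symm (fun h => noneX_ne_some _ h.symm)
  · rintro ⟨a, ha⟩
    exact ⟨by rw [ha]; exact (noneX_ne_some _), Or.inl (Or.inl ⟨a, rfl, ha⟩)⟩

lemma adjX_some_iff (a : Fin d) (s : TreeBallY (d-1) (l-1)) (y : TreeBallX d l) :
    (treeGraphX d l).Adj (some (a, s)) y ↔
      (s.1 = [] ∧ y = none) ∨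
      (∃ t : TreeBallY (d-1) (l-1), y = some (a, t) ∧
        ((∃ b : Fin (d-1), t.1 = s.1 ++ [b]) ∨ (∃ b : Fin (d-1), s.1 = t.1 ++ [b]))) := by
  constructor
  · rintro ⟨hne, h | h⟩
    · rcases h with ⟨a', hx, hy⟩ | ⟨a', s', t', hx, hy, b, hb⟩
      · exact absurd hx.symm (noneX_ne_some _)
      · obtain ⟨rfl, rfl⟩ : a' = a ∧ s' = s := by
          have := someX_inj hx; simp [Prod.ext_iff] at this; tauto
        exact Or.inr ⟨t', hy, Or.inl ⟨b, hb⟩⟩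
    · rcases h with ⟨a', hy, hx⟩ | ⟨a', s', t', hy, hx, b, hb⟩
      · obtain ⟨rfl, rfl⟩ : a' = a ∧ (⟨[], Nat.zero_le _⟩ : TreeBallY (d-1) (l-1)) = s := by
          have := someX_inj hx.symm; simp [Prod.ext_iff] at this; tauto
        exact Or.inl ⟨rfl, hy⟩
      · obtain ⟨rfl, rfl⟩ : a' = a ∧ t' = s := by
          have := someX_inj hx.symm; simp [Prod.ext_iff] at this; tauto
        exact Or.inr ⟨s', hy, Or.inr ⟨b, hb⟩⟩
  · rintro (⟨hs, rfl⟩ | ⟨t, rfl, ⟨b, hb⟩ | ⟨b, hb⟩⟩)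
    · refine ⟨Option.some_ne_none _, Or.inr (Or.inl ⟨a, rfl, ?_⟩)⟩
      congr 1
      exact Prod.ext rfl (Subtype.ext hs)
    · refine ⟨?_, Or.inl (Or.inr ⟨a, s, t, rfl, rfl, b, hb⟩)⟩
      intro h
      have h2 : s = t := congrArg Prod.snd (someX_inj h)
      rw [← h2] at hb
      have := congrArg List.length hb; simp at this
    · refine ⟨?_, Or.inr (Or.inr ⟨a, t, s, rfl, rfl, b, hb⟩)⟩
      intro h
      have h2 : s = t := congrArg Prod.snd (someX_inj h)
      rw [h2] at hb
      have := congrArg List.length hb; simp at this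

lemma adjX_depth {x y : TreeBallX d l} (h : (treeGraphX d l).Adj x y) :
    depthX d l y = depthX d l x + 1 ∨ depthX d l x = depthX d l y + 1 := by
  match x with
  | none =>
    obtain ⟨a, rfl⟩ := (adjX_none_iff y).1 h
    left; rfl
  | some (a, s) =>
    rcases (adjX_some_iff a s y).1 h with ⟨hs, rfl⟩ | ⟨t, rfl, ⟨b, hb⟩ | ⟨b, hb⟩⟩
    · right; simp [depthX, hs]
    · left; simp [depthX, hb]
    · right; simp [depthX, hb]

lemma depth_le_walk {x y : TreeBallX d l} (p : (treeGraphX d l).Walk x y) :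
    depthX d l y ≤ depthX d l x + p.length := by
  induction p with
  | nil => simp
  | cons h p ih =>
    rcases adjX_depth h with h1 | h1 <;> (simp only [Walk.length_cons]; omega)

lemma exists_walk (a : Fin d) (y : TreeBallY (d-1) (l-1)) :
    ∃ p : (treeGraphX d l).Walk none (some (a, y)), p.length = y.1.length + 1 := by
  obtain ⟨yl, hy⟩ := y
  induction yl using List.reverseRecOn with
  | nil =>
    have hadj : (treeGraphX d l).Adj none (some (a, ⟨[], hy⟩)) := by
      refine (adjX_none_iff _).mpr ?_
      exact ⟨a, by rw [show (⟨[], hy⟩ : TreeBallY (d-1) (l-1)) = rootY (d-1) (l-1) from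
        Subtype.ext rfl]⟩
    exact ⟨Walk.cons hadj Walk.nil, rfl⟩
  | append_singleton l' b ih =>
    have hl' : l'.length ≤ l - 1 := by simp at hy; omega
    obtain ⟨p, hp⟩ := ih hl'
    have hadj : (treeGraphX d l).Adj (some (a, ⟨l', hl'⟩)) (some (a, ⟨l' ++ [b], hy⟩)) := by
      refine (adjX_some_iff _ _ _).mpr ?_
      exact Or.inr ⟨⟨l' ++ [b], hy⟩, rfl, Or.inl ⟨b, rfl⟩⟩
    refine ⟨p.concat hadj, ?_⟩
    refine (Walk.length_concat (p := p) (h := hadj)).trans ?_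
    simp at hp ⊢; omega

lemma distX_eq (x : TreeBallX d l) :
    (treeGraphX d l).dist (rootX d l) x = depthX d l x := by
  match x with
  | none => exact SimpleGraph.dist_self
  | some (a, y) =>
    obtain ⟨p, hp⟩ := exists_walk (l := l) a y
    refine le_antisymm ((SimpleGraph.dist_le p).trans (le_of_eq hp)) ?_
    have hr : (treeGraphX d l).Reachable (rootX d l) (some (a, y)) := ⟨p⟩
    obtain ⟨q, hq⟩ := hr.exists_walk_length_eq_dist
    have := depth_le_walk q
    exact this.trans_eq ((zero_add _).trans hq)

end Xexp
namespace Xexp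

noncomputable def gseq (z Δ : ℂ) : ℕ → ℂ
  | 0 => (-z - Δ)⁻¹
  | (n+1) => (-z - gseq z Δ n)⁻¹

lemma ne_zero_of_im_neg {w : ℂ} (hw : w.im < 0) : w ≠ 0 := by
  intro h; rw [h] at hw; simp at hw

lemma inv_im_pos {w : ℂ} (hw : w.im < 0) : 0 < w⁻¹.im := by
  rw [Complex.inv_im]
  exact div_pos (by linarith) (Complex.normSq_pos.mpr (ne_zero_of_im_neg hw))

lemma im_lin_neg {r : ℝ} (hr : 0 < r) {z g : ℂ} (hz : 0 < z.im) (hg : 0 < g.im) :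
    (-z - (r:ℂ) * g).im < 0 := by
  simp only [Complex.sub_im, Complex.neg_im, Complex.mul_im, Complex.ofReal_re,
    Complex.ofReal_im, zero_mul, add_zero]
  nlinarith

variable {z Δ : ℂ}

lemma gseq_im_pos (hz : 0 < z.im) (hΔ : 0 < Δ.im) : ∀ n, 0 < (gseq z Δ n).im
  | 0 => by
    rw [gseq]
    exact inv_im_pos (by simp only [Complex.sub_im, Complex.neg_im]; linarith)
  | (n+1) => by
    rw [gseq]
    have := gseq_im_pos hz hΔ n
    exact inv_im_pos (by simp only [Complex.sub_im, Complex.neg_im]; linarith)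

/-- the weight `1/√(d-1)` -/
noncomputable def wgt (d : ℕ) : ℂ := ((Real.sqrt ((d:ℝ) - 1) : ℝ) : ℂ)⁻¹

lemma dR_pos {d : ℕ} (hd : 3 ≤ d) : (0:ℝ) < (d:ℝ) - 1 := by
  have : (3:ℝ) ≤ (d:ℝ) := by exact_mod_cast hd
  linarith

lemma wgt_sq {d : ℕ} (hd : 3 ≤ d) : ((d:ℂ) - 1) * (wgt d * wgt d) = 1 := by
  have h0 := dR_pos hd
  rw [wgt, show ((d:ℂ) - 1) = (((d:ℝ) - 1 : ℝ) : ℂ) by push_cast; ring,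
    ← Complex.ofReal_inv, ← Complex.ofReal_mul, ← Complex.ofReal_mul]
  have : ((d:ℝ) - 1) * ((Real.sqrt ((d:ℝ)-1))⁻¹ * (Real.sqrt ((d:ℝ)-1))⁻¹) = 1 := by
    rw [← mul_inv, Real.mul_self_sqrt h0.le, mul_inv_cancel₀ (ne_of_gt h0)]
  rw [this, Complex.ofReal_one]

lemma dC_sub_one_ne {d : ℕ} (hd : 3 ≤ d) : ((d:ℂ) - 1) ≠ 0 := by
  intro h
  have h2 : (d:ℂ) = 1 := by linear_combination h
  have : (d:ℝ) = 1 := by exact_mod_cast congrArg Complex.re h2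
  have := dR_pos hd
  linarith

noncomputable def Fseq (d : ℕ) (z Δ : ℂ) (k : ℕ) : ℕ → ℂ
  | 0 => (-z - ((d:ℂ)/((d:ℂ)-1)) * gseq z Δ k)⁻¹
  | (j+1) => Fseq d z Δ k j * (-(wgt d)) * gseq z Δ (k - j)

section rows

variable {d k : ℕ} (hd : 3 ≤ d) (hz : 0 < z.im) (hΔ : 0 < Δ.im)
include hd hz hΔ

lemma root_denom_ne : (-z - ((d:ℂ)/((d:ℂ)-1)) * gseq z Δ k) ≠ 0 := by
  have hgk := gseq_im_pos hz hΔ (z := z) (Δ := Δ) k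
  have hd1 : (0:ℝ) < (d:ℝ) / ((d:ℝ) - 1) := div_pos (by linarith [dR_pos hd]) (dR_pos hd)
  have htr : ((d:ℂ)/((d:ℂ)-1)) = (((d:ℝ)/((d:ℝ)-1) : ℝ) : ℂ) := by push_cast; ring
  rw [htr]
  exact ne_zero_of_im_neg (im_lin_neg hd1 hz hgk)

lemma row_root :
    (d:ℂ) * (wgt d * Fseq d z Δ k 1) - z * Fseq d z Δ k 0 = 1 := by
  have h0 : Fseq d z Δ k 0 * (-z - ((d:ℂ)/((d:ℂ)-1)) * gseq z Δ k) = 1 := by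
    rw [Fseq]; exact inv_mul_cancel₀ (root_denom_ne hd hz hΔ)
  have hdw : (d:ℂ) * (wgt d * wgt d) = (d:ℂ)/((d:ℂ)-1) := by
    have h := wgt_sq hd
    have hne := dC_sub_one_ne hd
    field_simp
    linear_combination (d:ℂ) * h
  show (d:ℂ) * (wgt d * (Fseq d z Δ k 0 * (-(wgt d)) * gseq z Δ k)) - z * Fseq d z Δ k 0 = 1
  linear_combination h0 - (gseq z Δ k * Fseq d z Δ k 0) * hdw

lemma row_interior {j : ℕ} (hj : j < k) :
    wgt d * Fseq d z Δ k j + ((d:ℂ) - 1) * (wgt d * Fseq d z Δ k (j+2)) - z * Fseq d z Δ k (j+1) = 0 := by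
  set g' := gseq z Δ (k - j - 1) with hg'
  have hg'im := gseq_im_pos hz hΔ (z := z) (Δ := Δ) (k - j - 1)
  have hne : (-z - g') ≠ 0 :=
    ne_zero_of_im_neg (by simp only [Complex.sub_im, Complex.neg_im]; linarith)
  have hidx : k - j = (k - j - 1) + 1 := by omega
  have h1 : Fseq d z Δ k (j+1) * (-z - g') = Fseq d z Δ k j * (-(wgt d)) := by
    show Fseq d z Δ k j * (-(wgt d)) * gseq z Δ (k - j) * (-z - g') = _
    rw [hidx, gseq, ← hg', mul_assoc, inv_mul_cancel₀ hne, mul_one]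
  have h2 : Fseq d z Δ k (j+2) = Fseq d z Δ k (j+1) * (-(wgt d)) * g' := by
    show Fseq d z Δ k (j+1) * (-(wgt d)) * gseq z Δ (k - (j+1)) = _
    rw [show k - (j+1) = k - j - 1 by omega, ← hg']
  rw [h2]
  linear_combination h1 - (g' * Fseq d z Δ k (j+1)) * wgt_sq hd

omit hd in lemma row_leaf :
    wgt d * Fseq d z Δ k k - z * Fseq d z Δ k (k+1) - Δ * Fseq d z Δ k (k+1) = 0 := by
  have hne : (-z - Δ) ≠ 0 :=
    ne_zero_of_im_neg (by simp only [Complex.sub_im, Complex.neg_im]; linarith)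
  have h1 : Fseq d z Δ k (k+1) * (-z - Δ) = Fseq d z Δ k k * (-(wgt d)) := by
    show Fseq d z Δ k k * (-(wgt d)) * gseq z Δ (k - k) * (-z - Δ) = _
    rw [Nat.sub_self, gseq, mul_assoc, inv_mul_cancel₀ hne, mul_one]
  linear_combination h1

end rows
end Xexp
namespace Xexp
open Finset Matrix

variable {z Δ : ℂ}

lemma mulVec_expand {n : Type*} [Fintype n] [DecidableEq n] (H : Matrix n n ℂ) (z Δ : ℂ)
    (f : n → ℂ) (u : n → ℂ) (x : n) :
    ((H - z • 1 - Δ • Matrix.diagonal f) *ᵥ u) x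
      = (∑ y, H x y * u y) - z * u x - Δ * f x * u x := by
  simp only [Matrix.mulVec, dotProduct, Matrix.sub_apply, Matrix.smul_apply,
    smul_eq_mul, Matrix.one_apply, Matrix.diagonal_apply, sub_mul, ite_mul, mul_ite,
    mul_one, mul_zero, zero_mul, Finset.sum_sub_distrib, Finset.sum_ite_eq,
    Finset.mem_univ, if_true]

variable {d l : ℕ}

lemma sumX (f : TreeBallX d l → ℂ) :
    (∑ x, f x) = f none + ∑ p : Fin d × TreeBallY (d-1) (l-1), f (some p) :=
  Fintype.sum_option f

lemma HmatX_eq (x y : TreeBallX d l) :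
    HmatX d l x y = if (treeGraphX d l).Adj x y then wgt d else 0 := rfl

lemma adjX_none_some (b : Fin d) (y' : TreeBallY (d-1) (l-1)) :
    (treeGraphX d l).Adj none (some (b, y')) ↔ y' = rootY (d-1) (l-1) := by
  refine (adjX_none_iff _).trans ?_
  constructor
  · rintro ⟨a', h⟩
    exact congrArg Prod.snd (someX_inj h)
  · rintro rfl
    exact ⟨b, rfl⟩

lemma adjX_some_none (a : Fin d) (s : TreeBallY (d-1) (l-1)) :
    (treeGraphX d l).Adj (some (a, s)) none ↔ s.1 = [] := by
  refine (adjX_some_iff _ _ _).trans ?_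
  constructor
  · rintro (⟨hs, -⟩ | ⟨t, ht, -⟩)
    · exact hs
    · exact absurd ht (noneX_ne_some _)
  · intro hs
    exact Or.inl ⟨hs, rfl⟩

lemma adjX_some_some (a : Fin d) (s : TreeBallY (d-1) (l-1)) (b : Fin d)
    (t : TreeBallY (d-1) (l-1)) :
    (treeGraphX d l).Adj (some (a, s)) (some (b, t)) ↔
      (b = a ∧ ((∃ c : Fin (d-1), t.1 = s.1 ++ [c]) ∨ (∃ c : Fin (d-1), s.1 = t.1 ++ [c]))) := by
  refine (adjX_some_iff _ _ _).trans ?_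
  constructor
  · rintro (⟨-, h⟩ | ⟨t', ht', hC⟩)
    · exact absurd h (Option.some_ne_none _)
    · have h2 := someX_inj ht'
      have hba : b = a := congrArg Prod.fst h2
      have htt : t = t' := congrArg Prod.snd h2
      subst htt
      exact ⟨hba, hC⟩
  · rintro ⟨rfl, hC⟩
    exact Or.inr ⟨t, rfl, hC⟩

lemma mulVec_uvec (hd : 3 ≤ d) (hl : 1 ≤ l) (hz : 0 < z.im) (hΔ : 0 < Δ.im) :
    (HmatX d l - z • (1 : Matrix (TreeBallX d l) (TreeBallX d l) ℂ) - Δ • IbdX d l) *ᵥ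
      (fun x => Fseq d z Δ (l-1) (depthX d l x)) = Pi.single (rootX d l) 1 := by
  have hIbd : IbdX d l = Matrix.diagonal (fun x => if depthX d l x = l then (1:ℂ) else 0) := by
    unfold IbdX
    have h2 : (fun x => if (treeGraphX d l).dist (rootX d l) x = l then (1:ℂ) else 0)
        = (fun x => if depthX d l x = l then (1:ℂ) else 0) := by
      funext x
      rw [distX_eq]
    rw [h2]
  set k := l - 1 with hk
  have hlk : l = k + 1 := by omega
  set F := Fseq d z Δ k with hF
  funext x
  rw [hIbd, mulVec_expand]
  match x with
  | none =>
    have h1 : (Pi.single (rootX d l) 1 : TreeBallX d l → ℂ) none = 1 := Pi.single_eq_same _ _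
    rw [h1]
    have hroot : ∀ y, HmatX d l none y * F (depthX d l y) =
        (if (treeGraphX d l).Adj none y then wgt d * F (depthX d l y) else 0) := by
      intro y; rw [HmatX_eq none y, ite_mul, zero_mul]
    simp only [hroot]
    rw [sumX, Fintype.sum_prod_type]
    have hterm : ∀ (b : Fin d) (y' : TreeBallY (d-1) (l-1)),
        (if (treeGraphX d l).Adj none (some (b, y')) then wgt d * F (depthX d l (some (b, y'))) else 0)
        = (if y' = rootY (d-1) (l-1) then wgt d * F 1 else 0) := by
      intro b y'
      by_cases h : y' = rootY (d-1) (l-1)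
      · rw [if_pos ((adjX_none_some b y').mpr h), if_pos h, h]
        rfl
      · rw [if_neg (fun hadj => h ((adjX_none_some b y').mp hadj)), if_neg h]
    simp only [hterm]
    rw [if_neg (SimpleGraph.irrefl (treeGraphX d l) (v := (none : TreeBallX d l)))]
    simp only [Finset.sum_ite_eq', Finset.mem_univ, if_true]
    rw [Finset.sum_const, Finset.card_univ, Fintype.card_fin, nsmul_eq_mul]
    have hd0 : depthX d l none = 0 := rfl
    rw [hd0]
    have : ¬((0:ℕ) = l) := by omega
    rw [if_neg this]
    rw [zero_add]
    have := row_root (d := d) (k := k) (z := z) (Δ := Δ) hd hz hΔ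
    rw [← hF] at this
    linear_combination this
  | some (a, s) =>
    have h1 : (Pi.single (rootX d l) 1 : TreeBallX d l → ℂ) (some (a, s)) = 0 :=
      Pi.single_eq_of_ne (Option.some_ne_none _) _
    rw [h1]
    have hjk : s.1.length ≤ k := s.2
    -- rewrite the H-sum
    rw [sumX, Fintype.sum_prod_type]
    have hnone : HmatX d l (some (a,s)) none * F (depthX d l none)
        = (if s.1 = [] then wgt d * F 0 else 0) := by
      rw [HmatX_eq (some (a,s)) none]
      by_cases h : s.1 = []
      · rw [if_pos ((adjX_some_none a s).mpr h), if_pos h]; rfl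
      · rw [if_neg (fun hadj => h ((adjX_some_none a s).mp hadj)), if_neg h, zero_mul]
    rw [hnone]
    have hsplit : ∀ (b : Fin d) (t : TreeBallY (d-1) (l-1)),
        HmatX d l (some (a,s)) (some (b,t)) * F (depthX d l (some (b,t)))
        = if b = a then
            ((if ∃ c : Fin (d-1), t.1 = s.1 ++ [c] then wgt d * F (t.1.length + 1) else 0)
              + (if ∃ c : Fin (d-1), s.1 = t.1 ++ [c] then wgt d * F (t.1.length + 1) else 0))
          else 0 := by
      intro b t
      rw [HmatX_eq (some (a,s)) (some (b,t))]
      have hdepth : depthX d l (some (b,t)) = t.1.length + 1 := rfl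
      rw [hdepth]
      by_cases hba : b = a
      · by_cases hP : ∃ c : Fin (d-1), t.1 = s.1 ++ [c]
        · have hQ : ¬∃ c : Fin (d-1), s.1 = t.1 ++ [c] := by
            rintro ⟨c, hc⟩
            obtain ⟨c', hc'⟩ := hP
            rw [hc'] at hc
            have := congrArg List.length hc
            simp at this
          rw [if_pos ((adjX_some_some a s b t).mpr ⟨hba, Or.inl hP⟩), if_pos hba,
            if_pos hP, if_neg hQ, add_zero]
        · by_cases hQ : ∃ c : Fin (d-1), s.1 = t.1 ++ [c]
          · rw [if_pos ((adjX_some_some a s b t).mpr ⟨hba, Or.inr hQ⟩), if_pos hba,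
              if_neg hP, if_pos hQ, zero_add]
          · rw [if_neg, if_pos hba, if_neg hP, if_neg hQ, zero_mul, add_zero]
            intro hadj
            rcases ((adjX_some_some a s b t).mp hadj).2 with h | h
            · exact hP h
            · exact hQ h
      · rw [if_neg, if_neg hba, zero_mul]
        intro hadj
        exact hba ((adjX_some_some a s b t).mp hadj).1
    simp only [hsplit]
    have hpull : ∀ b : Fin d,
        (∑ t : TreeBallY (d-1) (l-1), if b = a then
            ((if ∃ c : Fin (d-1), t.1 = s.1 ++ [c] then wgt d * F (t.1.length + 1) else 0)
              + (if ∃ c : Fin (d-1), s.1 = t.1 ++ [c] then wgt d * F (t.1.length + 1) else 0))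
          else 0)
        = if b = a then
            ((∑ t : TreeBallY (d-1) (l-1), if ∃ c : Fin (d-1), t.1 = s.1 ++ [c] then wgt d * F (t.1.length + 1) else 0)
              + (∑ t : TreeBallY (d-1) (l-1), if ∃ c : Fin (d-1), s.1 = t.1 ++ [c] then wgt d * F (t.1.length + 1) else 0))
          else 0 := by
      intro b
      by_cases hba : b = a
      · simp only [if_pos hba, Finset.sum_add_distrib]
      · simp only [if_neg hba, Finset.sum_const_zero]
    simp only [hpull]
    rw [Finset.sum_ite_eq' Finset.univ a, if_pos (Finset.mem_univ a)]
    have hdepths : depthX d l (some (a,s)) = s.1.length + 1 := rfl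
    rw [hdepths]
    -- now case on leaf/interior and root/non-root
    by_cases hleaf : s.1.length = k
    · -- leaf row
      have hchild : (∑ t : TreeBallY (d-1) (l-1), if ∃ c : Fin (d-1), t.1 = s.1 ++ [c]
          then wgt d * F (t.1.length + 1) else 0) = 0 :=
        sum_children_leaf s hleaf _
      have hbd : (if s.1.length + 1 = l then (1:ℂ) else 0) = 1 := by
        rw [if_pos (by omega)]
      rw [hchild, hbd]
      by_cases hroot : s.1 = []
      · have hpar : (∑ t : TreeBallY (d-1) (l-1), if ∃ c : Fin (d-1), s.1 = t.1 ++ [c]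
            then wgt d * F (t.1.length + 1) else 0) = 0 := sum_parent_root s hroot _
        rw [hpar, if_pos hroot]
        have h0 : s.1.length = 0 := by rw [hroot]; rfl
        rw [h0] at hleaf ⊢
        have hrow := row_leaf (d := d) (k := k) (z := z) (Δ := Δ) hz hΔ
        rw [← hF, ← hleaf] at hrow
        linear_combination hrow
      · have hpar := sum_parent s hroot (fun t => wgt d * F (t.1.length + 1))
        rw [hpar, if_neg hroot]
        have hlen : s.1.dropLast.length + 1 = s.1.length := by
          rw [List.length_dropLast]
          have : s.1.length ≠ 0 := fun h => hroot (List.length_eq_zero_iff.mp h)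
          omega
        rw [hlen, hleaf]
        have hrow := row_leaf (d := d) (k := k) (z := z) (Δ := Δ) hz hΔ
        rw [← hF] at hrow
        linear_combination hrow
    · -- interior row
      have hlt : s.1.length < k := lt_of_le_of_ne hjk hleaf
      have hchild := sum_children s hlt (fun t => wgt d * F (t.1.length + 1))
      rw [hchild]
      have hlen2 : ∀ c : Fin (d-1), ((s.1 ++ [c]).length + 1) = s.1.length + 2 := by
        intro c; simp
      have hcs : (∑ c : Fin (d-1), wgt d * F ((s.1 ++ [c]).length + 1))
          = ((d:ℂ) - 1) * (wgt d * F (s.1.length + 2)) := by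
        have : ∀ c : Fin (d-1), wgt d * F ((s.1 ++ [c]).length + 1) = wgt d * F (s.1.length + 2) := by
          intro c; rw [hlen2 c]
        simp only [this]
        rw [Finset.sum_const, Finset.card_univ, Fintype.card_fin, nsmul_eq_mul]
        congr 1
        push_cast [Nat.cast_sub (by omega : 1 ≤ d)]
        ring
      rw [hcs]
      have hbd : (if s.1.length + 1 = l then (1:ℂ) else 0) = 0 := by
        rw [if_neg (by omega)]
      rw [hbd]
      have hrow := row_interior (d := d) (k := k) (z := z) (Δ := Δ) (j := s.1.length) hd hz hΔ hlt
      rw [← hF] at hrow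
      by_cases hroot : s.1 = []
      · have hpar : (∑ t : TreeBallY (d-1) (l-1), if ∃ c : Fin (d-1), s.1 = t.1 ++ [c]
            then wgt d * F (t.1.length + 1) else 0) = 0 := sum_parent_root s hroot _
        rw [hpar, if_pos hroot]
        have h0 : s.1.length = 0 := by rw [hroot]; rfl
        rw [h0] at hrow ⊢
        linear_combination hrow
      · have hpar := sum_parent s hroot (fun t => wgt d * F (t.1.length + 1))
        rw [hpar, if_neg hroot]
        have hlen : s.1.dropLast.length + 1 = s.1.length := by
          rw [List.length_dropLast]
          have : s.1.length ≠ 0 := fun h => hroot (List.length_eq_zero_iff.mp h)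
          omega
        rw [hlen]
        linear_combination hrow

end Xexp
namespace Xexp
open Finset Matrix

lemma isUnit_HplusD {n : Type*} [Fintype n] [DecidableEq n] (H : Matrix n n ℂ)
    (hsymm : ∀ x y, H x y = H y x) (hreal : ∀ x y, (H x y).im = 0)
    (b : n → ℂ) (hb : ∀ x, (b x).im < 0) :
    IsUnit (H + Matrix.diagonal b) := by
  rw [← Matrix.mulVec_injective_iff_isUnit]
  set M := H + Matrix.diagonal b with hM
  have key : ∀ v : n → ℂ, M *ᵥ v = 0 → v = 0 := by
    intro v hv
    have hMv : ∀ x, (M *ᵥ v) x = (∑ y, H x y * v y) + b x * v x := by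
      intro x
      rw [hM, Matrix.add_mulVec]
      simp only [Pi.add_apply, Matrix.mulVec_diagonal]
      rfl
    have hS : (∑ x, (starRingEnd ℂ) (v x) * ((∑ y, H x y * v y) + b x * v x)) = 0 := by
      apply Finset.sum_eq_zero
      intro x _
      rw [← hMv x, hv]
      simp
    rw [show (∑ x, (starRingEnd ℂ) (v x) * ((∑ y, H x y * v y) + b x * v x))
        = (∑ x, ∑ y, (starRingEnd ℂ) (v x) * (H x y * v y))
          + (∑ x, b x * ((starRingEnd ℂ) (v x) * v x)) from by
      rw [← Finset.sum_add_distrib]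
      apply Finset.sum_congr rfl
      intro x _
      rw [mul_add, Finset.mul_sum]
      ring] at hS
    set T1 := ∑ x, ∑ y, (starRingEnd ℂ) (v x) * (H x y * v y) with hT1def
    have hT1 : (starRingEnd ℂ) T1 = T1 := by
      rw [hT1def, map_sum]
      rw [Finset.sum_comm]
      apply Finset.sum_congr rfl
      intro y _
      rw [map_sum]
      apply Finset.sum_congr rfl
      intro x _
      rw [_root_.map_mul, _root_.map_mul, Complex.conj_conj,
        Complex.conj_eq_iff_im.mpr (hreal y x), hsymm y x]
      ring
    have hT1im : T1.im = 0 := by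
      have := congrArg Complex.im hT1
      simp only [Complex.conj_im] at this
      linarith
    have hT2im : (∑ x, b x * ((starRingEnd ℂ) (v x) * v x)).im
        = ∑ x, (b x).im * Complex.normSq (v x) := by
      rw [Complex.im_sum]
      apply Finset.sum_congr rfl
      intro x _
      rw [show (starRingEnd ℂ) (v x) * v x = ((Complex.normSq (v x) : ℝ) : ℂ) from by
        rw [mul_comm, Complex.mul_conj]]
      simp [Complex.mul_im]
    have hzero : (∑ x, (b x).im * Complex.normSq (v x)) = 0 := by
      have := congrArg Complex.im hS
      rw [Complex.add_im, hT1im, hT2im] at this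
      simpa using this
    have hterm : ∀ x ∈ Finset.univ, (b x).im * Complex.normSq (v x) ≤ 0 := by
      intro x _
      exact mul_nonpos_of_nonpos_of_nonneg (le_of_lt (hb x)) (Complex.normSq_nonneg _)
    funext x
    have hx := (Finset.sum_eq_zero_iff_of_nonpos hterm).mp hzero x (Finset.mem_univ x)
    have : Complex.normSq (v x) = 0 := by
      rcases mul_eq_zero.mp hx with h | h
      · exact absurd h (ne_of_lt (hb x))
      · exact h
    simpa using Complex.normSq_eq_zero.mp this
  intro v1 v2 h12
  have : M *ᵥ (v1 - v2) = 0 := by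
    rw [Matrix.mulVec_sub, h12, sub_self]
  have := key _ this
  exact sub_eq_zero.mp this

variable {z Δ : ℂ} {d l : ℕ}

lemma inv_entry (hd : 3 ≤ d) (hl : 1 ≤ l) (hz : 0 < z.im) (hΔ : 0 < Δ.im) :
    ((HmatX d l - z • 1 - Δ • IbdX d l)⁻¹) (rootX d l) (rootX d l) = Fseq d z Δ (l-1) 0 := by
  set M := HmatX d l - z • (1 : Matrix (TreeBallX d l) (TreeBallX d l) ℂ) - Δ • IbdX d l with hMdef
  have hMeq : M = HmatX d l + Matrix.diagonal
      (fun x => -z - Δ * (if depthX d l x = l then 1 else 0)) := by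
    rw [hMdef]
    ext x y
    by_cases h : x = y
    · subst h
      simp only [Matrix.sub_apply, Matrix.add_apply, Matrix.smul_apply, Matrix.one_apply_eq,
        IbdX, Matrix.diagonal_apply_eq, distX_eq, smul_eq_mul]
      ring
    · simp only [Matrix.sub_apply, Matrix.add_apply, Matrix.smul_apply, Matrix.one_apply_ne h,
        IbdX, Matrix.diagonal_apply_ne _ h, smul_eq_mul]
      ring
  have hM : IsUnit M := by
    rw [hMeq]
    apply isUnit_HplusD
    · intro x y
      rw [HmatX_eq, HmatX_eq]
      exact if_congr (SimpleGraph.adj_comm _ _ _) rfl rfl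
    · intro x y
      rw [HmatX_eq]
      split_ifs
      · rw [wgt, ← Complex.ofReal_inv, Complex.ofReal_im]
      · rfl
    · intro x
      by_cases h : depthX d l x = l
      · rw [if_pos h, mul_one]
        simp only [Complex.sub_im, Complex.neg_im]
        linarith
      · rw [if_neg h]
        simp only [mul_zero, Complex.sub_im, Complex.neg_im, Complex.zero_im]
        linarith
  have hdet : IsUnit M.det := (Matrix.isUnit_iff_isUnit_det M).mp hM
  have hinv : M⁻¹ * M = 1 := Matrix.nonsing_inv_mul M hdet
  have hu := mulVec_uvec (z := z) (Δ := Δ) hd hl hz hΔ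
  rw [← hMdef] at hu
  have h2 : M⁻¹ *ᵥ (M *ᵥ (fun x => Fseq d z Δ (l-1) (depthX d l x)))
      = (fun x => Fseq d z Δ (l-1) (depthX d l x)) := by
    rw [Matrix.mulVec_mulVec, hinv, Matrix.one_mulVec]
  rw [hu] at h2
  have h3 := congrFun h2 (rootX d l)
  rw [Matrix.mulVec_single] at h3; simp only [MulOpposite.op_one, one_smul] at h3
  exact h3
end Xexp
namespace Xexp

variable {z Δ msc : ℂ}

lemma msc_facts (hz : 0 < z.im) (hmsc : msc^2 + z*msc + 1 = 0) (him : 0 < msc.im) :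
    msc ≠ 0 ∧ ‖msc‖ ≤ 1 ∧ msc⁻¹ = -z - msc := by
  have h1 : msc * (-z - msc) = 1 := by linear_combination -hmsc
  have hne : msc ≠ 0 := by
    intro h
    rw [h, zero_mul] at h1
    exact zero_ne_one h1
  have hinv : msc⁻¹ = -z - msc := inv_eq_of_mul_eq_one_right h1
  have hzm_im : (-z - msc).im < 0 := by
    simp only [Complex.sub_im, Complex.neg_im]
    linarith
  have hzm_ne : (-z - msc) ≠ 0 := ne_zero_of_im_neg hzm_im
  have hmm : msc = (-z - msc)⁻¹ := by
    rw [← hinv, inv_inv]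
  have him2 : msc.im = (z.im + msc.im) / Complex.normSq (-z - msc) := by
    conv_lhs => rw [hmm]
    rw [Complex.inv_im]
    simp only [Complex.sub_im, Complex.neg_im]
    ring
  have hNpos : 0 < Complex.normSq (-z - msc) := Complex.normSq_pos.mpr hzm_ne
  have hN1 : 1 < Complex.normSq (-z - msc) := by
    rw [eq_div_iff (ne_of_gt hNpos)] at him2
    nlinarith
  have habs : ‖msc‖ ≤ 1 := by
    have hsq : ‖msc‖ ^ 2 * ‖-z - msc‖ ^ 2 = 1 := by
      rw [← mul_pow, ← norm_mul, h1]
      simp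
    have h2 : ‖-z - msc‖ ^ 2 = Complex.normSq (-z - msc) := Complex.sq_norm _
    nlinarith [norm_nonneg msc, norm_nonneg (-z - msc)]
  exact ⟨hne, habs, hinv⟩

lemma gseq_est {l : ℕ} (hz : 0 < z.im) (hΔ : 0 < Δ.im)
    (hmsc : msc^2 + z*msc + 1 = 0) (him : 0 < msc.im) (hl : 1 ≤ l)
    (hr : (l:ℝ)^2 * ‖Δ - msc‖ ≤ 1/10) :
    ∀ n, n + 1 ≤ l →
      ‖gseq z Δ n - msc‖ ≤ 2 * ‖Δ - msc‖ ∧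
      ‖gseq z Δ n - msc - msc^(2*n+2) * (Δ - msc)‖
        ≤ (8*(n:ℝ)+2) * ‖Δ - msc‖^2 := by
  obtain ⟨hne, habs, hinv⟩ := msc_facts hz hmsc him
  have hm0 : 0 ≤ ‖msc‖ := norm_nonneg _
  have habs2 : ‖msc‖ ^ 2 ≤ 1 := pow_le_one₀ hm0 habs
  set r := ‖Δ - msc‖ with hrdef
  have hr0 : 0 ≤ r := norm_nonneg _
  have hl2 : (1:ℝ) ≤ (l:ℝ) := by exact_mod_cast hl
  have hl2sq : (1:ℝ) ≤ (l:ℝ)^2 := by nlinarith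
  have hllsq : (l:ℝ) ≤ (l:ℝ)^2 := by nlinarith
  have hrs : r ≤ 1/10 := by
    have := mul_le_mul_of_nonneg_right hl2sq hr0
    linarith
  have hlr : (l:ℝ) * r ≤ 1/10 := by
    have := mul_le_mul_of_nonneg_right hllsq hr0
    linarith
  intro n
  induction n with
  | zero =>
    intro h1l
    have hden : (-z - Δ) ≠ 0 := ne_zero_of_im_neg
      (by simp only [Complex.sub_im, Complex.neg_im]; linarith)
    have hg0 : gseq z Δ 0 * (-z - Δ) = 1 := by
      rw [gseq]; exact inv_mul_cancel₀ hden
    have hE : gseq z Δ 0 - msc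
        = msc^2 * (Δ - msc) + msc * (Δ - msc) * (gseq z Δ 0 - msc) := by
      linear_combination msc * hg0 + gseq z Δ 0 * hmsc
    set e := gseq z Δ 0 - msc with hedef
    have he0' : 0 ≤ ‖e‖ := norm_nonneg _
    have he0 : ‖e‖ ≤ r + r * ‖e‖ := by
      have s1 : ‖msc‖^2 * r ≤ 1 * r := mul_le_mul_of_nonneg_right habs2 hr0
      have s2 : ‖msc‖ * r * ‖e‖ ≤ 1 * r * ‖e‖ :=
        mul_le_mul_of_nonneg_right (mul_le_mul_of_nonneg_right habs hr0) he0'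
      calc ‖e‖ = ‖msc^2 * (Δ - msc) + msc * (Δ - msc) * e‖ := by rw [← hE]
        _ ≤ ‖msc^2 * (Δ - msc)‖ + ‖msc * (Δ - msc) * e‖ :=
            norm_add_le _ _
        _ = ‖msc‖^2 * r + ‖msc‖ * r * ‖e‖ := by
            rw [norm_mul, norm_mul, norm_mul, norm_pow]
        _ ≤ r + r * ‖e‖ := by linarith
    have heb : ‖e‖ ≤ 2 * r := by
      have s3 : r * ‖e‖ ≤ (1/10) * ‖e‖ :=
        mul_le_mul_of_nonneg_right hrs he0'
      linarith
    refine ⟨heb, ?_⟩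
    have hid : gseq z Δ 0 - msc - msc^(2*0+2) * (Δ - msc) = msc * (Δ - msc) * e := by
      rw [← hedef]
      linear_combination hE
    rw [hid, norm_mul, norm_mul]
    have s4 : ‖msc‖ * r * ‖e‖ ≤ 1 * r * (2 * r) :=
      mul_le_mul (mul_le_mul_of_nonneg_right habs hr0) heb he0'
        (by positivity)
    calc ‖msc‖ * ‖Δ - msc‖ * ‖e‖
        = ‖msc‖ * r * ‖e‖ := by rw [← hrdef]
      _ ≤ 1 * r * (2 * r) := s4
      _ ≤ (8*((0:ℕ):ℝ)+2) * r^2 := by norm_num; nlinarith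
  | succ n ih =>
    intro hn2
    obtain ⟨ih1, ih2⟩ := ih (by omega)
    set e := gseq z Δ n - msc with hedef
    set e' := gseq z Δ (n+1) - msc with he'def
    have he0 : 0 ≤ ‖e‖ := norm_nonneg _
    have he0' : 0 ≤ ‖e'‖ := norm_nonneg _
    have hgim := gseq_im_pos hz hΔ (z := z) (Δ := Δ) n
    have hden : (-z - gseq z Δ n) ≠ 0 := ne_zero_of_im_neg
      (by simp only [Complex.sub_im, Complex.neg_im]; linarith)
    have hg' : gseq z Δ (n+1) * (-z - gseq z Δ n) = 1 := by
      rw [gseq]; exact inv_mul_cancel₀ hden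
    have hE : e' = msc^2 * e + msc * e * e' := by
      rw [hedef, he'def]
      linear_combination msc * hg' + gseq z Δ (n+1) * hmsc
    have hme : ‖msc‖ * ‖e‖ ≤ 1/5 := by
      have := mul_le_mul habs ih1 he0 zero_le_one
      rw [one_mul] at this
      linarith
    have hcrude : ‖e'‖ ≤ 3 * r := by
      have h1 : ‖e'‖ ≤ ‖e‖ + ‖msc‖ * ‖e‖ * ‖e'‖ := by
        have s1 : ‖msc‖^2 * ‖e‖ ≤ 1 * ‖e‖ :=
          mul_le_mul_of_nonneg_right habs2 he0
        calc ‖e'‖ = ‖msc^2 * e + msc * e * e'‖ := by rw [← hE]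
          _ ≤ ‖msc^2 * e‖ + ‖msc * e * e'‖ := norm_add_le _ _
          _ = ‖msc‖^2 * ‖e‖ + ‖msc‖ * ‖e‖ * ‖e'‖ := by
              rw [norm_mul, norm_mul, norm_mul, norm_pow]
          _ ≤ ‖e‖ + ‖msc‖ * ‖e‖ * ‖e'‖ := by linarith
      have s2 : ‖msc‖ * ‖e‖ * ‖e'‖ ≤ (1/5) * ‖e'‖ :=
        mul_le_mul_of_nonneg_right hme he0'
      linarith
    have hmid : ‖e' - msc^(2*(n+1)+2) * (Δ - msc)‖
        ≤ (8*((n:ℝ)+1)+2) * r^2 := by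
      have hid : e' - msc^(2*(n+1)+2) * (Δ - msc)
          = msc * e * e' + msc^2 * (e - msc^(2*n+2) * (Δ - msc)) := by
        have hpow : msc^(2*(n+1)+2) = msc^2 * msc^(2*n+2) := by
          rw [← pow_add]
          congr 1
          omega
        rw [hpow]
        linear_combination hE
      have t1 : ‖msc‖ * ‖e‖ * ‖e'‖ ≤ 1 * (2*r) * (3*r) :=
        mul_le_mul (mul_le_mul habs ih1 he0 zero_le_one) hcrude he0' (by positivity)
      have t2 : ‖msc‖^2 * ‖e - msc^(2*n+2) * (Δ - msc)‖
          ≤ 1 * ((8*(n:ℝ)+2) * r^2) :=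
        mul_le_mul habs2 ih2 (norm_nonneg _) zero_le_one
      calc ‖e' - msc^(2*(n+1)+2) * (Δ - msc)‖
          = ‖msc * e * e' + msc^2 * (e - msc^(2*n+2) * (Δ - msc))‖ := by rw [hid]
        _ ≤ ‖msc * e * e'‖ + ‖msc^2 * (e - msc^(2*n+2) * (Δ - msc))‖ :=
            norm_add_le _ _
        _ = ‖msc‖ * ‖e‖ * ‖e'‖
            + ‖msc‖^2 * ‖e - msc^(2*n+2) * (Δ - msc)‖ := by
            rw [norm_mul, norm_mul, norm_mul, norm_pow]
        _ ≤ (8*((n:ℝ)+1)+2) * r^2 := by nlinarith [sq_nonneg r]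
    constructor
    · -- first bound from refined one
      have habspow : ‖msc^(2*(n+1)+2) * (Δ - msc)‖ ≤ r := by
        rw [norm_mul, norm_pow]
        have := mul_le_mul_of_nonneg_right
          (pow_le_one₀ hm0 habs (n := 2*(n+1)+2)) hr0
        linarith
      have htri : ‖e'‖ ≤ ‖e' - msc^(2*(n+1)+2) * (Δ - msc)‖
          + ‖msc^(2*(n+1)+2) * (Δ - msc)‖ := by
        have := norm_add_le (e' - msc^(2*(n+1)+2) * (Δ - msc))
          (msc^(2*(n+1)+2) * (Δ - msc))
        simpa using this
      have hnl : (8*((n:ℝ)+1)+2) ≤ 8*(l:ℝ) := by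
        have : ((n:ℝ)+2) ≤ (l:ℝ) := by exact_mod_cast hn2
        linarith
      have c1 : (8*((n:ℝ)+1)+2) * r^2 ≤ (8*(l:ℝ)) * r^2 :=
        mul_le_mul_of_nonneg_right hnl (sq_nonneg r)
      have c2 : (8*(l:ℝ)) * r^2 ≤ (8/10) * r := by
        have h8 : 8*((l:ℝ)*r) ≤ 8/10 := by linarith
        calc (8*(l:ℝ)) * r^2 = (8*((l:ℝ)*r)) * r := by ring
          _ ≤ (8/10) * r := mul_le_mul_of_nonneg_right h8 hr0
      linarith
    · have : (8*((n:ℝ)+1)+2) = (8*(((n+1):ℕ):ℝ)+2) := by push_cast; ring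
      rw [← this]
      exact hmid

end Xexp
namespace Xexp

set_option maxHeartbeats 2000000 in
lemma final_est {z Δ msc : ℂ} {d l : ℕ} (hd : 3 ≤ d) (hl : 1 ≤ l)
    (hz : 0 < z.im) (hΔ : 0 < Δ.im) (hmsc : msc^2 + z*msc + 1 = 0) (him : 0 < msc.im)
    (hr : (l:ℝ)^2 * ‖Δ - msc‖ ≤ 1/10) :
    ‖Fseq d z Δ (l-1) 0 - (-z - ((d:ℂ)/((d:ℂ)-1))*msc)⁻¹
      - ((d:ℂ)/((d:ℂ)-1)) * ((-z - ((d:ℂ)/((d:ℂ)-1))*msc)⁻¹)^2 * msc^(2*l) * (Δ - msc)‖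
      ≤ 1000 * (l:ℝ)^3 * ‖Δ - msc‖^2 := by
  obtain ⟨hne, habs, hinv⟩ := msc_facts hz hmsc him
  have hm0 : 0 ≤ ‖msc‖ := norm_nonneg _
  set k := l - 1 with hk
  have hk1 : k + 1 = l := by omega
  obtain ⟨he1, he2'⟩ := gseq_est hz hΔ hmsc him hl hr k (by omega)
  set δ := Δ - msc with hδdef
  set r := ‖δ‖ with hrdef
  have hr0 : 0 ≤ r := norm_nonneg _
  have hl2 : (1:ℝ) ≤ (l:ℝ) := by exact_mod_cast hl
  have hl2sq : (1:ℝ) ≤ (l:ℝ)^2 := by nlinarith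
  have hllsq : (l:ℝ) ≤ (l:ℝ)^2 := by nlinarith
  have hrs : r ≤ 1/10 := by
    have := mul_le_mul_of_nonneg_right hl2sq hr0
    linarith
  have hlrr : (l:ℝ) * r ≤ 1/10 := by
    have := mul_le_mul_of_nonneg_right hllsq hr0
    linarith
  set g := gseq z Δ k with hgdef
  set e := g - msc with hedef
  have he0 : 0 ≤ ‖e‖ := norm_nonneg _
  have hpowidx : 2*k+2 = 2*l := by omega
  rw [hpowidx] at he2'
  have hkl : ((k:ℝ)+1) = (l:ℝ) := by exact_mod_cast hk1
  have he2 : ‖e - msc^(2*l) * δ‖ ≤ 8*(l:ℝ)*r^2 := by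
    refine le_trans he2' (mul_le_mul_of_nonneg_right ?_ (sq_nonneg r))
    linarith
  set t := ((d:ℂ)/((d:ℂ)-1)) with htdef
  have hdR := dR_pos hd
  have hd3 : (3:ℝ) ≤ (d:ℝ) := by exact_mod_cast hd
  have htr : t = (((d:ℝ)/((d:ℝ)-1) : ℝ) : ℂ) := by rw [htdef]; push_cast; ring
  have htrv : (1:ℝ) ≤ (d:ℝ)/((d:ℝ)-1) := by
    rw [le_div_iff₀ hdR]; linarith
  have htrv2 : (d:ℝ)/((d:ℝ)-1) ≤ 3/2 := by
    rw [div_le_iff₀ hdR]; linarith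
  have habs_t : ‖t‖ ≤ 3/2 := by
    rw [htr, Complex.norm_real, Real.norm_eq_abs, abs_of_nonneg (by linarith)]
    exact htrv2
  have ht0 : 0 ≤ ‖t‖ := norm_nonneg _
  have habs_t1 : ‖t - 1‖ ≤ 1/2 := by
    have : t - 1 = (((d:ℝ)/((d:ℝ)-1) - 1 : ℝ) : ℂ) := by rw [htr]; push_cast; ring
    rw [this, Complex.norm_real, Real.norm_eq_abs, abs_of_nonneg (by linarith)]
    linarith
  set b := -z - t*msc with hbdef
  have hbid : b = msc⁻¹ - (t-1)*msc := by rw [hbdef, hinv]; ring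
  have hmp : 0 < ‖msc‖ := (norm_pos_iff.mpr hne)
  have habsinv : 1 ≤ ‖msc⁻¹‖ := by
    rw [norm_inv]
    exact (one_le_inv₀ hmp).mpr habs
  have htm : ‖(t-1)*msc‖ ≤ 1/2 := by
    rw [norm_mul]
    calc ‖t-1‖ * ‖msc‖ ≤ (1/2) * 1 :=
      mul_le_mul habs_t1 habs hm0 (by norm_num)
    _ = 1/2 := by norm_num
  have hb_lb : 1/2 ≤ ‖b‖ := by
    have hsum : b + (t-1)*msc = msc⁻¹ := by rw [hbid]; ring
    have := norm_add_le b ((t-1)*msc)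
    rw [hsum] at this
    linarith
  have hbpos : 0 < ‖b‖ := lt_of_lt_of_le (by norm_num) hb_lb
  have hb_ne : b ≠ 0 := fun h => by rw [h] at hbpos; simp at hbpos
  set md := b⁻¹ with hmddef
  have hmd_le : ‖md‖ ≤ 2 := by
    rw [hmddef, norm_inv]
    have h2 := inv_anti₀ (by norm_num : (0:ℝ) < 1/2) hb_lb
    norm_num at h2
    linarith
  have hmd0 : 0 ≤ ‖md‖ := norm_nonneg _
  set b' := -z - t * g with hb'def
  have hb'_ne : b' ≠ 0 := by
    rw [hb'def, htdef, hgdef]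
    exact root_denom_ne hd hz hΔ
  have hb'id : b' = b - t*e := by rw [hb'def, hbdef, hedef]; ring
  have hte : ‖t*e‖ ≤ 3*r := by
    rw [norm_mul]
    calc ‖t‖ * ‖e‖ ≤ (3/2) * (2*r) :=
      mul_le_mul habs_t he1 he0 (by norm_num)
    _ = 3*r := by ring
  have hb'_lb : 1/5 ≤ ‖b'‖ := by
    have hsum : b' + t*e = b := by rw [hb'id]; ring
    have := norm_add_le b' (t*e)
    rw [hsum] at this
    linarith
  have hb'pos : 0 < ‖b'‖ := lt_of_lt_of_le (by norm_num) hb'_lb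
  set X := b'⁻¹ with hXdef
  have hX_le : ‖X‖ ≤ 5 := by
    rw [hXdef, norm_inv]
    have h2 := inv_anti₀ (by norm_num : (0:ℝ) < 1/5) hb'_lb
    norm_num at h2
    linarith
  have hX0 : 0 ≤ ‖X‖ := norm_nonneg _
  have hX1 : X * b' = 1 := inv_mul_cancel₀ hb'_ne
  have hmd1 : md * b = 1 := inv_mul_cancel₀ hb_ne
  have hXmd : X - md = t * e * X * md := by
    linear_combination md * hX1 - X * hmd1 - X * md * hb'id
  have hXmd_le : ‖X - md‖ ≤ 30*r := by
    rw [hXmd, norm_mul, norm_mul, norm_mul]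
    calc ‖t‖ * ‖e‖ * ‖X‖ * ‖md‖
        ≤ ((3/2) * (2*r) * 5) * 2 := by
          refine mul_le_mul ?_ hmd_le hmd0 (by positivity)
          refine mul_le_mul ?_ hX_le hX0 (by positivity)
          exact mul_le_mul habs_t he1 he0 (by norm_num)
      _ = 30*r := by ring
  have hT : X - md - t*md^2*msc^(2*l)*δ
      = t*md*e*(X - md) + t*md^2*(e - msc^(2*l)*δ) := by
    linear_combination hXmd
  have hfirst : ‖t*md*e*(X - md)‖ ≤ 180*r^2 := by
    rw [norm_mul, norm_mul, norm_mul]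
    calc ‖t‖ * ‖md‖ * ‖e‖ * ‖X - md‖
        ≤ ((3/2) * 2 * (2*r)) * (30*r) := by
          refine mul_le_mul ?_ hXmd_le (norm_nonneg _) (by positivity)
          refine mul_le_mul ?_ he1 he0 (by positivity)
          exact mul_le_mul habs_t hmd_le hmd0 (by norm_num)
      _ = 180*r^2 := by ring
  have hsecond : ‖t*md^2*(e - msc^(2*l)*δ)‖ ≤ 48*(l:ℝ)*r^2 := by
    rw [norm_mul, norm_mul, norm_pow]
    have hmd2 : ‖md‖^2 ≤ 4 := by nlinarith
    calc ‖t‖ * ‖md‖^2 * ‖e - msc^(2*l)*δ‖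
        ≤ ((3/2) * 4) * (8*(l:ℝ)*r^2) := by
          refine mul_le_mul ?_ he2 (norm_nonneg _) (by norm_num)
          exact mul_le_mul habs_t hmd2 (by positivity) (by norm_num)
      _ = 48*(l:ℝ)*r^2 := by ring
  calc ‖X - md - t*md^2*msc^(2*l)*δ‖
      = ‖t*md*e*(X - md) + t*md^2*(e - msc^(2*l)*δ)‖ := by rw [hT]
    _ ≤ ‖t*md*e*(X - md)‖ + ‖t*md^2*(e - msc^(2*l)*δ)‖ :=
        norm_add_le _ _
    _ ≤ 180*r^2 + 48*(l:ℝ)*r^2 := by linarith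
    _ ≤ 1000 * (l:ℝ)^3 * r^2 := by
        have hc1 : (1:ℝ) ≤ (l:ℝ)^3 := by nlinarith
        have hc2 : (l:ℝ) ≤ (l:ℝ)^3 := by nlinarith
        have hb1 : 180*r^2 ≤ 180*((l:ℝ)^3*r^2) := by
          have := mul_le_mul_of_nonneg_right hc1 (sq_nonneg r)
          linarith
        have hb2 : 48*(l:ℝ)*r^2 ≤ 48*((l:ℝ)^3*r^2) := by
          have := mul_le_mul_of_nonneg_right hc2 (sq_nonneg r)
          linarith
        have hnn : (0:ℝ) ≤ (l:ℝ)^3*r^2 := by positivity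
        have hq : 1000 * (l:ℝ)^3 * r^2 = 1000*((l:ℝ)^3*r^2) := by ring
        rw [hq]
        linarith

end Xexp

/-- **Linear expansion of `X_ℓ(Δ,z)` around `m_sc(z)`.** Fix `d ≥ 3`. There are constants
`c, C > 0` depending only on `d` such that for all `ℓ ≥ 1`, `z ∈ ℂ` with `Im z > 0` (with
`m_sc(z)` the unique root of `m² + z m + 1 = 0` with positive imaginary part and
`m_d(z) = 1/(-z - (d/(d-1)) m_sc(z))`), and all `Δ` with `Im Δ > 0` and
`ℓ² |Δ - m_sc(z)| ≤ c`, the quantity `X_ℓ(Δ,z) := ((H_{𝒳_ℓ} - z·I - Δ·𝕀∂)⁻¹)_{oo}`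
satisfies `|X_ℓ(Δ,z) - m_d - (d/(d-1)) m_d² m_sc^{2ℓ} (Δ - m_sc)| ≤ C ℓ³ |Δ - m_sc|²`. -/
theorem X_expansion (d : ℕ) (hd : 3 ≤ d) :
    ∃ c C : ℝ, 0 < c ∧ 0 < C ∧
      ∀ (ℓ : ℕ), 1 ≤ ℓ →
      ∀ (z msc Δ : ℂ), 0 < z.im → msc ^ 2 + z * msc + 1 = 0 → 0 < msc.im → 0 < Δ.im →
        (ℓ : ℝ) ^ 2 * ‖Δ - msc‖ ≤ c →
        ‖(((HmatX d ℓ - z • 1 - Δ • IbdX d ℓ)⁻¹) (rootX d ℓ) (rootX d ℓ)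
              - (-z - ((d : ℂ) / ((d : ℂ) - 1)) * msc)⁻¹
              - ((d : ℂ) / ((d : ℂ) - 1)) * ((-z - ((d : ℂ) / ((d : ℂ) - 1)) * msc)⁻¹) ^ 2 *
                  msc ^ (2 * ℓ) * (Δ - msc))‖ ≤
          C * (ℓ : ℝ) ^ 3 * ‖Δ - msc‖ ^ 2 := by
  
  refine ⟨1/10, 1000, by norm_num, by norm_num, ?_⟩
  intro l hl z msc Δ hz hmsc him hΔ hr
  rw [Xexp.inv_entry hd hl hz hΔ]
  exact Xexp.final_est hd hl hz hΔ hmsc him hr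
end
end

section
/- Fix an integer d ≥ 3. There exist constants c, C > 0 depending only on d such that for all integers ℓ ≥ 1, all z ∈ ℂ with Im z > 0, and all Δ, Δ′ ∈ ℂ with Im Δ > 0, Im Δ′ > 0, ℓ²·|Δ − m_sc(z)| ≤ c and ℓ²·|Δ′ − m_sc(z)| ≤ c, one has |Y_ℓ(Δ,z) − Y_ℓ(Δ′,z)| ≤ C·ℓ·|Δ − Δ′|, where Y_ℓ(Δ,z) := ((H_{𝒴_ℓ} − z·I − Δ·𝕀∂)⁻¹)_{oo}. -/
open scoped Classical

noncomputable section

/-- The Möbius iteration `w₀ = Δ`, `w_{n+1} = -(z+w_n)⁻¹`. -/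
def Wseq (z Δ : ℂ) : ℕ → ℂ
  | 0 => Δ
  | n + 1 => -(z + Wseq z Δ n)⁻¹

lemma Wseq_im_pos {z Δ : ℂ} (hz : 0 < z.im) (hΔ : 0 < Δ.im) :
    ∀ n, 0 < (Wseq z Δ n).im
  | 0 => hΔ
  | n + 1 => by
    have h := Wseq_im_pos hz hΔ n
    have him : 0 < (z + Wseq z Δ n).im := by simp [Complex.add_im]; linarith
    have hne : z + Wseq z Δ n ≠ 0 := fun h0 => by simp [h0] at him
    have : 0 < Complex.normSq (z + Wseq z Δ n) := Complex.normSq_pos.2 hne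
    show 0 < (-(z + Wseq z Δ n)⁻¹).im
    rw [Complex.neg_im, Complex.inv_im, neg_div, neg_neg]
    positivity

lemma Wseq_add_ne {z Δ : ℂ} (hz : 0 < z.im) (hΔ : 0 < Δ.im) (n : ℕ) :
    z + Wseq z Δ n ≠ 0 := by
  have h := Wseq_im_pos hz hΔ n
  intro h0
  have : (z + Wseq z Δ n).im = 0 := by rw [h0]; rfl
  rw [Complex.add_im] at this; linarith

lemma Wseq_ne_zero {z Δ : ℂ} (hz : 0 < z.im) (hΔ : 0 < Δ.im) (n : ℕ) :
    Wseq z Δ n ≠ 0 := by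
  have h := Wseq_im_pos hz hΔ n
  intro h0; rw [h0] at h; simp at h

lemma Wseq_step {z Δ : ℂ} (hz : 0 < z.im) (hΔ : 0 < Δ.im) (n : ℕ) :
    Wseq z Δ (n + 1) * (z + Wseq z Δ n) = -1 := by
  show -(z + Wseq z Δ n)⁻¹ * (z + Wseq z Δ n) = -1
  field_simp [Wseq_add_ne hz hΔ n]

/-- difference of two iterations -/
lemma Wseq_diff {z Δ Δ' : ℂ} (hz : 0 < z.im) (hΔ : 0 < Δ.im) (hΔ' : 0 < Δ'.im) (n : ℕ) :
    Wseq z Δ (n + 1) - Wseq z Δ' (n + 1)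
      = (Wseq z Δ n - Wseq z Δ' n) * (Wseq z Δ (n + 1) * Wseq z Δ' (n + 1)) := by
  have ha := Wseq_add_ne hz hΔ n
  have hb := Wseq_add_ne hz hΔ' n
  show -(z + Wseq z Δ n)⁻¹ - -(z + Wseq z Δ' n)⁻¹
      = (Wseq z Δ n - Wseq z Δ' n) * (-(z + Wseq z Δ n)⁻¹ * -(z + Wseq z Δ' n)⁻¹)
  field_simp
  ring

lemma Wseq_telescope {z Δ Δ' : ℂ} (hz : 0 < z.im) (hΔ : 0 < Δ.im) (hΔ' : 0 < Δ'.im) (N : ℕ) :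
    Wseq z Δ N - Wseq z Δ' N
      = (Δ - Δ') * ∏ j ∈ Finset.range N, (Wseq z Δ (j + 1) * Wseq z Δ' (j + 1)) := by
  induction N with
  | zero => simp [Wseq]
  | succ n ih =>
      rw [Finset.prod_range_succ, Wseq_diff hz hΔ hΔ' n, ih]; ring

/-- the fixed point relation for msc, and the contraction step towards it -/
lemma Wseq_sub_msc {z Δ msc : ℂ} (hz : 0 < z.im) (hΔ : 0 < Δ.im)
    (hmsc : msc ^ 2 + z * msc + 1 = 0) (hmi : 0 < msc.im) (n : ℕ) :
    Wseq z Δ (n + 1) - msc = (Wseq z Δ n - msc) * (Wseq z Δ (n + 1) * msc) := by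
  have ha := Wseq_add_ne hz hΔ n
  have hmz : msc * (z + msc) = -1 := by linear_combination hmsc
  have hzm : z + msc ≠ 0 := by
    intro h0; rw [h0, mul_zero] at hmz; exact absurd hmz (by norm_num)
  show -(z + Wseq z Δ n)⁻¹ - msc = (Wseq z Δ n - msc) * (-(z + Wseq z Δ n)⁻¹ * msc)
  field_simp
  linear_combination -hmsc

lemma msc_abs_lt_one {z msc : ℂ} (hz : 0 < z.im)
    (hmsc : msc ^ 2 + z * msc + 1 = 0) (hmi : 0 < msc.im) : ‖msc‖ < 1 := by
  have hmz : msc * (z + msc) = -1 := by linear_combination hmsc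
  have hzm : z + msc ≠ 0 := by
    intro h0; rw [h0, mul_zero] at hmz; exact absurd hmz (by norm_num)
  have hq : 0 < Complex.normSq (z + msc) := Complex.normSq_pos.2 hzm
  have hmeq : msc = -(z + msc)⁻¹ := by field_simp; linear_combination hmsc
  have him : msc.im * Complex.normSq (z + msc) = z.im + msc.im := by
    have h : msc.im = (z.im + msc.im) / Complex.normSq (z + msc) := by
      conv_lhs => rw [hmeq]
      rw [Complex.neg_im, Complex.inv_im, neg_div, neg_neg, Complex.add_im]
    have h2 := congrArg (fun t => t * Complex.normSq (z + msc)) h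
    simpa [div_mul_cancel₀, hq.ne'] using h2
  have hq1 : 1 < Complex.normSq (z + msc) := by nlinarith
  have hns : Complex.normSq msc < 1 := by
    rw [hmeq]
    rw [Complex.normSq_neg, Complex.normSq_inv]
    rw [inv_lt_one_iff₀]; right; exact hq1
  have := Complex.sq_norm msc
  nlinarith [norm_nonneg msc]

/-- key distance bound. -/
lemma Wseq_close {z Δ msc : ℂ} {ℓ : ℕ} (hz : 0 < z.im) (hΔ : 0 < Δ.im)
    (hmsc : msc ^ 2 + z * msc + 1 = 0) (hmi : 0 < msc.im) (hℓ : 1 ≤ ℓ)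
    (hc : (ℓ : ℝ) ^ 2 * ‖Δ - msc‖ ≤ 1/4) :
    ∀ j ≤ ℓ + 1, ‖Wseq z Δ j - msc‖ ≤ 1 / (2 * (ℓ:ℝ)^2) := by
  set δ0 := ‖Δ - msc‖ with hδ0def
  have hℓR : (1:ℝ) ≤ (ℓ:ℝ) := by exact_mod_cast hℓ
  have hℓ2 : (1:ℝ) ≤ (ℓ:ℝ)^2 := by nlinarith
  have hδ0 : δ0 ≤ 1 / (4 * (ℓ:ℝ)^2) := by
    rw [le_div_iff₀ (by positivity)]; linarith [hc]
  have hδ0nn : 0 ≤ δ0 := norm_nonneg _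
  have hmabs : ‖msc‖ ≤ 1 := le_of_lt (msc_abs_lt_one hz hmsc hmi)
  -- recursion inequality
  have hrec : ∀ j, ‖Wseq z Δ (j+1) - msc‖
      ≤ ‖Wseq z Δ j - msc‖ * (1 + ‖Wseq z Δ (j+1) - msc‖) := by
    intro j
    have h1 := Wseq_sub_msc hz hΔ hmsc hmi j
    have h2 : ‖Wseq z Δ (j+1) - msc‖
        = ‖Wseq z Δ j - msc‖ * (‖Wseq z Δ (j+1)‖ * ‖msc‖) := by
      rw [h1, norm_mul, norm_mul]
    have h3 : ‖Wseq z Δ (j+1)‖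
        ≤ 1 + ‖Wseq z Δ (j+1) - msc‖ := by
      calc ‖Wseq z Δ (j+1)‖ = ‖msc + (Wseq z Δ (j+1) - msc)‖ := by ring_nf
        _ ≤ ‖msc‖ + ‖Wseq z Δ (j+1) - msc‖ := norm_add_le _ _
        _ ≤ 1 + ‖Wseq z Δ (j+1) - msc‖ := by linarith
    have ha0 := norm_nonneg (Wseq z Δ j - msc)
    have hM0 := norm_nonneg msc
    have hb0 := norm_nonneg (Wseq z Δ (j+1) - msc)
    calc ‖Wseq z Δ (j+1) - msc‖
        = ‖Wseq z Δ j - msc‖ * (‖Wseq z Δ (j+1)‖ * ‖msc‖) := h2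
      _ ≤ ‖Wseq z Δ j - msc‖ * ((1 + ‖Wseq z Δ (j+1) - msc‖) * 1) := by
          apply mul_le_mul_of_nonneg_left _ ha0
          exact mul_le_mul h3 hmabs hM0 (by linarith)
      _ = ‖Wseq z Δ j - msc‖ * (1 + ‖Wseq z Δ (j+1) - msc‖) := by ring
  -- the invariant
  have hhalf : ∀ j, j ≤ ℓ + 1 → (j:ℝ) * δ0 ≤ 1/2 := by
    intro j hj
    have : (j:ℝ) ≤ (ℓ:ℝ) + 1 := by exact_mod_cast hj
    have h2ℓ : (ℓ:ℝ) + 1 ≤ 2 * (ℓ:ℝ)^2 := by nlinarith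
    calc (j:ℝ) * δ0 ≤ (2 * (ℓ:ℝ)^2) * δ0 := by nlinarith
      _ ≤ (2 * (ℓ:ℝ)^2) * (1 / (4 * (ℓ:ℝ)^2)) := by nlinarith
      _ = 1/2 := by field_simp; ring
  have hinv : ∀ j, j ≤ ℓ + 1 → ‖Wseq z Δ j - msc‖ * (1 - (j:ℝ) * δ0) ≤ δ0 := by
    intro j
    induction j with
    | zero =>
        intro _
        simp only [Nat.cast_zero, zero_mul, sub_zero, mul_one]
        exact le_of_eq hδ0def.symm
    | succ n ih =>
        intro hn
        have hn' : n ≤ ℓ + 1 := by omega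
        have hQ := ih hn'
        have hrecn := hrec n
        have hh := hhalf n hn'
        have hh1 := hhalf (n+1) hn
        set a := ‖Wseq z Δ n - msc‖ with ha
        set b := ‖Wseq z Δ (n+1) - msc‖ with hb
        have hann : 0 ≤ a := norm_nonneg _
        have hbnn : 0 ≤ b := norm_nonneg _
        have h3 : 0 ≤ 1 - (n:ℝ) * δ0 := by linarith
        have hcast : ((n+1 : ℕ):ℝ) = (n:ℝ) + 1 := by push_cast; ring
        rw [hcast]
        -- b(1-(n+1)δ0) ≤ δ0
        nlinarith [mul_le_mul_of_nonneg_right hrecn h3, mul_le_mul_of_nonneg_left hQ hbnn]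
  intro j hj
  have h1 := hinv j hj
  have h2 := hhalf j hj
  have h3 : (1:ℝ)/2 ≤ 1 - (j:ℝ)*δ0 := by linarith
  have hann := norm_nonneg (Wseq z Δ j - msc)
  have ha2 : ‖Wseq z Δ j - msc‖ ≤ 2 * δ0 := by
    nlinarith [mul_le_mul_of_nonneg_left h3 hann]
  rw [le_div_iff₀ (by positivity)]
  nlinarith [mul_le_mul_of_nonneg_right ha2 (le_trans zero_le_one hℓ2)]
lemma Y_diff_bound {z Δ Δ' msc : ℂ} {ℓ : ℕ} (hz : 0 < z.im) (hΔ : 0 < Δ.im) (hΔ' : 0 < Δ'.im)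
    (hmsc : msc ^ 2 + z * msc + 1 = 0) (hmi : 0 < msc.im) (hℓ : 1 ≤ ℓ)
    (hc : (ℓ : ℝ) ^ 2 * ‖Δ - msc‖ ≤ 1/4)
    (hc' : (ℓ : ℝ) ^ 2 * ‖Δ' - msc‖ ≤ 1/4) :
    ‖Wseq z Δ (ℓ + 1) - Wseq z Δ' (ℓ + 1)‖ ≤ 9 * ‖Δ - Δ'‖ := by
  have hℓR : (1:ℝ) ≤ (ℓ:ℝ) := by exact_mod_cast hℓ
  have hℓ2 : (1:ℝ) ≤ (ℓ:ℝ)^2 := by nlinarith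
  set t : ℝ := 1 / (2 * (ℓ:ℝ)^2) with ht
  have htnn : 0 ≤ t := by positivity
  have hmabs := le_of_lt (msc_abs_lt_one hz hmsc hmi)
  have hW : ∀ j ≤ ℓ + 1, ‖Wseq z Δ j‖ ≤ 1 + t := by
    intro j hj
    calc ‖Wseq z Δ j‖ = ‖msc + (Wseq z Δ j - msc)‖ := by ring_nf
      _ ≤ ‖msc‖ + ‖Wseq z Δ j - msc‖ := norm_add_le _ _
      _ ≤ 1 + t := add_le_add hmabs (Wseq_close hz hΔ hmsc hmi hℓ hc j hj)
  have hW' : ∀ j ≤ ℓ + 1, ‖Wseq z Δ' j‖ ≤ 1 + t := by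
    intro j hj
    calc ‖Wseq z Δ' j‖ = ‖msc + (Wseq z Δ' j - msc)‖ := by ring_nf
      _ ≤ ‖msc‖ + ‖Wseq z Δ' j - msc‖ := norm_add_le _ _
      _ ≤ 1 + t := add_le_add hmabs (Wseq_close hz hΔ' hmsc hmi hℓ hc' j hj)
  rw [Wseq_telescope hz hΔ hΔ' (ℓ + 1), norm_mul]
  rw [mul_comm (9:ℝ) _]
  apply mul_le_mul_of_nonneg_left _ (norm_nonneg _)
  -- bound the product
  rw [norm_prod]
  calc (∏ j ∈ Finset.range (ℓ + 1), ‖Wseq z Δ (j+1) * Wseq z Δ' (j+1)‖)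
      ≤ ∏ j ∈ Finset.range (ℓ + 1), (1 + t)^2 := by
        apply Finset.prod_le_prod
        · intro j _; exact norm_nonneg _
        · intro j hj
          rw [Finset.mem_range] at hj
          have hj1 : j + 1 ≤ ℓ + 1 := by omega
          rw [norm_mul, sq]
          exact mul_le_mul (hW _ hj1) (hW' _ hj1) (norm_nonneg _) (by positivity)
    _ = (1 + t) ^ (2 * (ℓ + 1)) := by
        rw [Finset.prod_const, Finset.card_range, ← pow_mul, mul_comm 2]
    _ ≤ (Real.exp t) ^ (2 * (ℓ + 1)) := by
        apply pow_le_pow_left₀ (by positivity)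
        linarith [Real.add_one_le_exp t]
    _ = Real.exp ((2 * (ℓ + 1) : ℕ) * t) := by rw [← Real.exp_nat_mul]
    _ ≤ Real.exp 2 := by
        apply Real.exp_le_exp.2
        have h1 : ((2 * (ℓ + 1) : ℕ) : ℝ) = 2 * ((ℓ:ℝ) + 1) := by push_cast; ring
        rw [h1, ht]
        have h2 : (ℓ:ℝ) + 1 ≤ 2 * (ℓ:ℝ)^2 := by nlinarith
        have h3 : 0 < 2 * (ℓ:ℝ)^2 := by positivity
        rw [mul_one_div, div_le_iff₀ h3]
        nlinarith
    _ ≤ 9 := by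
        have he : Real.exp 1 * Real.exp 1 = Real.exp 2 := by rw [← Real.exp_add]; norm_num
        nlinarith [Real.exp_one_lt_d9, Real.exp_pos 1, he]
lemma treeY_adj_iff {m ℓ : ℕ} (x y : TreeBallY m ℓ) :
    (treeGraphY m ℓ).Adj x y ↔ x ≠ y ∧
      ((∃ a : Fin m, y.1 = x.1 ++ [a]) ∨ (∃ a : Fin m, x.1 = y.1 ++ [a])) :=
  SimpleGraph.fromRel_adj _ x y

lemma treeY_walk_len {m ℓ : ℕ} {u v : TreeBallY m ℓ} (p : (treeGraphY m ℓ).Walk u v) :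
    v.1.length ≤ u.1.length + p.length := by
  induction p with
  | nil => simp
  | cons h p ih =>
      rename_i a b c
      rw [treeY_adj_iff] at h
      rcases h.2 with ⟨e, he⟩ | ⟨e, he⟩
      · have : b.1.length = a.1.length + 1 := by rw [he]; simp
        simp only [SimpleGraph.Walk.length_cons]
        omega
      · have : a.1.length = b.1.length + 1 := by rw [he]; simp
        simp only [SimpleGraph.Walk.length_cons]
        omega

lemma treeY_exists_walk {m ℓ : ℕ} (l : List (Fin m)) (h : l.length ≤ ℓ) :
    ∃ p : (treeGraphY m ℓ).Walk (rootY m ℓ) ⟨l, h⟩, p.length = l.length := by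
  induction l using List.reverseRecOn with
  | nil => exact ⟨SimpleGraph.Walk.nil, rfl⟩
  | append_singleton l a ih =>
      have hl : l.length ≤ ℓ := by simp at h; omega
      obtain ⟨p, hp⟩ := ih hl
      have hadj : (treeGraphY m ℓ).Adj ⟨l, hl⟩ ⟨l ++ [a], h⟩ := by
        apply (treeY_adj_iff _ _).2
        constructor
        · intro heq
          have := congrArg (fun t => t.1.length) heq
          simp at this
        · exact Or.inl ⟨a, rfl⟩
      exact ⟨p.concat hadj, (SimpleGraph.Walk.length_concat p hadj).trans (by rw [hp]; simp)⟩

lemma treeY_dist_root {m ℓ : ℕ} (x : TreeBallY m ℓ) :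
    (treeGraphY m ℓ).dist (rootY m ℓ) x = x.1.length := by
  obtain ⟨p, hp⟩ := treeY_exists_walk x.1 x.2
  apply le_antisymm
  · calc (treeGraphY m ℓ).dist (rootY m ℓ) x ≤ p.length := SimpleGraph.dist_le p
      _ = x.1.length := hp
  · have hr : (treeGraphY m ℓ).Reachable (rootY m ℓ) x := ⟨p⟩
    obtain ⟨q, hq⟩ := hr.exists_walk_length_eq_dist
    have := treeY_walk_len q
    rw [hq] at this; simpa [rootY] using this

/-- Sum over the neighbours of `x` of a function of the depth. -/
lemma treeY_adj_sum {m ℓ : ℕ} (x : TreeBallY m ℓ) (f : ℕ → ℂ) :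
    ∑ y : TreeBallY m ℓ, (if (treeGraphY m ℓ).Adj x y then f y.1.length else 0)
      = (if x.1.length = 0 then 0 else f (x.1.length - 1))
        + (if x.1.length < ℓ then (m : ℂ) * f (x.1.length + 1) else 0) := by
  have split : ∀ y : TreeBallY m ℓ,
      (if (treeGraphY m ℓ).Adj x y then f y.1.length else 0)
        = (if ∃ a : Fin m, x.1 = y.1 ++ [a] then f y.1.length else 0)
          + (if ∃ a : Fin m, y.1 = x.1 ++ [a] then f y.1.length else 0) := by
    intro y
    by_cases h1 : ∃ a : Fin m, x.1 = y.1 ++ [a]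
    · by_cases h2 : ∃ a : Fin m, y.1 = x.1 ++ [a]
      · exfalso
        obtain ⟨a, ha⟩ := h1; obtain ⟨b, hb⟩ := h2
        have := congrArg List.length ha
        rw [hb] at this; simp at this
      · have hadj : (treeGraphY m ℓ).Adj x y := by
          rw [treeY_adj_iff]
          refine ⟨?_, Or.inr h1⟩
          intro heq
          obtain ⟨a, ha⟩ := h1
          rw [heq] at ha
          have := congrArg List.length ha; simp at this
        simp [hadj, h1, h2]
    · by_cases h2 : ∃ a : Fin m, y.1 = x.1 ++ [a]
      · have hadj : (treeGraphY m ℓ).Adj x y := by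
          rw [treeY_adj_iff]
          refine ⟨?_, Or.inl h2⟩
          intro heq
          obtain ⟨a, ha⟩ := h2
          rw [heq] at ha
          have := congrArg List.length ha; simp at this
        simp [hadj, h1, h2]
      · have hadj : ¬ (treeGraphY m ℓ).Adj x y := by
          rw [treeY_adj_iff]; tauto
        simp [hadj, h1, h2]
  rw [Finset.sum_congr rfl (fun y _ => split y), Finset.sum_add_distrib]
  congr 1
  · -- parent sum
    by_cases hx : x.1.length = 0
    · have hnil : x.1 = [] := List.length_eq_zero_iff.1 hx
      rw [if_pos hx]
      apply Finset.sum_eq_zero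
      intro y _
      rw [if_neg]
      intro ⟨a, ha⟩
      rw [hnil] at ha
      exact (List.append_ne_nil_of_right_ne_nil y.1 (by simp) ha.symm)
    · rw [if_neg hx]
      have hne : x.1 ≠ [] := fun h => hx (by rw [h]; rfl)
      set p : TreeBallY m ℓ := ⟨x.1.dropLast, le_trans (by rw [List.length_dropLast]; omega) x.2⟩
        with hp
      have hcond : ∀ y : TreeBallY m ℓ, (∃ a : Fin m, x.1 = y.1 ++ [a]) ↔ y = p := by
        intro y
        constructor
        · rintro ⟨a, ha⟩
          apply Subtype.ext
          show y.1 = x.1.dropLast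
          rw [ha, List.dropLast_concat]
        · rintro rfl
          exact ⟨x.1.getLast hne, (List.dropLast_append_getLast hne).symm⟩
      calc ∑ y : TreeBallY m ℓ, (if ∃ a : Fin m, x.1 = y.1 ++ [a] then f y.1.length else 0)
          = ∑ y : TreeBallY m ℓ, (if y = p then f y.1.length else 0) :=
            Finset.sum_congr rfl (fun y _ => by rw [if_congr (hcond y) rfl rfl])
        _ = f p.1.length := by rw [Finset.sum_ite_eq' Finset.univ p]; simp
        _ = f (x.1.length - 1) := by rw [hp]; simp [List.length_dropLast]
  · -- children sum
    by_cases hx : x.1.length < ℓ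
    · rw [if_pos hx]
      set c : Fin m → TreeBallY m ℓ := fun a => ⟨x.1 ++ [a], by simp; omega⟩ with hc
      have hcinj : Function.Injective c := by
        intro a b hab
        have := congrArg (fun t => t.1) hab
        simp [hc] at this
        exact this
      have hcond : ∀ y : TreeBallY m ℓ, (∃ a : Fin m, y.1 = x.1 ++ [a]) ↔
          y ∈ Finset.univ.image c := by
        intro y
        rw [Finset.mem_image]
        constructor
        · rintro ⟨a, ha⟩; exact ⟨a, Finset.mem_univ a, Subtype.ext ha.symm⟩
        · rintro ⟨a, -, rfl⟩; exact ⟨a, rfl⟩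
      calc ∑ y : TreeBallY m ℓ, (if ∃ a : Fin m, y.1 = x.1 ++ [a] then f y.1.length else 0)
          = ∑ y : TreeBallY m ℓ, (if y ∈ Finset.univ.image c then f y.1.length else 0) :=
            Finset.sum_congr rfl (fun y _ => by rw [if_congr (hcond y) rfl rfl])
        _ = ∑ y ∈ Finset.univ.image c, f y.1.length := by
            rw [Finset.sum_ite_mem, Finset.univ_inter]
        _ = ∑ a : Fin m, f ((c a).1.length) := Finset.sum_image (fun a _ b _ h => hcinj h)
        _ = ∑ a : Fin m, f (x.1.length + 1) := by
            apply Finset.sum_congr rfl; intro a _; congr 1; simp [hc]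
        _ = (m : ℂ) * f (x.1.length + 1) := by
            rw [Finset.sum_const, Finset.card_univ, Fintype.card_fin, nsmul_eq_mul]
    · rw [if_neg hx]
      apply Finset.sum_eq_zero
      intro y _
      rw [if_neg]
      rintro ⟨a, ha⟩
      have h1 : y.1.length = x.1.length + 1 := by rw [ha]; simp
      have := y.2
      omega
/-- the radial solution vector -/
def Fseq (z Δ σ : ℂ) (ℓ : ℕ) : ℕ → ℂ
  | 0 => Wseq z Δ (ℓ + 1)
  | k + 1 => -σ * Wseq z Δ (ℓ - k) * Fseq z Δ σ ℓ k

lemma Fseq_zero (z Δ σ : ℂ) (ℓ : ℕ) : Fseq z Δ σ ℓ 0 = Wseq z Δ (ℓ + 1) := rfl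

lemma Fseq_succ (z Δ σ : ℂ) (ℓ k : ℕ) :
    Fseq z Δ σ ℓ (k + 1) = -σ * Wseq z Δ (ℓ - k) * Fseq z Δ σ ℓ k := rfl

lemma rootY_iff {m ℓ : ℕ} (x : TreeBallY m ℓ) : x = rootY m ℓ ↔ x.1.length = 0 := by
  constructor
  · rintro rfl; rfl
  · intro h; exact Subtype.ext (List.length_eq_zero_iff.1 h)

lemma mulVec_radial (d ℓ : ℕ) (hd : 3 ≤ d) (hℓ : 1 ≤ ℓ) (z Δ : ℂ)
    (hz : 0 < z.im) (hΔ : 0 < Δ.im) :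
    (HmatY d ℓ - z • 1 - Δ • IbdY d ℓ).mulVec
        (fun x => Fseq z Δ ((Real.sqrt ((d : ℝ) - 1) : ℂ))⁻¹ ℓ x.1.length)
      = fun x => if x = rootY (d - 1) ℓ then 1 else 0 := by
  set σ : ℂ := ((Real.sqrt ((d : ℝ) - 1) : ℂ))⁻¹ with hσdef
  set F : ℕ → ℂ := Fseq z Δ σ ℓ with hF
  have hd3 : (3:ℝ) ≤ (d:ℝ) := by exact_mod_cast hd
  have hsR : (0:ℝ) < Real.sqrt ((d:ℝ) - 1) := Real.sqrt_pos.2 (by linarith)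
  have hsne : ((Real.sqrt ((d : ℝ) - 1) : ℂ)) ≠ 0 := by
    simpa using hsR.ne'
  have hs2 : ((Real.sqrt ((d : ℝ) - 1) : ℂ))^2 = (d:ℂ) - 1 := by
    rw [← Complex.ofReal_pow, sq, Real.mul_self_sqrt (by linarith)]
    push_cast; ring
  have hσ2 : σ^2 * ((d:ℂ) - 1) = 1 := by
    rw [hσdef, ← hs2]
    field_simp
  have hm : (((d - 1 : ℕ)) : ℂ) = (d:ℂ) - 1 := by
    have : (1:ℕ) ≤ d := by omega
    push_cast [Nat.cast_sub this]
    ring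
  funext x
  -- expand mulVec
  have h1 : (HmatY d ℓ - z • 1 - Δ • IbdY d ℓ).mulVec (fun y => F y.1.length) x
      = σ * (∑ y : TreeBallY (d-1) ℓ,
            (if (treeGraphY (d-1) ℓ).Adj x y then F y.1.length else 0))
        - z * F x.1.length
        - Δ * ((if x.1.length = ℓ then 1 else 0) * F x.1.length) := by
    rw [Matrix.sub_mulVec, Matrix.sub_mulVec]
    simp only [Pi.sub_apply]
    congr 1
    · congr 1
      · -- H part
        rw [Matrix.mulVec, dotProduct]
        rw [Finset.mul_sum]
        apply Finset.sum_congr rfl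
        intro y _
        rw [HmatY]
        by_cases h : (treeGraphY (d-1) ℓ).Adj x y <;> simp [h, hσdef]
      · -- z part
        rw [Matrix.smul_mulVec, Matrix.one_mulVec]
        simp
    · -- Δ part
      rw [Matrix.smul_mulVec, IbdY]
      simp only [Pi.smul_apply, smul_eq_mul]
      rw [Matrix.mulVec_diagonal, treeY_dist_root]
  rw [h1, treeY_adj_sum x F]
  rw [if_congr (rootY_iff x) rfl rfl]
  have hxle : x.1.length ≤ ℓ := x.2
  by_cases hk0 : x.1.length = 0
  · -- root case
    have hklt : x.1.length < ℓ := by omega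
    have hkne : ¬ (x.1.length = ℓ) := by omega
    rw [if_pos hk0, if_pos hklt, if_neg hkne, if_pos hk0, hk0]
    have hF1 : F 1 = -σ * Wseq z Δ ℓ * F 0 := by
      rw [hF]
      show Fseq z Δ σ ℓ (0 + 1) = _
      rw [Fseq_succ, Nat.sub_zero]
    have hF0 : F 0 = Wseq z Δ (ℓ + 1) := rfl
    have hstep := Wseq_step hz hΔ ℓ
    rw [show (0:ℕ) + 1 = 1 from rfl] at *
    rw [hF1, hF0, hm]
    linear_combination (-(Wseq z Δ ℓ * Wseq z Δ (ℓ+1))) * hσ2 - hstep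
  · by_cases hkℓ : x.1.length = ℓ
    · -- leaf case
      obtain ⟨j, hj⟩ : ∃ j, ℓ = j + 1 := ⟨ℓ - 1, by omega⟩
      have hknlt : ¬ (x.1.length < ℓ) := by omega
      rw [if_neg hk0, if_neg hknlt, if_pos hkℓ, if_neg hk0, hkℓ, hj]
      have hsub : j + 1 - 1 = j := by omega
      have hsub2 : ℓ - j = 1 := by omega
      rw [hsub]
      have hFj : F (j + 1) = -σ * Wseq z Δ 1 * F j := by
        rw [hF, Fseq_succ, hsub2]
      have hstep := Wseq_step hz hΔ 0
      have hW0 : Wseq z Δ 0 = Δ := rfl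
      rw [hW0] at hstep
      rw [hFj]
      linear_combination (σ * F j) * hstep
    · -- middle case
      have hklt : x.1.length < ℓ := by omega
      rw [if_neg hk0, if_pos hklt, if_neg hkℓ, if_neg hk0]
      obtain ⟨j, hj⟩ : ∃ j, x.1.length = j + 1 := ⟨x.1.length - 1, by omega⟩
      obtain ⟨i, hi⟩ : ∃ i, ℓ - j = i + 1 := ⟨ℓ - j - 1, by omega⟩
      have hi2 : ℓ - (j + 1) = i := by omega
      rw [hj]
      have hsub : j + 1 - 1 = j := by omega
      have hsub2 : j + 1 + 1 = j + 2 := by omega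
      rw [hsub, hsub2]
      have hFj1 : F (j + 1) = -σ * Wseq z Δ (i + 1) * F j := by
        rw [hF, Fseq_succ, hi]
      have hFj2 : F (j + 2) = -σ * Wseq z Δ i * F (j + 1) := by
        rw [hF]
        show Fseq z Δ σ ℓ ((j + 1) + 1) = _
        rw [Fseq_succ, hi2, ← hF]
      have hstep := Wseq_step hz hΔ i
      rw [hFj2, hFj1, hm]
      linear_combination (σ * F j * (Wseq z Δ i * Wseq z Δ (i+1))) * hσ2
        + (σ * F j) * hstep
/-- The matrix `H - z - Δ 𝕀∂` is nonsingular when `Im z, Im Δ > 0`. -/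
lemma M_det_ne_zero (d ℓ : ℕ) (z Δ : ℂ) (hz : 0 < z.im) (hΔ : 0 < Δ.im) :
    (HmatY d ℓ - z • 1 - Δ • IbdY d ℓ).det ≠ 0 := by
  set M := HmatY d ℓ - z • 1 - Δ • IbdY d ℓ with hM
  intro hdet
  obtain ⟨v, hv0, hv⟩ := (Matrix.exists_mulVec_eq_zero_iff).2 hdet
  apply hv0
  set D : TreeBallY (d-1) ℓ → ℝ :=
    fun x => if (treeGraphY (d - 1) ℓ).dist (rootY (d - 1) ℓ) x = ℓ then 1 else 0 with hD
  -- the quadratic form is zero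
  have hQ : ∑ x : TreeBallY (d-1) ℓ, (starRingEnd ℂ) (v x) * (M.mulVec v x) = 0 := by
    rw [hv]; simp
  -- expand it
  have hexp : ∀ x : TreeBallY (d-1) ℓ, (starRingEnd ℂ) (v x) * (M.mulVec v x)
      = (∑ y : TreeBallY (d-1) ℓ, HmatY d ℓ x y * ((starRingEnd ℂ) (v x) * v y))
        - z * (Complex.normSq (v x) : ℂ) - Δ * ((D x : ℝ) : ℂ) * (Complex.normSq (v x) : ℂ) := by
    intro x
    rw [hM, Matrix.sub_mulVec, Matrix.sub_mulVec]
    simp only [Pi.sub_apply]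
    rw [Matrix.smul_mulVec, Matrix.one_mulVec, Matrix.smul_mulVec, IbdY]
    simp only [Pi.smul_apply, smul_eq_mul]
    rw [Matrix.mulVec_diagonal]
    rw [mul_sub, mul_sub]
    congr 1
    · congr 1
      · rw [Matrix.mulVec, dotProduct, Finset.mul_sum]
        apply Finset.sum_congr rfl
        intro y _
        ring
      · rw [Complex.normSq_eq_conj_mul_self]; ring
    · rw [hD]
      by_cases h : (treeGraphY (d - 1) ℓ).dist (rootY (d - 1) ℓ) x = ℓ <;>
        simp [h, Complex.normSq_eq_conj_mul_self] <;> ring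
  rw [Finset.sum_congr rfl (fun x _ => hexp x)] at hQ
  rw [Finset.sum_sub_distrib, Finset.sum_sub_distrib, ← Finset.mul_sum] at hQ
  -- the H-part is real
  set S := ∑ x : TreeBallY (d-1) ℓ, ∑ y : TreeBallY (d-1) ℓ,
    HmatY d ℓ x y * ((starRingEnd ℂ) (v x) * v y) with hS
  have hSreal : S.im = 0 := by
    rw [← Complex.conj_eq_iff_im]
    rw [hS, map_sum]
    rw [Finset.sum_comm]
    apply Finset.sum_congr rfl
    intro y _
    rw [map_sum]
    apply Finset.sum_congr rfl
    intro x _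
    rw [map_mul, map_mul]
    have hreal : (starRingEnd ℂ) (HmatY d ℓ y x) = HmatY d ℓ x y := by
      simp only [HmatY]
      have hsymm : (treeGraphY (d-1) ℓ).Adj y x ↔ (treeGraphY (d-1) ℓ).Adj x y :=
        ⟨fun h => h.symm, fun h => h.symm⟩
      by_cases h : (treeGraphY (d-1) ℓ).Adj x y
      · rw [if_pos h, if_pos (hsymm.2 h), map_inv₀, Complex.conj_ofReal]
      · rw [if_neg h, if_neg (fun hh => h (hsymm.1 hh)), map_zero]
    rw [hreal, Complex.conj_conj]
    ring
  -- take imaginary parts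
  have hT : (∑ x : TreeBallY (d-1) ℓ, (Complex.normSq (v x) : ℂ))
      = ((∑ x : TreeBallY (d-1) ℓ, Complex.normSq (v x) : ℝ) : ℂ) := by push_cast; rfl
  have hT2 : (∑ x : TreeBallY (d-1) ℓ, Δ * ((D x : ℝ) : ℂ) * (Complex.normSq (v x) : ℂ))
      = Δ * ((∑ x : TreeBallY (d-1) ℓ, D x * Complex.normSq (v x) : ℝ) : ℂ) := by
    push_cast
    rw [Finset.mul_sum]
    apply Finset.sum_congr rfl
    intro x _
    ring
  rw [hT, hT2] at hQ
  set T : ℝ := ∑ x : TreeBallY (d-1) ℓ, Complex.normSq (v x) with hTdef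
  set T2 : ℝ := ∑ x : TreeBallY (d-1) ℓ, D x * Complex.normSq (v x) with hT2def
  have hTnn : 0 ≤ T := Finset.sum_nonneg (fun x _ => Complex.normSq_nonneg _)
  have hT2nn : 0 ≤ T2 := Finset.sum_nonneg (fun x _ => by
    rw [hD]
    by_cases h : (treeGraphY (d - 1) ℓ).dist (rootY (d - 1) ℓ) x = ℓ <;>
      simp [h, Complex.normSq_nonneg])
  have him := congrArg Complex.im hQ
  simp only [Complex.sub_im, Complex.mul_im, Complex.ofReal_re, Complex.ofReal_im,
    Complex.zero_im, hSreal] at him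
  -- him : 0 - (z.im * T) - (Δ.im * T2) = 0 roughly
  have hT0 : T = 0 := by nlinarith
  funext x
  have := (Finset.sum_eq_zero_iff_of_nonneg
    (fun x _ => Complex.normSq_nonneg (v x))).1 hT0 x (Finset.mem_univ x)
  simpa using Complex.normSq_eq_zero.1 this

/-- The root entry of the resolvent. -/
lemma Y_entry (d ℓ : ℕ) (hd : 3 ≤ d) (hℓ : 1 ≤ ℓ) (z Δ : ℂ)
    (hz : 0 < z.im) (hΔ : 0 < Δ.im) :
    ((HmatY d ℓ - z • 1 - Δ • IbdY d ℓ)⁻¹) (rootY (d - 1) ℓ) (rootY (d - 1) ℓ)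
      = Wseq z Δ (ℓ + 1) := by
  set M := HmatY d ℓ - z • 1 - Δ • IbdY d ℓ with hM
  set v : TreeBallY (d-1) ℓ → ℂ :=
    fun x => Fseq z Δ ((Real.sqrt ((d : ℝ) - 1) : ℂ))⁻¹ ℓ x.1.length with hv
  have hMv : M.mulVec v = fun x => if x = rootY (d - 1) ℓ then 1 else 0 :=
    mulVec_radial d ℓ hd hℓ z Δ hz hΔ
  have hdet := M_det_ne_zero d ℓ z Δ hz hΔ
  have hinv : M⁻¹ * M = 1 := Matrix.nonsing_inv_mul M (isUnit_iff_ne_zero.2 hdet)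
  have h1 : M⁻¹.mulVec (M.mulVec v) = v := by
    rw [Matrix.mulVec_mulVec, hinv, Matrix.one_mulVec]
  rw [hMv] at h1
  have h2 := congrArg (fun f => f (rootY (d-1) ℓ)) h1
  rw [Matrix.mulVec, dotProduct] at h2
  have h3 : ∑ y : TreeBallY (d-1) ℓ,
      M⁻¹ (rootY (d-1) ℓ) y * (if y = rootY (d - 1) ℓ then 1 else 0)
      = M⁻¹ (rootY (d-1) ℓ) (rootY (d-1) ℓ) := by
    rw [Finset.sum_congr rfl (fun y _ => by rw [mul_ite, mul_one, mul_zero])]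
    rw [Finset.sum_ite_eq' Finset.univ]
    simp
  rw [h3] at h2
  rw [h2, hv]
  rfl
end

/-- **Lipschitz bound for `Y_ℓ` in the boundary weight.** Fix `d ≥ 3`. There are constants
`c, C > 0` depending only on `d` such that for all `ℓ ≥ 1`, `z ∈ ℂ` with `Im z > 0` (with
`m_sc(z)` the unique root of `m² + z m + 1 = 0` with positive imaginary part), and all
`Δ, Δ'` with positive imaginary parts satisfying `ℓ² |Δ - m_sc(z)| ≤ c` and
`ℓ² |Δ' - m_sc(z)| ≤ c`, one has `|Y_ℓ(Δ,z) - Y_ℓ(Δ',z)| ≤ C ℓ |Δ - Δ'|`, where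
`Y_ℓ(Δ,z) := ((H_{𝒴_ℓ} - z·I - Δ·𝕀∂)⁻¹)_{oo}`. -/
theorem Y_lipschitz (d : ℕ) (hd : 3 ≤ d) :
    ∃ c C : ℝ, 0 < c ∧ 0 < C ∧
      ∀ (ℓ : ℕ), 1 ≤ ℓ →
      ∀ (z msc Δ Δ' : ℂ), 0 < z.im → msc ^ 2 + z * msc + 1 = 0 → 0 < msc.im →
        0 < Δ.im → 0 < Δ'.im →
        (ℓ : ℝ) ^ 2 * ‖Δ - msc‖ ≤ c →
        (ℓ : ℝ) ^ 2 * ‖Δ' - msc‖ ≤ c →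
        ‖
            (((HmatY d ℓ - z • 1 - Δ • IbdY d ℓ)⁻¹) (rootY (d - 1) ℓ) (rootY (d - 1) ℓ) -
              ((HmatY d ℓ - z • 1 - Δ' • IbdY d ℓ)⁻¹) (rootY (d - 1) ℓ) (rootY (d - 1) ℓ))‖ ≤
          C * (ℓ : ℝ) * ‖Δ - Δ'‖ := by
  refine ⟨1/4, 9, by norm_num, by norm_num, ?_⟩
  intro ℓ hℓ z msc Δ Δ' hz hmsc hmi hΔ hΔ' hc hc'
  rw [Y_entry d ℓ hd hℓ z Δ hz hΔ, Y_entry d ℓ hd hℓ z Δ' hz hΔ']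
  have h9 := Y_diff_bound hz hΔ hΔ' hmsc hmi hℓ hc hc'
  have hℓR : (1:ℝ) ≤ (ℓ:ℝ) := by exact_mod_cast hℓ
  have habs := norm_nonneg (Δ - Δ')
  calc ‖Wseq z Δ (ℓ + 1) - Wseq z Δ' (ℓ + 1)‖
      ≤ 9 * ‖Δ - Δ'‖ := h9
    _ ≤ 9 * (ℓ:ℝ) * ‖Δ - Δ'‖ := by nlinarith
end

section
/- Let n, r ≥ 1 be integers, let G and L be n×n complex matrices with G invertible, and let U, V be n×r complex matrices such that both r×r matrices I_r + Vᵀ·G·U and I_r + Vᵀ·L·U are invertible. Set G∘ := G − L and F := −U·(I_r + Vᵀ·L·U)⁻¹·Vᵀ, and assume that ‖G∘·F‖ < 1, where ‖·‖ is the operator norm induced by the Euclidean norm on ℂⁿ. Then the matrix G⁻¹ + U·Vᵀ is invertible, the series ∑_{k≥0} G·F·(G∘·F)^k·G converges absolutely, and (G⁻¹ + U·Vᵀ)⁻¹ − G = ∑_{k=0}^∞ G·F·(G∘·F)^k·G. -/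
set_option maxHeartbeats 1600000


/-- **Resolvent expansion via the Woodbury formula.** Let `G, L` be `n × n` complex matrices
with `G` invertible, and `U, V` be `n × r` complex matrices such that `I_r + Vᵀ G U` and
`I_r + Vᵀ L U` are invertible. Set `G∘ := G - L` and `F := -U (I_r + Vᵀ L U)⁻¹ Vᵀ`, and
assume `‖G∘ F‖ < 1` in the operator norm induced by the Euclidean norm. Then `G⁻¹ + U Vᵀ` is
invertible, the series `∑_k G F (G∘ F)^k G` converges absolutely, and
`(G⁻¹ + U Vᵀ)⁻¹ - G = ∑_{k=0}^∞ G F (G∘ F)^k G`. -/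
theorem woodbury_resolvent_expansion (n r : ℕ) (hn : 1 ≤ n) (hr : 1 ≤ r)
    (G L : Matrix (Fin n) (Fin n) ℂ) (hG : IsUnit G)
    (U V : Matrix (Fin n) (Fin r) ℂ)
    (h1 : IsUnit (1 + V.transpose * G * U))
    (h2 : IsUnit (1 + V.transpose * L * U))
    (Gc F : Matrix (Fin n) (Fin n) ℂ)
    (hGc : Gc = G - L)
    (hF : F = -(U * (1 + V.transpose * L * U)⁻¹ * V.transpose))
    (hnorm : ‖Matrix.toEuclideanCLM (𝕜 := ℂ) (Gc * F)‖ < 1) :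
    IsUnit (G⁻¹ + U * V.transpose) ∧
    Summable (fun k : ℕ => ‖Matrix.toEuclideanCLM (𝕜 := ℂ) (G * F * (Gc * F) ^ k * G)‖) ∧
    HasSum (fun k : ℕ => G * F * (Gc * F) ^ k * G) ((G⁻¹ + U * V.transpose)⁻¹ - G) := by
  haveI : NeZero n := ⟨by omega⟩
  set e := Matrix.toEuclideanCLM (𝕜 := ℂ) (n := Fin n) with he
  set A : Matrix (Fin r) (Fin r) ℂ := 1 + V.transpose * G * U with hA
  set B : Matrix (Fin r) (Fin r) ℂ := 1 + V.transpose * L * U with hB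
  set T : Matrix (Fin n) (Fin n) ℂ := Gc * F with hT
  have hG1 : G⁻¹ * G = 1 := Matrix.nonsing_inv_mul _ ((Matrix.isUnit_iff_isUnit_det _).mp hG)
  have hA1 : A⁻¹ * A = 1 := Matrix.nonsing_inv_mul _ ((Matrix.isUnit_iff_isUnit_det _).mp h1)
  have hA2 : A * A⁻¹ = 1 := Matrix.mul_nonsing_inv _ ((Matrix.isUnit_iff_isUnit_det _).mp h1)
  have hB1 : B * B⁻¹ = 1 := Matrix.mul_nonsing_inv _ ((Matrix.isUnit_iff_isUnit_det _).mp h2)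
  -- right inverse of `G⁻¹ + U Vᵀ` (Sherman–Morrison–Woodbury)
  have h4 : V.transpose * (G * U) = A - 1 := by
    rw [hA, add_sub_cancel_left, Matrix.mul_assoc]
  have hstep : V.transpose * (G * (U * (A⁻¹ * (V.transpose * G)))) =
      V.transpose * G - A⁻¹ * (V.transpose * G) := by
    calc V.transpose * (G * (U * (A⁻¹ * (V.transpose * G))))
        = (V.transpose * (G * U)) * (A⁻¹ * (V.transpose * G)) := by
          simp only [Matrix.mul_assoc]
      _ = (A - 1) * (A⁻¹ * (V.transpose * G)) := by rw [h4]
      _ = V.transpose * G - A⁻¹ * (V.transpose * G) := by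
          rw [Matrix.sub_mul, ← Matrix.mul_assoc A A⁻¹, hA2, Matrix.one_mul, Matrix.one_mul]
  have h_right : (G⁻¹ + U * V.transpose) *
      (G - G * (U * (A⁻¹ * V.transpose)) * G) = 1 := by
    have hG1' : ∀ X : Matrix (Fin n) (Fin n) ℂ, G⁻¹ * (G * X) = X := fun X => by
      rw [← Matrix.mul_assoc, hG1, Matrix.one_mul]
    simp only [Matrix.add_mul, Matrix.mul_sub, Matrix.mul_assoc]
    rw [hstep, hG1, hG1', Matrix.mul_sub]
    abel
  have hWu : IsUnit (G⁻¹ + U * V.transpose) := (Matrix.isUnit_iff_isUnit_det _).mpr (Matrix.isUnit_det_of_right_inverse h_right)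
  have hWinv : (G⁻¹ + U * V.transpose)⁻¹ = G - G * (U * (A⁻¹ * V.transpose)) * G :=
    Matrix.inv_eq_right_inv h_right
  refine ⟨hWu, ?_, ?_⟩
  · -- summability of the norms
    have hgeo : Summable (fun k : ℕ => ‖e (G * F)‖ * ‖e T‖ ^ k * ‖e G‖) :=
      ((summable_geometric_of_lt_one (norm_nonneg _) hnorm).mul_left
        ‖e (G * F)‖).mul_right ‖e G‖
    refine Summable.of_nonneg_of_le (fun k => norm_nonneg _) (fun k => ?_) hgeo
    have hek : e (G * F * T ^ k * G) = e (G * F) * (e T) ^ k * e G := by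
      rw [_root_.map_mul, _root_.map_mul, map_pow]
    rw [hek]
    calc ‖e (G * F) * e T ^ k * e G‖
        ≤ ‖e (G * F) * e T ^ k‖ * ‖e G‖ := norm_mul_le _ _
      _ ≤ (‖e (G * F)‖ * ‖e T ^ k‖) * ‖e G‖ := by
          gcongr
          exact norm_mul_le _ _
      _ ≤ ‖e (G * F)‖ * ‖e T‖ ^ k * ‖e G‖ := by
          gcongr
          exact norm_pow_le _ _
  · -- the sum of the series
    set N : Matrix (Fin n) (Fin n) ℂ := e.symm (Ring.inverse (1 - e T)) with hN
    have heN : e N = Ring.inverse (1 - e T) := e.apply_symm_apply _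
    have hNprop : (1 - T) * N = 1 := by
      refine e.injective ?_
      show e ((1 - T) * N) = e 1
      rw [_root_.map_mul, map_sub, _root_.map_one, heN]
      exact Ring.mul_inverse_cancel _ (isUnit_one_sub_of_norm_lt_one hnorm)
    -- key identity : Vᵀ (1 - T) = A (B⁻¹ Vᵀ)
    have hVGcU : V.transpose * (Gc * U) = A - B := by
      rw [hGc, hA, hB]
      simp only [Matrix.mul_sub, Matrix.sub_mul, Matrix.mul_assoc]
      abel
    have hVT : V.transpose * T = -((A - B) * (B⁻¹ * V.transpose)) := by
      calc V.transpose * T = -((V.transpose * (Gc * U)) * (B⁻¹ * V.transpose)) := by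
            rw [hT, hF]
            simp only [Matrix.mul_neg, Matrix.neg_mul, Matrix.mul_assoc]
        _ = -((A - B) * (B⁻¹ * V.transpose)) := by rw [hVGcU]
    have hkey : V.transpose * (1 - T) = A * (B⁻¹ * V.transpose) := by
      rw [Matrix.mul_sub, Matrix.mul_one, hVT, sub_neg_eq_add, Matrix.sub_mul,
        ← Matrix.mul_assoc B B⁻¹, hB1, Matrix.one_mul]
      abel
    have hBVN : B⁻¹ * (V.transpose * N) = A⁻¹ * V.transpose := by
      have h3 : A * (B⁻¹ * (V.transpose * N)) = V.transpose := by
        calc A * (B⁻¹ * (V.transpose * N)) = (V.transpose * (1 - T)) * N := by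
              rw [hkey]; simp only [Matrix.mul_assoc]
          _ = V.transpose * ((1 - T) * N) := by rw [Matrix.mul_assoc]
          _ = V.transpose := by rw [hNprop, Matrix.mul_one]
      calc B⁻¹ * (V.transpose * N)
          = (A⁻¹ * A) * (B⁻¹ * (V.transpose * N)) := by rw [hA1, Matrix.one_mul]
        _ = A⁻¹ * V.transpose := by rw [Matrix.mul_assoc, h3]
    have hFN : F * N = -(U * (A⁻¹ * V.transpose)) := by
      rw [hF]
      simp only [Matrix.neg_mul, Matrix.mul_assoc]
      rw [hBVN]
    -- geometric series in the CLM algebra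
    have hgeo : HasSum (fun k : ℕ => (e T) ^ k) (Ring.inverse (1 - e T)) :=
      hasSum_geom_series_inverse _ hnorm
    have hs : HasSum (fun k : ℕ => e (G * F) * (e T) ^ k * e G)
        (e (G * F) * Ring.inverse (1 - e T) * e G) := (hgeo.mul_left _).mul_right _
    let ψ : (EuclideanSpace ℂ (Fin n) →L[ℂ] EuclideanSpace ℂ (Fin n))
        →ₗ[ℂ] Matrix (Fin n) (Fin n) ℂ :=
      { toFun := fun x => e.symm x
        map_add' := fun x y => map_add e.symm x y
        map_smul' := fun c x => map_smul e.symm c x }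
    have hs2 := hs.map ψ ψ.continuous_of_finiteDimensional
    have hfun : (⇑ψ ∘ fun k : ℕ => e (G * F) * (e T) ^ k * e G) =
        fun k : ℕ => G * F * T ^ k * G := by
      funext k
      show e.symm (e (G * F) * (e T) ^ k * e G) = _
      rw [← map_pow, ← _root_.map_mul, ← _root_.map_mul, StarAlgEquiv.symm_apply_apply]
    have hval : ψ (e (G * F) * Ring.inverse (1 - e T) * e G) =
        (G⁻¹ + U * V.transpose)⁻¹ - G := by
      show e.symm (e (G * F) * Ring.inverse (1 - e T) * e G) = _
      rw [← heN, ← _root_.map_mul, ← _root_.map_mul, StarAlgEquiv.symm_apply_apply, hWinv]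
      calc G * F * N * G = G * ((F * N) * G) := by simp only [Matrix.mul_assoc]
        _ = -(G * (U * (A⁻¹ * V.transpose)) * G) := by
            rw [hFN]
            simp only [Matrix.neg_mul, Matrix.mul_neg, Matrix.mul_assoc]
        _ = G - G * (U * (A⁻¹ * V.transpose)) * G - G := by
            simp only [Matrix.mul_assoc]
            abel
    rw [hfun, hval] at hs2
    exact hs2
end

section
/- Let n ≥ 1 and p ≥ 1 be integers, let p₁,…,pₙ ∈ [0,1], and let X₁,…,Xₙ be independent random variables with ℙ(X_i = 1) = p_i and ℙ(X_i = 0) = 1 − p_i. Set W = ∑_{i=1}^n X_i, μ = ∑_{i=1}^n p_i, and f(W) = (W − μ)/n. Then E[f(W)^{2p}] ≤ ((2p−1)/(2n))·E[f(W)^{2p−1}] + ((2p−1)·μ/n²)·E[f(W)^{2p−2}]. -/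
open MeasureTheory ProbabilityTheory

lemma sign_pair {a b : ℝ} (h : b ≤ a) {k j : ℕ} (hkj : Even (k + j)) :
    0 ≤ (a ^ k - b ^ k) * (a ^ j - b ^ j) := by
  rcases Nat.even_or_odd k with hk | hk
  · have hj : Even j := (Nat.even_add.1 hkj).1 hk
    rw [← hk.pow_abs a, ← hk.pow_abs b, ← hj.pow_abs a, ← hj.pow_abs b]
    rcases le_total |b| |a| with hab | hab
    · exact mul_nonneg (sub_nonneg.2 (pow_le_pow_left₀ (abs_nonneg b) hab k))
        (sub_nonneg.2 (pow_le_pow_left₀ (abs_nonneg b) hab j))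
    · have h1 := sub_nonpos.2 (pow_le_pow_left₀ (abs_nonneg a) hab k)
      have h2 := sub_nonpos.2 (pow_le_pow_left₀ (abs_nonneg a) hab j)
      nlinarith
  · have hj : Odd j := by
      rcases Nat.even_or_odd j with h' | h'
      · exact absurd ((Nat.even_add.1 hkj).2 h') (Nat.not_even_iff_odd.2 hk)
      · exact h'
    exact mul_nonneg (sub_nonneg.2 ((hk.strictMono_pow (R := ℝ)).monotone h))
      (sub_nonneg.2 ((hj.strictMono_pow (R := ℝ)).monotone h))

open Finset in
lemma pow_sub_pow_le_aux (m : ℕ) {a b : ℝ} (hab : b ≤ a) :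
    a ^ (2 * m + 1) - b ^ (2 * m + 1) ≤
      (2 * m + 1 : ℝ) * (a - b) * ((a ^ (2 * m) + b ^ (2 * m)) / 2) := by
  have key : ∑ i ∈ range (2 * m + 1), a ^ i * b ^ (2 * m - i) ≤
      (2 * m + 1 : ℝ) * ((a ^ (2 * m) + b ^ (2 * m)) / 2) := by
    have h2 : (2 : ℝ) * ∑ i ∈ range (2 * m + 1), a ^ i * b ^ (2 * m - i) =
        ∑ i ∈ range (2 * m + 1), (a ^ i * b ^ (2 * m - i) + a ^ (2 * m - i) * b ^ i) := by
      rw [Finset.sum_add_distrib, two_mul]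
      congr 1
      rw [← Finset.sum_range_reflect]
      refine Finset.sum_congr rfl fun i hi => ?_
      have hi' : i ≤ 2 * m := by simpa [Nat.lt_succ_iff] using Finset.mem_range.1 hi
      have e1 : 2 * m + 1 - 1 - i = 2 * m - i := by omega
      have e2 : 2 * m - (2 * m - i) = i := by omega
      rw [e1, e2]
    have hbound : ∀ i ∈ range (2 * m + 1),
        a ^ i * b ^ (2 * m - i) + a ^ (2 * m - i) * b ^ i ≤ a ^ (2 * m) + b ^ (2 * m) := by
      intro i hi
      have hi' : i ≤ 2 * m := by simpa [Nat.lt_succ_iff] using Finset.mem_range.1 hi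
      have hpar : Even (i + (2 * m - i)) := by
        have : i + (2 * m - i) = 2 * m := by omega
        rw [this]; exact even_two_mul m
      have := sign_pair hab hpar
      have hsplit : a ^ (2 * m) = a ^ i * a ^ (2 * m - i) := by
        rw [← pow_add]; congr 1; omega
      have hsplit' : b ^ (2 * m) = b ^ i * b ^ (2 * m - i) := by
        rw [← pow_add]; congr 1; omega
      nlinarith [this]
    calc ∑ i ∈ range (2 * m + 1), a ^ i * b ^ (2 * m - i)
        = (2 : ℝ)⁻¹ * ((2 : ℝ) * ∑ i ∈ range (2 * m + 1), a ^ i * b ^ (2 * m - i)) := by ring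
      _ ≤ (2 : ℝ)⁻¹ * ∑ i ∈ range (2 * m + 1), (a ^ (2 * m) + b ^ (2 * m)) := by
          rw [h2]
          exact mul_le_mul_of_nonneg_left (Finset.sum_le_sum hbound) (by norm_num)
      _ = (2 * m + 1 : ℝ) * ((a ^ (2 * m) + b ^ (2 * m)) / 2) := by
          rw [Finset.sum_const, card_range]
          ring
  have hgeom := geom_sum₂_mul a b (2 * m + 1)
  have hs : ∀ i ∈ range (2 * m + 1), a ^ i * b ^ (2 * m + 1 - 1 - i) = a ^ i * b ^ (2 * m - i) := by
    intro i hi; congr 2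
  rw [Finset.sum_congr rfl hs] at hgeom
  calc a ^ (2 * m + 1) - b ^ (2 * m + 1)
      = (∑ i ∈ range (2 * m + 1), a ^ i * b ^ (2 * m - i)) * (a - b) := hgeom.symm
    _ ≤ ((2 * m + 1 : ℝ) * ((a ^ (2 * m) + b ^ (2 * m)) / 2)) * (a - b) :=
        mul_le_mul_of_nonneg_right key (sub_nonneg.2 hab)
    _ = (2 * m + 1 : ℝ) * (a - b) * ((a ^ (2 * m) + b ^ (2 * m)) / 2) := by ring

set_option maxHeartbeats 1000000 in
/-- **Moment recursion for sums of independent Bernoulli variables via exchangeable pairs.**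
Let `X₁, …, Xₙ` be independent `Bernoulli(p_i)` random variables, `W = ∑ X_i`,
`μ̄ = ∑ p_i`, and `f(W) = (W - μ̄)/n`. Then for every `p ≥ 1`,
`E[f(W)^{2p}] ≤ ((2p-1)/(2n)) E[f(W)^{2p-1}] + ((2p-1) μ̄ / n²) E[f(W)^{2p-2}]`. -/
theorem bernoulli_moment_recursion (n p : ℕ) (hn : 1 ≤ n) (hp : 1 ≤ p)
    {Ω : Type*} [MeasurableSpace Ω] (μ : Measure Ω) [IsProbabilityMeasure μ]
    (q : Fin n → ℝ) (hq : ∀ i, q i ∈ Set.Icc (0 : ℝ) 1)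
    (X : Fin n → Ω → ℝ) (hmeas : ∀ i, Measurable (X i))
    (hindep : iIndepFun X μ)
    (h1 : ∀ i, μ {ω | X i ω = 1} = ENNReal.ofReal (q i))
    (h0 : ∀ i, μ {ω | X i ω = 0} = ENNReal.ofReal (1 - q i)) :
    (∫ ω, ((∑ i, X i ω - ∑ i, q i) / n) ^ (2 * p) ∂μ) ≤
      ((2 * (p : ℝ) - 1) / (2 * n)) *
          ∫ ω, ((∑ i, X i ω - ∑ i, q i) / n) ^ (2 * p - 1) ∂μ
        + ((2 * (p : ℝ) - 1) * (∑ i, q i) / (n : ℝ) ^ 2) *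
          ∫ ω, ((∑ i, X i ω - ∑ i, q i) / n) ^ (2 * p - 2) ∂μ := by
  classical
  obtain ⟨p', rfl⟩ : ∃ p', p = p' + 1 := ⟨p - 1, by omega⟩
  set M : ℕ := 2 * p' with hM
  have eM2 : 2 * (p' + 1) = M + 2 := by omega
  have eM1 : 2 * (p' + 1) - 1 = M + 1 := by omega
  have eM0 : 2 * (p' + 1) - 2 = M := by omega
  rw [eM1, eM0, eM2]
  have hnR : (0 : ℝ) < n := by exact_mod_cast hn
  have hnne : (n : ℝ) ≠ 0 := ne_of_gt hnR
  set S : ℝ := ∑ i, q i with hSdef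
  have hS0 : 0 ≤ S := Finset.sum_nonneg fun i _ => (hq i).1
  set W : Ω → ℝ := fun ω => ∑ i, X i ω with hWdef
  have hWmeas : Measurable W := Finset.measurable_sum _ fun i _ => hmeas i
  set g : ℝ → ℝ := fun w => ((w - S) / n) ^ (M + 1) with hgdef
  set h : ℝ → ℝ := fun w => ((w - S) / n) ^ M with hhdef
  have hgm : Measurable g := ((measurable_id.sub_const S).div_const (n : ℝ)).pow_const (M + 1)
  have hhm : Measurable h := ((measurable_id.sub_const S).div_const (n : ℝ)).pow_const M
  have hh0 : ∀ w, 0 ≤ h w := fun w => (even_two_mul p').pow_nonneg _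
  -- a.e. X i ∈ {0,1}
  have hXi01 : ∀ i, ∀ᵐ ω ∂μ, X i ω = 0 ∨ X i ω = 1 := by
    intro i
    have hm0 : MeasurableSet {ω | X i ω = 0} := hmeas i (measurableSet_singleton 0)
    have hm1 : MeasurableSet {ω | X i ω = 1} := hmeas i (measurableSet_singleton 1)
    have hd : Disjoint {ω | X i ω = 0} {ω | X i ω = 1} := by
      rw [Set.disjoint_left]
      intro ω hω0 hω1
      simp only [Set.mem_setOf_eq] at hω0 hω1
      rw [hω0] at hω1; norm_num at hω1
    have hu : μ ({ω | X i ω = 0} ∪ {ω | X i ω = 1}) = 1 := by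
      rw [measure_union hd hm1, h0 i, h1 i,
        ← ENNReal.ofReal_add (by linarith [(hq i).2]) (hq i).1]
      norm_num
    have hc : μ ({ω | X i ω = 0} ∪ {ω | X i ω = 1})ᶜ = 0 := by
      rw [measure_compl (hm0.union hm1) (measure_ne_top _ _), hu, measure_univ, tsub_self]
    have hset : {ω | ¬(X i ω = 0 ∨ X i ω = 1)} = ({ω | X i ω = 0} ∪ {ω | X i ω = 1})ᶜ := by
      ext ω; simp [not_or]
    rw [ae_iff, hset]
    exact hc
  have hA : ∀ᵐ ω ∂μ, ∀ i, X i ω = 0 ∨ X i ω = 1 := ae_all_iff.2 hXi01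
  -- bound constant
  set c : ℝ := ((n : ℝ) + 1 + S) / n with hcdef
  have hc0 : 0 ≤ c := div_nonneg (by linarith) hnR.le
  have hpowb : ∀ (k : ℕ) (w : ℝ), 0 ≤ w → w ≤ (n : ℝ) + 1 → |((w - S) / n) ^ k| ≤ c ^ k := by
    intro k w h0w h1w
    rw [abs_pow]
    refine pow_le_pow_left₀ (abs_nonneg _) ?_ k
    rw [abs_div, abs_of_pos hnR, hcdef]
    apply div_le_div_of_nonneg_right ?_ hnR.le |>.trans_eq rfl
    rw [abs_le]; constructor <;> linarith
  -- integrability helper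
  have hIB : ∀ (F : Ω → ℝ) (_ : Measurable F) (C : ℝ),
      (∀ᵐ ω ∂μ, ‖F ω‖ ≤ C) → Integrable F μ := by
    intro F hF C hC
    exact Integrable.mono' (integrable_const C) hF.aestronglyMeasurable hC
  -- range of W
  have hWr : ∀ᵐ ω ∂μ, 0 ≤ W ω ∧ W ω ≤ n := by
    filter_upwards [hA] with ω hω
    constructor
    · exact Finset.sum_nonneg fun i _ => by rcases hω i with h' | h' <;> simp [h']
    · calc W ω ≤ ∑ _i : Fin n, (1 : ℝ) := Finset.sum_le_sum fun i _ => by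
              rcases hω i with h' | h' <;> simp [h']
        _ = n := by simp
  have hintW : ∀ (k : ℕ), Integrable (fun ω => ((W ω - S) / n) ^ k) μ := by
    intro k
    refine hIB _ (((hWmeas.sub_const S).div_const _).pow_const k) (c ^ k) ?_
    filter_upwards [hWr] with ω hω
    rw [Real.norm_eq_abs]
    exact hpowb k (W ω) hω.1 (by linarith [hω.2])
  set c0 : ℝ := (2 * (p' : ℝ) + 1) / (2 * n) with hc0def
  have hc0nn : 0 ≤ c0 := div_nonneg (by positivity) (by positivity)
  clear_value M S g h c c0
  -- per-i key inequality
  have key : ∀ i : Fin n,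
      (∫ ω, (X i ω - q i) * g (W ω) ∂μ) ≤
        c0 * ((∫ ω, X i ω * h (W ω) ∂μ) + q i * ∫ ω, h (W ω) ∂μ) := by
    intro i
    set V : Ω → ℝ := ∑ j ∈ Finset.univ.erase i, X j with hVdef
    have hVapp : ∀ ω, V ω = ∑ j ∈ Finset.univ.erase i, X j ω := by
      intro ω; simp [hVdef, Finset.sum_apply]
    have hVmeas : Measurable V := by
      have hV' : V = fun ω => ∑ j ∈ Finset.univ.erase i, X j ω := funext hVapp
      rw [hV']
      exact Finset.measurable_sum _ fun j _ => hmeas j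
    have hWV : ∀ ω, W ω = X i ω + V ω := by
      intro ω
      rw [hVapp, hWdef]
      exact (Finset.add_sum_erase _ _ (Finset.mem_univ i)).symm
    have hindepV : IndepFun (X i) V μ :=
      (hindep.indepFun_finset_sum_of_notMem hmeas (Finset.notMem_erase i Finset.univ)).symm
    have hVr : ∀ᵐ ω ∂μ, 0 ≤ V ω ∧ V ω ≤ n := by
      filter_upwards [hA] with ω hω
      rw [hVapp]
      constructor
      · exact Finset.sum_nonneg fun j _ => by rcases hω j with h' | h' <;> simp [h']
      · calc (∑ j ∈ Finset.univ.erase i, X j ω) ≤ ∑ _j ∈ Finset.univ.erase i, (1 : ℝ) :=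
              Finset.sum_le_sum fun j _ => by rcases hω j with h' | h' <;> simp [h']
          _ ≤ n := by
              rw [Finset.sum_const, nsmul_eq_mul, mul_one]
              have := Finset.card_erase_le (a := i) (s := (Finset.univ : Finset (Fin n)))
              simp only [Finset.card_univ, Fintype.card_fin] at this ⊢
              exact_mod_cast this
    -- integral of X i
    clear_value V
    have hXi_int : Integrable (X i) μ := by
      refine hIB _ (hmeas i) 1 ?_
      filter_upwards [hXi01 i] with ω hω
      rcases hω with h' | h' <;> simp [h']
    have hEX : ∫ ω, X i ω ∂μ = q i := by
      have hae : (fun ω => X i ω) =ᵐ[μ]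
          Set.indicator {ω | X i ω = 1} (fun _ => (1 : ℝ)) := by
        filter_upwards [hXi01 i] with ω hω
        rcases hω with h' | h'
        · rw [h', Set.indicator_of_notMem]
          simp [Set.mem_setOf_eq, h']
        · rw [h', Set.indicator_of_mem]
          exact h'
      have hm1 : MeasurableSet {ω | X i ω = 1} := hmeas i (measurableSet_singleton 1)
      rw [integral_congr_ae hae, integral_indicator_const (1 : ℝ) hm1, measureReal_def, h1 i]
      simp [ENNReal.toReal_ofReal (hq i).1]
    -- splitting identities
    have hsplit : ∀ φ : ℝ → ℝ, Measurable φ → (∀ w : ℝ, 0 ≤ w → w ≤ (n:ℝ) + 1 → |φ w| ≤ c ^ (M+1) + c ^ M) →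
        (∫ ω, X i ω * φ (W ω) ∂μ) = q i * ∫ ω, φ (V ω + 1) ∂μ ∧
        (∫ ω, (1 - X i ω) * φ (W ω) ∂μ) = (1 - q i) * ∫ ω, φ (V ω) ∂μ := by
      intro φ hφ hb
      have hφ1m : Measurable fun v : ℝ => φ (v + 1) := hφ.comp (measurable_add_const 1)
      have hIφ1 : Integrable (fun ω => φ (V ω + 1)) μ := by
        refine hIB _ (hφ1m.comp hVmeas) (c ^ (M+1) + c ^ M) ?_
        filter_upwards [hVr] with ω hω
        exact hb (V ω + 1) (by linarith [hω.1]) (by linarith [hω.2])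
      have hIφ0 : Integrable (fun ω => φ (V ω)) μ := by
        refine hIB _ (hφ.comp hVmeas) (c ^ (M+1) + c ^ M) ?_
        filter_upwards [hVr] with ω hω
        exact hb (V ω) hω.1 (by linarith [hω.2])
      constructor
      · have hae : (fun ω => X i ω * φ (W ω)) =ᵐ[μ] fun ω => X i ω * φ (V ω + 1) := by
          filter_upwards [hXi01 i] with ω hω
          rcases hω with h' | h'
          · simp [h']
          · rw [hWV ω, h']; ring_nf
        rw [integral_congr_ae hae]
        have hind : IndepFun (X i) (fun ω => φ (V ω + 1)) μ :=
          hindepV.comp measurable_id hφ1m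
        have hmul : ∫ ω, X i ω * φ (V ω + 1) ∂μ =
            (∫ ω, X i ω ∂μ) * ∫ ω, φ (V ω + 1) ∂μ :=
          hind.integral_mul_eq_mul_integral hXi_int.aestronglyMeasurable hIφ1.aestronglyMeasurable
        rw [hmul, hEX]
      · have hae : (fun ω => (1 - X i ω) * φ (W ω)) =ᵐ[μ] fun ω => (1 - X i ω) * φ (V ω) := by
          filter_upwards [hXi01 i] with ω hω
          rcases hω with h' | h'
          · rw [hWV ω, h']; ring_nf
          · simp [h']
        rw [integral_congr_ae hae]
        have hind : IndepFun (fun ω => 1 - X i ω) (fun ω => φ (V ω)) μ :=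
          hindepV.comp (measurable_const.sub measurable_id) hφ
        have hint1X : Integrable (fun ω => 1 - X i ω) μ := (integrable_const 1).sub hXi_int
        have hmul : ∫ ω, (1 - X i ω) * φ (V ω) ∂μ =
            (∫ ω, (1 - X i ω) ∂μ) * ∫ ω, φ (V ω) ∂μ :=
          hind.integral_mul_eq_mul_integral hint1X.aestronglyMeasurable hIφ0.aestronglyMeasurable
        rw [hmul]
        have : ∫ ω, (1 - X i ω) ∂μ = 1 - q i := by
          rw [integral_sub (integrable_const 1) hXi_int, hEX]
          simp
        rw [this]
    have hgb : ∀ (w : ℝ), 0 ≤ w → w ≤ (n:ℝ) + 1 → |g w| ≤ c ^ (M+1) + c ^ M := by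
      intro w h0w h1w
      simp only [hgdef]
      refine (hpowb (M+1) w h0w h1w).trans ?_
      have : 0 ≤ c ^ M := pow_nonneg hc0 M
      linarith
    have hhb : ∀ (w : ℝ), 0 ≤ w → w ≤ (n:ℝ) + 1 → |h w| ≤ c ^ (M+1) + c ^ M := by
      intro w h0w h1w
      simp only [hhdef]
      refine (hpowb M w h0w h1w).trans ?_
      have : 0 ≤ c ^ (M+1) := pow_nonneg hc0 (M+1)
      linarith
    obtain ⟨hg1, hg2⟩ := hsplit g hgm hgb
    obtain ⟨hh1, hh2⟩ := hsplit h hhm hhb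
    -- integrabilities again (for linear algebra of integrals)
    have hIg1 : Integrable (fun ω => g (V ω + 1)) μ := by
      refine hIB _ ((hgm.comp (measurable_add_const 1)).comp hVmeas) (c ^ (M+1) + c ^ M) ?_
      filter_upwards [hVr] with ω hω
      exact hgb _ (by linarith [hω.1]) (by linarith [hω.2])
    have hIg0 : Integrable (fun ω => g (V ω)) μ := by
      refine hIB _ (hgm.comp hVmeas) (c ^ (M+1) + c ^ M) ?_
      filter_upwards [hVr] with ω hω
      exact hgb _ hω.1 (by linarith [hω.2])
    have hIh1 : Integrable (fun ω => h (V ω + 1)) μ := by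
      refine hIB _ ((hhm.comp (measurable_add_const 1)).comp hVmeas) (c ^ (M+1) + c ^ M) ?_
      filter_upwards [hVr] with ω hω
      exact hhb _ (by linarith [hω.1]) (by linarith [hω.2])
    have hIh0 : Integrable (fun ω => h (V ω)) μ := by
      refine hIB _ (hhm.comp hVmeas) (c ^ (M+1) + c ^ M) ?_
      filter_upwards [hVr] with ω hω
      exact hhb _ hω.1 (by linarith [hω.2])
    have hIXg : Integrable (fun ω => X i ω * g (W ω)) μ := by
      refine hIB _ ((hmeas i).mul (hgm.comp hWmeas)) (c ^ (M+1) + c ^ M) ?_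
      filter_upwards [hXi01 i, hWr] with ω hω hωW
      rw [Real.norm_eq_abs, abs_mul]
      have h2 := hgb (W ω) hωW.1 (by linarith [hωW.2])
      have hX1 : |X i ω| ≤ 1 := by rcases hω with h' | h' <;> simp [h']
      have := abs_nonneg (g (W ω))
      nlinarith
    have hI1Xg : Integrable (fun ω => (1 - X i ω) * g (W ω)) μ := by
      refine hIB _ ((measurable_const.sub (hmeas i)).mul (hgm.comp hWmeas)) (c ^ (M+1) + c ^ M) ?_
      filter_upwards [hXi01 i, hWr] with ω hω hωW
      rw [Real.norm_eq_abs, abs_mul]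
      have h2 := hgb (W ω) hωW.1 (by linarith [hωW.2])
      have hX1 : |1 - X i ω| ≤ 1 := by rcases hω with h' | h' <;> simp [h']
      have := abs_nonneg (g (W ω))
      nlinarith
    -- Step 2a: the exchangeable-pair identity
    have step2a : (∫ ω, (X i ω - q i) * g (W ω) ∂μ) =
        q i * (1 - q i) * ((∫ ω, g (V ω + 1) ∂μ) - ∫ ω, g (V ω) ∂μ) := by
      have hpt : ∀ ω, (X i ω - q i) * g (W ω) =
          (1 - q i) * (X i ω * g (W ω)) - q i * ((1 - X i ω) * g (W ω)) := by
        intro ω; ring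
      calc (∫ ω, (X i ω - q i) * g (W ω) ∂μ)
          = ∫ ω, ((1 - q i) * (X i ω * g (W ω)) - q i * ((1 - X i ω) * g (W ω))) ∂μ := by
            exact integral_congr_ae (Filter.Eventually.of_forall hpt)
        _ = (1 - q i) * (∫ ω, X i ω * g (W ω) ∂μ)
              - q i * ∫ ω, (1 - X i ω) * g (W ω) ∂μ := by
            rw [integral_sub (hIXg.const_mul _) (hI1Xg.const_mul _),
              integral_const_mul, integral_const_mul]
        _ = q i * (1 - q i) * ((∫ ω, g (V ω + 1) ∂μ) - ∫ ω, g (V ω) ∂μ) := by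
            rw [hg1, hg2]; ring
    -- Step 2b: pointwise increment bound
    have step2b : (∫ ω, g (V ω + 1) ∂μ) - (∫ ω, g (V ω) ∂μ) ≤
        c0 * ((∫ ω, h (V ω + 1) ∂μ) + ∫ ω, h (V ω) ∂μ) := by
      rw [← integral_sub hIg1 hIg0, ← integral_add hIh1 hIh0, ← integral_const_mul]
      refine integral_mono (hIg1.sub hIg0) ((hIh1.add hIh0).const_mul _) ?_
      intro ω
      simp only [Pi.sub_apply]
      have hab : (V ω - S) / n ≤ (V ω + 1 - S) / n := by
        gcongr <;> linarith
      have key2 := pow_sub_pow_le_aux p' hab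
      have hdiff : (V ω + 1 - S) / n - (V ω - S) / n = 1 / n := by
        field_simp
        ring
      rw [hdiff] at key2
      simp only [hgdef, hhdef, hM, hc0def]
      refine key2.trans (le_of_eq ?_)
      ring
    -- Step 2c: relate back to W
    have hInth1 : 0 ≤ ∫ ω, h (V ω + 1) ∂μ := integral_nonneg fun ω => hh0 _
    have hInth0 : 0 ≤ ∫ ω, h (V ω) ∂μ := integral_nonneg fun ω => hh0 _
    have hIXh : Integrable (fun ω => X i ω * h (W ω)) μ := by
      refine hIB _ ((hmeas i).mul (hhm.comp hWmeas)) (c ^ (M+1) + c ^ M) ?_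
      filter_upwards [hXi01 i, hWr] with ω hω hωW
      rw [Real.norm_eq_abs, abs_mul]
      have h2 := hhb (W ω) hωW.1 (by linarith [hωW.2])
      have hX1 : |X i ω| ≤ 1 := by rcases hω with h' | h' <;> simp [h']
      have := abs_nonneg (h (W ω))
      nlinarith
    have hIhW : Integrable (fun ω => h (W ω)) μ := by
      simpa [hhdef] using hintW M
    have hXh_nonneg : 0 ≤ ∫ ω, X i ω * h (W ω) ∂μ := by
      refine integral_nonneg_of_ae ?_
      filter_upwards [hXi01 i] with ω hω
      rcases hω with h' | h' <;> simp [h', hh0 (W ω)]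
    have hq01 := hq i
    calc (∫ ω, (X i ω - q i) * g (W ω) ∂μ)
        = q i * (1 - q i) * ((∫ ω, g (V ω + 1) ∂μ) - ∫ ω, g (V ω) ∂μ) := step2a
      _ ≤ q i * (1 - q i) * (c0 * ((∫ ω, h (V ω + 1) ∂μ) + ∫ ω, h (V ω) ∂μ)) := by
          apply mul_le_mul_of_nonneg_left step2b
          have := hq01.1; have := hq01.2; nlinarith
      _ = c0 * ((1 - q i) * (q i * ∫ ω, h (V ω + 1) ∂μ)
            + q i * ((1 - q i) * ∫ ω, h (V ω) ∂μ)) := by ring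
      _ = c0 * ((1 - q i) * (∫ ω, X i ω * h (W ω) ∂μ)
            + q i * ∫ ω, (1 - X i ω) * h (W ω) ∂μ) := by rw [hh1, hh2]
      _ ≤ c0 * ((∫ ω, X i ω * h (W ω) ∂μ) + q i * ∫ ω, h (W ω) ∂μ) := by
          apply mul_le_mul_of_nonneg_left ?_ hc0nn
          have hle1 : (1 - q i) * (∫ ω, X i ω * h (W ω) ∂μ) ≤ ∫ ω, X i ω * h (W ω) ∂μ := by
            nlinarith [hq01.1, hXh_nonneg]
          have hle2 : (∫ ω, (1 - X i ω) * h (W ω) ∂μ) ≤ ∫ ω, h (W ω) ∂μ := by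
            refine integral_mono_ae ((hIhW.sub hIXh).congr ?_) hIhW ?_
            · filter_upwards with ω
              simp only [Pi.sub_apply]
              ring
            · filter_upwards [hXi01 i] with ω hω
              rcases hω with h' | h' <;> simp [h', hh0 (W ω)]
          nlinarith [hq01.1]
    done
  -- global integrabilities
  have hIXhall : ∀ i : Fin n, Integrable (fun ω => X i ω * h (W ω)) μ := by
    intro i
    refine hIB _ ((hmeas i).mul (hhm.comp hWmeas)) (c ^ M) ?_
    filter_upwards [hXi01 i, hWr] with ω hω hωW
    rw [Real.norm_eq_abs, abs_mul]
    have h2 : |h (W ω)| ≤ c ^ M := by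
      simp only [hhdef]
      exact hpowb M (W ω) hωW.1 (by linarith [hωW.2])
    have hX1 : |X i ω| ≤ 1 := by rcases hω with h' | h' <;> simp [h']
    nlinarith [abs_nonneg (h (W ω))]
  have hIint : ∀ i : Fin n, Integrable (fun ω => (X i ω - q i) * g (W ω)) μ := by
    intro i
    refine hIB _ (((hmeas i).sub_const (q i)).mul (hgm.comp hWmeas)) (2 * c ^ (M + 1)) ?_
    filter_upwards [hXi01 i, hWr] with ω hω hωW
    rw [Real.norm_eq_abs, abs_mul]
    have h2 : |g (W ω)| ≤ c ^ (M + 1) := by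
      simp only [hgdef]
      exact hpowb (M + 1) (W ω) hωW.1 (by linarith [hωW.2])
    have hXq : |X i ω - q i| ≤ 2 := by
      rcases hω with h' | h' <;>
        (rw [h', abs_le]; constructor <;> linarith [(hq i).1, (hq i).2])
    nlinarith [abs_nonneg (g (W ω)), abs_nonneg (X i ω - q i)]
  have hWS : ∀ ω, W ω - S = ∑ i, (X i ω - q i) := by
    intro ω
    rw [hWdef, hSdef, ← Finset.sum_sub_distrib]
  have hstep1 : (∫ ω, ((W ω - S) / (n : ℝ)) ^ (M + 2) ∂μ) =
      (1 / (n : ℝ)) * ∑ i, ∫ ω, (X i ω - q i) * g (W ω) ∂μ := by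
    rw [← integral_finset_sum _ (fun i _ => hIint i), ← integral_const_mul]
    refine integral_congr_ae (Filter.Eventually.of_forall fun ω => ?_)
    show ((W ω - S) / (n : ℝ)) ^ (M + 2) = 1 / (n : ℝ) * ∑ i, (X i ω - q i) * g (W ω)
    rw [← Finset.sum_mul, ← hWS ω]
    simp only [hgdef]
    ring
  have hsum_xh : ∑ i, ∫ ω, X i ω * h (W ω) ∂μ = ∫ ω, W ω * h (W ω) ∂μ := by
    have hWapp : ∀ ω, W ω = ∑ i, X i ω := fun ω => rfl
    rw [← integral_finset_sum _ (fun i _ => hIXhall i)]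
    refine integral_congr_ae (Filter.Eventually.of_forall fun ω => ?_)
    show ∑ i, X i ω * h (W ω) = W ω * h (W ω)
    rw [hWapp ω, ← Finset.sum_mul]
  have hWh : ∫ ω, W ω * h (W ω) ∂μ =
      (n : ℝ) * (∫ ω, ((W ω - S) / (n : ℝ)) ^ (M + 1) ∂μ)
        + S * ∫ ω, ((W ω - S) / (n : ℝ)) ^ M ∂μ := by
    have hpt : ∀ ω, W ω * h (W ω) =
        (n : ℝ) * ((W ω - S) / (n : ℝ)) ^ (M + 1) + S * ((W ω - S) / (n : ℝ)) ^ M := by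
      intro ω
      simp only [hhdef]
      have hnx : (n : ℝ) * ((W ω - S) / n) = W ω - S := by field_simp
      linear_combination (-((W ω - S) / (n : ℝ)) ^ M) * hnx
    rw [integral_congr_ae (Filter.Eventually.of_forall hpt),
      integral_add ((hintW (M + 1)).const_mul _) ((hintW M).const_mul _),
      integral_const_mul, integral_const_mul]
  have hIhWM : ∫ ω, h (W ω) ∂μ = ∫ ω, ((W ω - S) / (n : ℝ)) ^ M ∂μ := by
    simp only [hhdef]
  show (∫ ω, ((W ω - S) / (n : ℝ)) ^ (M + 2) ∂μ) ≤
      (2 * ((p' + 1 : ℕ) : ℝ) - 1) / (2 * n) * ∫ ω, ((W ω - S) / (n : ℝ)) ^ (M + 1) ∂μ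
        + (2 * ((p' + 1 : ℕ) : ℝ) - 1) * S / (n : ℝ) ^ 2
          * ∫ ω, ((W ω - S) / (n : ℝ)) ^ M ∂μ
  have hco : (2 * ((p' + 1 : ℕ) : ℝ) - 1) = 2 * (p' : ℝ) + 1 := by push_cast; ring
  rw [hco]
  calc (∫ ω, ((W ω - S) / (n : ℝ)) ^ (M + 2) ∂μ)
      = (1 / (n : ℝ)) * ∑ i, ∫ ω, (X i ω - q i) * g (W ω) ∂μ := hstep1
    _ ≤ (1 / (n : ℝ)) *
          ∑ i, (c0 * ((∫ ω, X i ω * h (W ω) ∂μ) + q i * ∫ ω, h (W ω) ∂μ)) := by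
        apply mul_le_mul_of_nonneg_left (Finset.sum_le_sum fun i _ => key i) (by positivity)
    _ = (1 / (n : ℝ)) *
          (c0 * ((∫ ω, W ω * h (W ω) ∂μ) + S * ∫ ω, h (W ω) ∂μ)) := by
        congr 1
        rw [← hsum_xh, hSdef, Finset.sum_mul, ← Finset.sum_add_distrib, Finset.mul_sum]
    _ = (2 * (p' : ℝ) + 1) / (2 * n) * ∫ ω, ((W ω - S) / (n : ℝ)) ^ (M + 1) ∂μ
          + (2 * (p' : ℝ) + 1) * S / (n : ℝ) ^ 2
            * ∫ ω, ((W ω - S) / (n : ℝ)) ^ M ∂μ := by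
        rw [hWh, hIhWM, hc0def]
        field_simp
        ring
end

section
/- For every integer p ≥ 1 there exists a constant C_p > 0 such that the following holds: for every integer n ≥ 1, every p₁,…,pₙ ∈ [0,1], and independent random variables X₁,…,Xₙ with ℙ(X_i = 1) = p_i and ℙ(X_i = 0) = 1 − p_i, writing μ = ∑_{i=1}^n p_i, one has E[ ( ∑_{i=1}^n (X_i − p_i) )^{2p} ] ≤ C_p · max(μ, 1)^p. -/
open MeasureTheory ProbabilityTheory
open Finset

lemma helper_integral_prod {Ω : Type} {mΩ : MeasurableSpace Ω} {μ : Measure Ω}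
    [IsProbabilityMeasure μ] {n : ℕ} {F : Fin n → Ω → ℝ}
    (hindep : iIndepFun F μ)
    (hmeas : ∀ i, Measurable (F i)) (s : Finset (Fin n)) :
    (∫ ω, ∏ i ∈ s, F i ω ∂μ) = ∏ i ∈ s, ∫ ω, F i ω ∂μ := by
  classical
  induction s using Finset.induction_on with
  | empty => simp
  | @insert a s ha ih =>
    have hsm : Measurable (∏ j ∈ s, F j) := by
      have := Finset.measurable_prod s (fun i _ => hmeas i)
      rw [Finset.prod_fn]; exact this
    have hIF : IndepFun (∏ j ∈ s, F j) (F a) μ :=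
      hindep.indepFun_finsetProd_of_notMem hmeas ha
    have key := hIF.integral_mul_eq_mul_integral hsm.aestronglyMeasurable (hmeas a).aestronglyMeasurable
    have h1 : (fun ω => ∏ i ∈ insert a s, F i ω) = (∏ j ∈ s, F j) * F a := by
      funext ω
      simp [Finset.prod_insert ha, Finset.prod_apply, mul_comm]
    rw [Finset.prod_insert ha, show (∫ ω, ∏ i ∈ insert a s, F i ω ∂μ) = ∫ ω, ((∏ j ∈ s, F j) * F a) ω ∂μ from by rw [← h1], key]
    have : (∫ ω, (∏ j ∈ s, F j) ω ∂μ) = ∫ ω, ∏ j ∈ s, F j ω ∂μ := by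
      congr 1; funext ω; simp [Finset.prod_apply]
    rw [this, ih, mul_comm]

lemma helper_prod_one_add {n : ℕ} (r : Fin n → ℝ) (hr : ∀ i, 0 ≤ r i) (hsum : ∑ i, r i ≤ 1) :
    ∑ t ∈ (Finset.univ : Finset (Fin n)).powerset, ∏ i ∈ t, r i ≤ 3 := by
  have h1 : ∑ t ∈ (Finset.univ : Finset (Fin n)).powerset, ∏ i ∈ t, r i
      = ∏ i, (r i + 1) := by
    rw [Finset.prod_add]; simp
  rw [h1]
  calc ∏ i, (r i + 1) ≤ ∏ i, Real.exp (r i) := by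
        apply Finset.prod_le_prod (fun i _ => by linarith [hr i])
        intro i _
        exact Real.add_one_le_exp (r i)
    _ = Real.exp (∑ i, r i) := (Real.exp_sum _ _).symm
    _ ≤ Real.exp 1 := Real.exp_le_exp.mpr hsum
    _ ≤ 3 := by
        have := Real.exp_one_lt_d9
        linarith


/-- **Centered moment bound for sums of independent Bernoulli variables.** For every `p ≥ 1`
there is `C_p > 0` such that for all `n ≥ 1`, all `p₁, …, pₙ ∈ [0,1]` and independent
`Bernoulli(p_i)` random variables `X₁, …, Xₙ`, writing `μ̄ = ∑ p_i`, one has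
`E[(∑ (X_i - p_i))^{2p}] ≤ C_p · max(μ̄, 1)^p`. -/
theorem bernoulli_centered_moment_bound (p : ℕ) (hp : 1 ≤ p) :
    ∃ C : ℝ, 0 < C ∧
      ∀ (n : ℕ), 1 ≤ n →
      ∀ (q : Fin n → ℝ), (∀ i, q i ∈ Set.Icc (0 : ℝ) 1) →
      ∀ (Ω : Type) (_ : MeasurableSpace Ω) (μ : Measure Ω), IsProbabilityMeasure μ →
      ∀ (X : Fin n → Ω → ℝ), (∀ i, Measurable (X i)) →
        iIndepFun X μ →
        (∀ i, μ {ω | X i ω = 1} = ENNReal.ofReal (q i)) →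
        (∀ i, μ {ω | X i ω = 0} = ENNReal.ofReal (1 - q i)) →
        (∫ ω, (∑ i, (X i ω - q i)) ^ (2 * p) ∂μ) ≤ C * (max (∑ i, q i) 1) ^ p := by
  classical
  refine ⟨3 ^ (p + 1) * (p : ℝ) ^ (2 * p), by positivity, ?_⟩
  intro n hn q hq Ω mΩ μ hμ X hXmeas hindep hX1 hX0
  have hq0 : ∀ i, 0 ≤ q i := fun i => (hq i).1
  have hq1 : ∀ i, q i ≤ 1 := fun i => (hq i).2
  set M : ℝ := max (∑ i, q i) 1 with hM
  have hM1 : 1 ≤ M := le_max_right _ _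
  have hM0 : 0 < M := lt_of_lt_of_le one_pos hM1
  set r : Fin n → ℝ := fun i => q i / M with hr
  have hr0 : ∀ i, 0 ≤ r i := fun i => div_nonneg (hq0 i) hM0.le
  have hrsum : ∑ i, r i ≤ 1 := by
    rw [← Finset.sum_div]
    exact div_le_one_of_le₀ (le_max_left _ _) hM0.le
  have hqr : ∀ i, q i = M * r i := fun i => by
    simp only [hr]; field_simp
  -- the sets
  set A : Fin n → Set Ω := fun i => X i ⁻¹' {1} with hA
  have hAmeas : ∀ i, MeasurableSet (A i) := fun i => hXmeas i (measurableSet_singleton 1)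
  have hAset : ∀ i, A i = {ω | X i ω = 1} := fun i => rfl
  have hμA : ∀ i, μ (A i) = ENNReal.ofReal (q i) := fun i => by rw [hAset i, hX1 i]
  -- the cleaned variables
  set g : ℝ → ℝ := fun x => if x = 1 then 1 else 0 with hgdef
  have hg : Measurable g := by
    apply Measurable.ite _ measurable_const measurable_const
    exact measurableSet_eq
  set Y : Fin n → Ω → ℝ := fun i ω => g (X i ω) with hY
  have hYind : ∀ i ω, Y i ω = Set.indicator (A i) (fun _ => (1:ℝ)) ω := by
    intro i ω
    by_cases h : X i ω = 1 <;> simp [hY, hgdef, h, Set.indicator_apply, hA, Set.mem_preimage]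
  have hYmeas : ∀ i, Measurable (Y i) := fun i => hg.comp (hXmeas i)
  have hYabs : ∀ i ω, |Y i ω - q i| ≤ 1 := by
    intro i ω
    rw [abs_le]
    by_cases h : X i ω = 1 <;> simp [hY, hgdef, h] <;>
      constructor <;> linarith [hq0 i, hq1 i]
  -- a.e. equality
  have haei : ∀ i, ∀ᵐ ω ∂μ, X i ω = Y i ω := by
    intro i
    have hd : Disjoint {ω | X i ω = 1} {ω | X i ω = 0} := by
      rw [Set.disjoint_left]
      intro ω h1 h0
      simp only [Set.mem_setOf_eq] at h1 h0
      rw [h1] at h0; norm_num at h0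
    have hm0 : MeasurableSet {ω | X i ω = 0} := hXmeas i (measurableSet_singleton 0)
    have hunion : μ ({ω | X i ω = 1} ∪ {ω | X i ω = 0}) = 1 := by
      rw [measure_union hd hm0, hX1 i, hX0 i, ← ENNReal.ofReal_add (hq0 i) (by linarith [hq1 i])]
      norm_num
    have hm1 : MeasurableSet {ω | X i ω = 1} := hXmeas i (measurableSet_singleton 1)
    have hcompl : μ ({ω | X i ω = 1} ∪ {ω | X i ω = 0})ᶜ = 0 := by
      rw [measure_compl (hm1.union hm0) (measure_ne_top _ _), hunion, measure_univ]
      simp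
    rw [MeasureTheory.ae_iff]
    apply measure_mono_null _ hcompl
    intro ω hω
    simp only [Set.mem_setOf_eq] at hω
    simp only [Set.mem_compl_iff, Set.mem_union, Set.mem_setOf_eq]
    intro hmem
    apply hω
    rcases hmem with h1 | h0
    · norm_num [hY, hgdef, h1]
    · norm_num [hY, hgdef, h0]
  have hae : ∀ᵐ ω ∂μ, ∑ i, (X i ω - q i) = ∑ i, (Y i ω - q i) := by
    have := (MeasureTheory.ae_all_iff).mpr haei
    filter_upwards [this] with ω hω
    exact Finset.sum_congr rfl fun i _ => by rw [hω i]
  have hintegral_congr :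
      (∫ ω, (∑ i, (X i ω - q i)) ^ (2 * p) ∂μ) = ∫ ω, (∑ i, (Y i ω - q i)) ^ (2 * p) ∂μ := by
    apply integral_congr_ae
    filter_upwards [hae] with ω hω
    rw [hω]
  set N := 2 * p with hN
  have hNpos : 0 < N := by omega
  set Z : Fin n → Ω → ℝ := fun i ω => Y i ω - q i with hZ
  have hZmeas : ∀ i (k : ℕ), Measurable (fun ω => Z i ω ^ k) := fun i k =>
    ((hYmeas i).sub measurable_const).pow_const k
  set I : Fin n → ℕ → ℝ := fun i k => ∫ ω, Z i ω ^ k ∂μ with hI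
  have hZpt : ∀ i (k : ℕ), 1 ≤ k → ∀ ω, Z i ω ^ k
      = (-q i) ^ k + ((1 - q i) ^ k - (-q i) ^ k) * Set.indicator (A i) (fun _ => (1:ℝ)) ω := by
    intro i k hk ω
    by_cases h : ω ∈ A i
    · have h1 : X i ω = 1 := h
      have hz : Z i ω = 1 - q i := by simp [hZ, hY, hgdef, h1]
      rw [hz, Set.indicator_of_mem h]
      ring
    · have h0 : X i ω ≠ 1 := h
      have hz : Z i ω = -q i := by simp [hZ, hY, hgdef, h0]
      rw [hz, Set.indicator_of_notMem h, mul_zero, add_zero]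
  have hIval : ∀ i (k : ℕ), 1 ≤ k → I i k = (-q i) ^ k + ((1 - q i) ^ k - (-q i) ^ k) * q i := by
    intro i k hk
    have hind_int : Integrable (Set.indicator (A i) (fun _ => (1:ℝ))) μ :=
      (integrable_const (1:ℝ)).indicator (hAmeas i)
    have heq : (fun ω => Z i ω ^ k) = fun ω =>
        (-q i) ^ k + ((1 - q i) ^ k - (-q i) ^ k) * Set.indicator (A i) (fun _ => (1:ℝ)) ω :=
      funext (hZpt i k hk)
    rw [hI]
    simp only
    rw [heq, integral_add (integrable_const _) (hind_int.const_mul _), integral_const,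
      integral_const_mul, MeasureTheory.integral_indicator_const (1:ℝ) (hAmeas i)]
    simp [Measure.real, hμA i, ENNReal.toReal_ofReal (hq0 i)]
  have hI1 : ∀ i, I i 1 = 0 := by
    intro i
    rw [hIval i 1 le_rfl]
    ring
  have hIbound : ∀ i (k : ℕ), 1 ≤ k → |I i k| ≤ 3 * q i := by
    intro i k hk
    rw [hIval i k hk]
    have h1 : |(-q i) ^ k| ≤ q i := by
      rw [abs_pow, abs_neg, abs_of_nonneg (hq0 i)]
      exact pow_le_of_le_one (hq0 i) (hq1 i) (by omega)
    have h2 : |(1 - q i) ^ k| ≤ 1 := by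
      rw [abs_pow]
      apply pow_le_one₀ (abs_nonneg _)
      rw [abs_le]; constructor <;> linarith [hq0 i, hq1 i]
    have h3 : |(-q i) ^ k| ≤ 1 := le_trans h1 (hq1 i)
    have h4 : |(1 - q i) ^ k - (-q i) ^ k| ≤ 2 := by
      calc |(1 - q i) ^ k - (-q i) ^ k| ≤ |(1 - q i) ^ k| + |(-q i) ^ k| := abs_sub _ _
        _ ≤ 2 := by linarith
    calc |(-q i) ^ k + ((1 - q i) ^ k - (-q i) ^ k) * q i|
        ≤ |(-q i) ^ k| + |(1 - q i) ^ k - (-q i) ^ k| * |q i| := by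
          refine le_trans (abs_add_le _ _) ?_
          rw [abs_mul]
      _ ≤ q i + 2 * q i := by
          rw [abs_of_nonneg (hq0 i)]
          have := mul_le_mul_of_nonneg_right h4 (hq0 i)
          linarith
      _ = 3 * q i := by ring
  set c : (Fin N → Fin n) → Fin n → ℕ :=
    fun f i => ((univ : Finset (Fin N)).filter fun j => f j = i).card with hc
  set V : (Fin N → Fin n) → ℝ := fun f => ∏ i ∈ (univ : Finset (Fin N)).image f, I i (c f i)
    with hV
  have hpoint : ∀ ω, (∑ i, Z i ω) ^ N = ∑ f : Fin N → Fin n, ∏ j, Z (f j) ω := by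
    intro ω
    calc (∑ i, Z i ω) ^ N = ∏ _j : Fin N, (∑ i, Z i ω) := by
          rw [Finset.prod_const, Finset.card_univ, Fintype.card_fin]
      _ = ∑ f ∈ Fintype.piFinset (fun _ : Fin N => (univ : Finset (Fin n))), ∏ j, Z (f j) ω :=
          Finset.prod_univ_sum _ _
      _ = ∑ f : Fin N → Fin n, ∏ j, Z (f j) ω := by rw [Fintype.piFinset_univ]
  have hcomp : ∀ (f : Fin N → Fin n) ω,
      ∏ j, Z (f j) ω = ∏ i ∈ (univ : Finset (Fin N)).image f, Z i ω ^ (c f i) :=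
    fun f ω => Finset.prod_comp (fun i => Z i ω) f
  have hGmeas : ∀ f : Fin N → Fin n, Measurable (fun ω => ∏ j, Z (f j) ω) := by
    intro f
    apply Finset.measurable_prod
    intro j _
    exact (hYmeas (f j)).sub measurable_const
  have hGbound : ∀ (f : Fin N → Fin n) ω, ‖∏ j, Z (f j) ω‖ ≤ 1 := by
    intro f ω
    rw [Real.norm_eq_abs, Finset.abs_prod]
    exact Finset.prod_le_one (fun j _ => abs_nonneg _) (fun j _ => hYabs (f j) ω)
  have hGint : ∀ f : Fin N → Fin n, Integrable (fun ω => ∏ j, Z (f j) ω) μ := fun f =>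
    (integrable_const (1:ℝ)).mono' (hGmeas f).aestronglyMeasurable (ae_of_all _ (hGbound f))
  have hprodint : ∀ f : Fin N → Fin n, (∫ ω, ∏ j, Z (f j) ω ∂μ) = V f := by
    intro f
    have hFindep : iIndepFun
        (fun i ω => Z i ω ^ (c f i)) μ :=
      hindep.comp (fun i x => (g x - q i) ^ (c f i))
        (fun i => (hg.sub measurable_const).pow_const _)
    calc (∫ ω, ∏ j, Z (f j) ω ∂μ)
        = ∫ ω, ∏ i ∈ (univ : Finset (Fin N)).image f, Z i ω ^ (c f i) ∂μ := by
          congr 1; funext ω; exact hcomp f ω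
      _ = ∏ i ∈ (univ : Finset (Fin N)).image f, I i (c f i) :=
          helper_integral_prod hFindep (fun i => hZmeas i (c f i)) _
      _ = V f := rfl
  have hmain : (∫ ω, (∑ i, Z i ω) ^ N ∂μ) = ∑ f : Fin N → Fin n, V f := by
    calc (∫ ω, (∑ i, Z i ω) ^ N ∂μ) = ∫ ω, ∑ f : Fin N → Fin n, ∏ j, Z (f j) ω ∂μ := by
          congr 1; funext ω; exact hpoint ω
      _ = ∑ f : Fin N → Fin n, ∫ ω, ∏ j, Z (f j) ω ∂μ :=
          integral_finset_sum _ (fun f _ => hGint f)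
      _ = ∑ f, V f := Finset.sum_congr rfl (fun f _ => hprodint f)
  have hc1 : ∀ (f : Fin N → Fin n) i, i ∈ (univ : Finset (Fin N)).image f → 1 ≤ c f i := by
    intro f i hi
    rw [Finset.mem_image] at hi
    obtain ⟨j, _, hj⟩ := hi
    have hj' : j ∈ (univ : Finset (Fin N)).filter fun j => f j = i := by simp [hj]
    exact Finset.card_pos.mpr ⟨j, hj'⟩
  have hsumc : ∀ f : Fin N → Fin n, ∑ i ∈ (univ : Finset (Fin N)).image f, c f i = N := by
    intro f
    have h := Finset.card_eq_sum_card_fiberwise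
      (f := f) (s := (univ : Finset (Fin N))) (t := (univ : Finset (Fin N)).image f)
      (fun x _ => Finset.mem_image_of_mem f (Finset.mem_univ x))
    rw [Finset.card_univ, Fintype.card_fin] at h
    exact h.symm
  have hcard_le : ∀ f : Fin N → Fin n, (∀ i ∈ (univ : Finset (Fin N)).image f, 2 ≤ c f i) →
      ((univ : Finset (Fin N)).image f).card ≤ p := by
    intro f hf
    have h2 : ((univ : Finset (Fin N)).image f).card * 2
        ≤ ∑ i ∈ (univ : Finset (Fin N)).image f, c f i := by
      simpa [smul_eq_mul] using Finset.card_nsmul_le_sum _ _ 2 hf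
    rw [hsumc f] at h2
    omega
  have hVzero : ∀ f : Fin N → Fin n,
      ¬ (∀ i ∈ (univ : Finset (Fin N)).image f, 2 ≤ c f i) → V f = 0 := by
    intro f hf
    push_neg at hf
    obtain ⟨i, hi, hlt⟩ := hf
    have h1 : c f i = 1 := by have := hc1 f i hi; omega
    exact Finset.prod_eq_zero hi (by rw [h1]; exact hI1 i)
  have hVbound : ∀ f : Fin N → Fin n, (∀ i ∈ (univ : Finset (Fin N)).image f, 2 ≤ c f i) →
      V f ≤ (3*M)^p * ∏ i ∈ (univ : Finset (Fin N)).image f, r i := by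
    intro f hf
    calc V f ≤ |V f| := le_abs_self _
      _ = ∏ i ∈ (univ : Finset (Fin N)).image f, |I i (c f i)| := by
          rw [show V f = ∏ i ∈ (univ : Finset (Fin N)).image f, I i (c f i) from rfl,
            Finset.abs_prod]
      _ ≤ ∏ i ∈ (univ : Finset (Fin N)).image f, (3 * M * r i) := by
          apply Finset.prod_le_prod (fun i _ => abs_nonneg _)
          intro i hi
          calc |I i (c f i)| ≤ 3 * q i := hIbound i (c f i) (by have := hf i hi; omega)
            _ = 3 * (M * r i) := by rw [← hqr i]
            _ = 3 * M * r i := by ring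
      _ = (3*M)^(((univ : Finset (Fin N)).image f).card)
            * ∏ i ∈ (univ : Finset (Fin N)).image f, r i := by
          rw [Finset.prod_mul_distrib, Finset.prod_const]
      _ ≤ (3*M)^p * ∏ i ∈ (univ : Finset (Fin N)).image f, r i := by
          apply mul_le_mul_of_nonneg_right _ (Finset.prod_nonneg (fun i _ => hr0 i))
          apply pow_le_pow_right₀ (by linarith) (hcard_le f hf)
  set T : Finset (Fin N → Fin n) :=
    univ.filter (fun f => ∀ i ∈ (univ : Finset (Fin N)).image f, 2 ≤ c f i) with hT
  have hsum_split : ∑ f : Fin N → Fin n, V f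
      ≤ (3*M)^p * ∑ f ∈ T, ∏ i ∈ (univ : Finset (Fin N)).image f, r i := by
    have hsub : ∑ f : Fin N → Fin n, V f = ∑ f ∈ T, V f := by
      symm
      apply Finset.sum_subset (Finset.filter_subset _ _)
      intro f _ hfT
      apply hVzero
      intro hgood
      exact hfT (Finset.mem_filter.mpr ⟨Finset.mem_univ f, hgood⟩)
    rw [hsub, Finset.mul_sum]
    apply Finset.sum_le_sum
    intro f hf
    exact hVbound f ((Finset.mem_filter.mp hf).2)
  have hgroup : ∑ f ∈ T, ∏ i ∈ (univ : Finset (Fin N)).image f, r i ≤ (p:ℝ)^N * 3 := by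
    set img : (Fin N → Fin n) → Finset (Fin n) := fun f => (univ : Finset (Fin N)).image f
      with himg
    rw [← Finset.sum_fiberwise_of_maps_to (g := img) (t := T.image img)
      (fun f hf => Finset.mem_image_of_mem img hf)]
    have hstep : ∀ S ∈ T.image img,
        (∑ f ∈ T.filter (fun f => img f = S), ∏ i ∈ img f, r i) ≤ (p:ℝ)^N * ∏ i ∈ S, r i := by
      intro S hS
      obtain ⟨f₀, hf₀T, hf₀⟩ := Finset.mem_image.mp hS
      have hScard : S.card ≤ p := by
        rw [← hf₀]; exact hcard_le f₀ ((Finset.mem_filter.mp hf₀T).2)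
      have hfiber : (T.filter (fun f => img f = S)).card ≤ p ^ N := by
        calc (T.filter (fun f => img f = S)).card
            ≤ (Fintype.piFinset (fun _ : Fin N => S)).card := by
              apply Finset.card_le_card
              intro f hf
              rw [Finset.mem_filter] at hf
              rw [Fintype.mem_piFinset]
              intro j
              rw [← hf.2]
              exact Finset.mem_image_of_mem f (Finset.mem_univ j)
          _ = S.card ^ N := by rw [Fintype.card_piFinset]; simp
          _ ≤ p ^ N := Nat.pow_le_pow_left hScard N
      calc (∑ f ∈ T.filter (fun f => img f = S), ∏ i ∈ img f, r i)
          = ∑ f ∈ T.filter (fun f => img f = S), ∏ i ∈ S, r i := by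
            apply Finset.sum_congr rfl
            intro f hf
            rw [(Finset.mem_filter.mp hf).2]
        _ = ((T.filter (fun f => img f = S)).card : ℝ) * ∏ i ∈ S, r i := by
            rw [Finset.sum_const, nsmul_eq_mul]
        _ ≤ (p:ℝ)^N * ∏ i ∈ S, r i := by
            apply mul_le_mul_of_nonneg_right _ (Finset.prod_nonneg fun i _ => hr0 i)
            calc ((T.filter (fun f => img f = S)).card : ℝ) ≤ ((p ^ N : ℕ) : ℝ) := by
                  exact_mod_cast hfiber
              _ = (p:ℝ)^N := by push_cast; ring
    calc ∑ S ∈ T.image img, ∑ f ∈ T.filter (fun f => img f = S), ∏ i ∈ img f, r i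
        ≤ ∑ S ∈ T.image img, (p:ℝ)^N * ∏ i ∈ S, r i := Finset.sum_le_sum hstep
      _ = (p:ℝ)^N * ∑ S ∈ T.image img, ∏ i ∈ S, r i := by rw [Finset.mul_sum]
      _ ≤ (p:ℝ)^N * ∑ S ∈ (univ : Finset (Fin n)).powerset, ∏ i ∈ S, r i := by
          apply mul_le_mul_of_nonneg_left _ (by positivity)
          apply Finset.sum_le_sum_of_subset_of_nonneg
          · intro S _
            exact Finset.mem_powerset.mpr (Finset.subset_univ S)
          · intro S _ _
            exact Finset.prod_nonneg fun i _ => hr0 i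
      _ ≤ (p:ℝ)^N * 3 :=
          mul_le_mul_of_nonneg_left (helper_prod_one_add r hr0 hrsum) (by positivity)
  calc (∫ ω, (∑ i, (X i ω - q i)) ^ N ∂μ) = ∑ f : Fin N → Fin n, V f := by
        rw [hintegral_congr]; exact hmain
    _ ≤ (3*M)^p * ((p:ℝ)^N * 3) :=
        le_trans hsum_split (mul_le_mul_of_nonneg_left hgroup (by positivity))
    _ = 3 ^ (p + 1) * (p:ℝ) ^ (2 * p) * M ^ p := by
        rw [hN, mul_pow]; ring
end
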